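/- arXiv:2203.07926 — 7 statements merged into one kernel-verified Lean document; each statement's English description precedes it below -/
import Mathlib

section
/- Uniqueness part of Theorem 3.1, in the rescaled variables used in its proof: Let n ≥ 1 and let Γ be a subgroup of the isometry group of Euclidean space ℝⁿ whose orbit space ℝⁿ/Γ is compact. Let v₀ : ℝⁿ → ℝ be Γ-periodic, everywhere positive and continuous. Suppose v₁ and v₂ are both functions from [0,∞) × ℝⁿ to ℝ which are continuous on [0,∞) × ℝⁿ, infinitely differentiable on (0,∞) × ℝⁿ, everywhere positive, Γ-periodic in the spatial variable for every s ≥ 0, solve ∂v/∂s = v⁻² Δv − 2 v⁻³ |∇v|² on (0,∞) × ℝⁿ, and satisfy v₁(0,·) = v₂(0,·) = v₀. Then v₁ = v₂. -/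
open scoped RealInnerProductSpace

noncomputable section

/-- The Euclidean Laplacian: the sum of the second partial derivatives. -/
def lap {n : ℕ} (f : EuclideanSpace ℝ (Fin n) → ℝ) (x : EuclideanSpace ℝ (Fin n)) : ℝ :=
  ∑ i : Fin n,
    fderiv ℝ (fun y => fderiv ℝ f y (EuclideanSpace.single i 1)) x (EuclideanSpace.single i 1)

/-- The natural action of the isometry group of Euclidean space on Euclidean space. -/
instance isomAction {n : ℕ} :
    MulAction (EuclideanSpace ℝ (Fin n) ≃ᵢ EuclideanSpace ℝ (Fin n))
      (EuclideanSpace ℝ (Fin n)) where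
  smul g x := g x
  one_smul _ := rfl
  mul_smul _ _ _ := rfl

open Filter Set Topology

set_option maxHeartbeats 1000000

/-- If `g` has derivative `L` at `s₀` and `g s ≤ g s₀` for `s` slightly to the left,
then `L ≥ 0`. -/
lemma deriv_nonneg_of_left_max {g : ℝ → ℝ} {L s₀ a : ℝ} (hd : HasDerivAt g L s₀)
    (ha : a < s₀) (hle : ∀ s, a < s → s < s₀ → g s ≤ g s₀) : 0 ≤ L := by
  have h := hasDerivAt_iff_tendsto_slope.1 hd
  have h2 : Tendsto (slope g s₀) (nhdsWithin s₀ (Iio s₀)) (nhds L) :=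
    h.mono_left (nhdsWithin_mono _ (fun x hx => ne_of_lt hx))
  refine ge_of_tendsto h2 ?_
  filter_upwards [Ioo_mem_nhdsLT_of_mem ⟨ha, le_refl s₀⟩] with s hs
  rw [slope_def_field]
  exact div_nonneg_of_nonpos (by linarith [hle s hs.1 hs.2]) (by linarith [hs.2])

/-- Second derivative test at a (one-sided suffices, but we use global) maximum at `0`. -/
lemma second_deriv_nonpos_of_max {q q' : ℝ → ℝ} {L : ℝ}
    (hq : ∀ᶠ t in nhds (0:ℝ), HasDerivAt q (q' t) t)
    (hq' : HasDerivAt q' L 0) (hmax : ∀ t, q t ≤ q 0) : L ≤ 0 := by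
  obtain ⟨δ, hδ, hball⟩ := Metric.eventually_nhds_iff.1 hq
  have h00 : HasDerivAt q (q' 0) 0 := hball (by simpa using hδ)
  have hq'0 : q' 0 = 0 :=
    (IsLocalMax.hasDerivAt_eq_zero (Eventually.of_forall hmax) h00)
  by_contra hL
  push_neg at hL
  have key : ∀ k : ℕ, ∃ ξ, 0 < ξ ∧ ξ < δ / (k + 2) ∧ q' ξ ≤ 0 := by
    intro k
    set t := min (δ / (k + 2)) (δ / 2) with htdef
    have hk2 : (0:ℝ) < (k:ℝ) + 2 := by positivity
    have ht0 : 0 < t := lt_min (by positivity) (by positivity)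
    have htδ : t < δ := lt_of_le_of_lt (min_le_right _ _) (by linarith)
    have hc : ContinuousOn q (Icc 0 t) := by
      intro s hs
      exact (hball (by
        rw [Real.dist_eq, sub_zero, abs_of_nonneg hs.1]
        exact lt_of_le_of_lt hs.2 htδ)).continuousAt.continuousWithinAt
    have hdn : ∀ s ∈ Ioo 0 t, HasDerivAt q (q' s) s := by
      intro s hs
      exact hball (by
        rw [Real.dist_eq, sub_zero, abs_of_nonneg hs.1.le]
        exact lt_trans hs.2 htδ)
    obtain ⟨ξ, hξ, hval⟩ := exists_hasDerivAt_eq_slope q q' ht0 hc hdn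
    refine ⟨ξ, hξ.1, lt_of_lt_of_le hξ.2 (min_le_left _ _), ?_⟩
    rw [hval, sub_zero]
    exact div_nonpos_of_nonpos_of_nonneg (by linarith [hmax t]) ht0.le
  choose ξ hξ0 hξlt hξle using key
  have hto0 : Tendsto ξ atTop (nhds (0:ℝ)) := by
    refine squeeze_zero (fun k => (hξ0 k).le) (fun k => (hξlt k).le) ?_
    have := (tendsto_const_div_atTop_nhds_zero_nat δ).comp (tendsto_add_atTop_nat 2)
    convert this using 2 with k
    simp only [Function.comp]
    push_cast; ring
  have hto : Tendsto ξ atTop (nhdsWithin (0:ℝ) {(0:ℝ)}ᶜ) := by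
    refine tendsto_nhdsWithin_of_tendsto_nhds_of_eventually_within _ hto0 ?_
    exact Eventually.of_forall fun k => (ne_of_gt (hξ0 k))
  have hs := (hasDerivAt_iff_tendsto_slope.1 hq').comp hto
  have : L ≤ 0 := by
    refine le_of_tendsto hs ?_
    refine Eventually.of_forall fun k => ?_
    show slope q' 0 (ξ k) ≤ 0
    rw [slope_def_field, hq'0, sub_zero, sub_zero]
    exact div_nonpos_of_nonpos_of_nonneg (hξle k) (hξ0 k).le
  linarith
open scoped RealInnerProductSpace

variable {n : ℕ}variable {n : ℕ}

lemma sq_norm_gradient (f : EuclideanSpace ℝ (Fin n) → ℝ) (x : EuclideanSpace ℝ (Fin n)) :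
    ‖gradient f x‖ ^ 2 = ∑ i : Fin n, (fderiv ℝ f x (EuclideanSpace.single i 1)) ^ 2 := by
  have h : ∀ i : Fin n, fderiv ℝ f x (EuclideanSpace.single i 1) = gradient f x i := by
    intro i
    have h2 : ⟪gradient f x, EuclideanSpace.single i (1:ℝ)⟫ = fderiv ℝ f x (EuclideanSpace.single i 1) :=
      InnerProductSpace.toDual_symm_apply
    rw [EuclideanSpace.inner_single_right] at h2
    simpa using h2.symm
  rw [EuclideanSpace.norm_eq, Real.sq_sqrt (by positivity)]
  refine Finset.sum_congr rfl fun i _ => ?_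
  rw [h i, Real.norm_eq_abs, sq_abs]

lemma diffAt_fderiv_apply (f : EuclideanSpace ℝ (Fin n) → ℝ)
    (hf : ∀ y, ContDiffAt ℝ 2 f y) (v x : EuclideanSpace ℝ (Fin n)) :
    DifferentiableAt ℝ (fun y => fderiv ℝ f y v) x :=
  (((hf x).fderiv_right (m := 1) (by norm_num)).clm_apply contDiffAt_const).differentiableAt one_ne_zero

lemma lap_sub (f g : EuclideanSpace ℝ (Fin n) → ℝ)
    (hf : ∀ y, ContDiffAt ℝ 2 f y) (hg : ∀ y, ContDiffAt ℝ 2 g y)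
    (x : EuclideanSpace ℝ (Fin n)) :
    lap (fun y => f y - g y) x = lap f x - lap g x := by
  unfold lap
  rw [← Finset.sum_sub_distrib]
  refine Finset.sum_congr rfl fun i _ => ?_
  have h1 : (fun y => fderiv ℝ (fun z => f z - g z) y (EuclideanSpace.single i 1))
      = fun y => fderiv ℝ f y (EuclideanSpace.single i 1)
        - fderiv ℝ g y (EuclideanSpace.single i 1) := by
    funext y
    rw [fderiv_fun_sub ((hf y).differentiableAt two_ne_zero) ((hg y).differentiableAt two_ne_zero)]
    rfl
  rw [h1, fderiv_fun_sub (diffAt_fderiv_apply f hf _ _) (diffAt_fderiv_apply g hg _ _)]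
  rfl

lemma lap_const_mul (f : EuclideanSpace ℝ (Fin n) → ℝ) (c : ℝ)
    (hf : ∀ y, ContDiffAt ℝ 2 f y) (x : EuclideanSpace ℝ (Fin n)) :
    lap (fun y => c * f y) x = c * lap f x := by
  unfold lap
  rw [Finset.mul_sum]
  refine Finset.sum_congr rfl fun i _ => ?_
  have h1 : (fun y => fderiv ℝ (fun z => c * f z) y (EuclideanSpace.single i 1))
      = fun y => c * fderiv ℝ f y (EuclideanSpace.single i 1) := by
    funext y
    rw [fderiv_const_mul ((hf y).differentiableAt two_ne_zero)]
    simp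
  rw [h1, fderiv_const_mul (diffAt_fderiv_apply f hf _ _)]
  simp

lemma lap_nonpos_at_max (H : EuclideanSpace ℝ (Fin n) → ℝ) (x₀ : EuclideanSpace ℝ (Fin n))
    (hH : ∀ y, ContDiffAt ℝ 2 H y) (hmax : ∀ y, H y ≤ H x₀) : lap H x₀ ≤ 0 := by
  unfold lap
  refine Finset.sum_nonpos fun i _ => ?_
  set v := EuclideanSpace.single i (1:ℝ) with hv
  set line : ℝ → EuclideanSpace ℝ (Fin n) := fun t => x₀ + t • v with hlinedef
  have hline0 : line 0 = x₀ := by simp [hlinedef]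
  have hlineD : ∀ t : ℝ, HasDerivAt line v t := by
    intro t
    simpa [hlinedef] using ((hasDerivAt_id t).smul_const v).const_add x₀
  have hq : ∀ t : ℝ, HasDerivAt (fun t => H (line t)) (fderiv ℝ H (line t) v) t := fun t =>
    (((hH (line t)).differentiableAt two_ne_zero).hasFDerivAt).comp_hasDerivAt t (hlineD t)
  have hB : DifferentiableAt ℝ (fun y => fderiv ℝ H y v) x₀ := diffAt_fderiv_apply H hH v x₀
  have hF : HasFDerivAt (fun y => fderiv ℝ H y v)
      (fderiv ℝ (fun y => fderiv ℝ H y v) x₀) (line 0) := hline0.symm ▸ hB.hasFDerivAt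
  have hq' : HasDerivAt (fun t => fderiv ℝ H (line t) v)
      (fderiv ℝ (fun y => fderiv ℝ H y v) x₀ v) 0 := hF.comp_hasDerivAt 0 (hlineD 0)
  refine second_deriv_nonpos_of_max (q := fun t => H (line t)) (Eventually.of_forall hq) hq' ?_
  intro t
  simpa [hline0] using hmax (line t)
lemma lap_neg_inv (v : EuclideanSpace ℝ (Fin n) → ℝ)
    (hv : ∀ y, ContDiffAt ℝ 2 v y) (hpos : ∀ y, 0 < v y) (x : EuclideanSpace ℝ (Fin n)) :
    lap (fun y => -(v y)⁻¹) x
      = lap v x / (v x) ^ 2 - 2 * ‖gradient v x‖ ^ 2 / (v x) ^ 3 := by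
  have hd : ∀ y, DifferentiableAt ℝ v y := fun y => (hv y).differentiableAt two_ne_zero
  have hfd : ∀ y, fderiv ℝ (fun z => -(v z)⁻¹) y = ((v y) ^ 2)⁻¹ • fderiv ℝ v y := by
    intro y
    have hne : v y ≠ 0 := (hpos y).ne'
    have h1 : HasFDerivAt (fun z => (v z)⁻¹)
        ((ContinuousLinearMap.smulRight (1 : ℝ →L[ℝ] ℝ) (-((v y) ^ 2)⁻¹)).comp (fderiv ℝ v y)) y :=
      (hasFDerivAt_inv hne).comp y (hd y).hasFDerivAt
    have h2 := h1.neg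
    have h3 : -((ContinuousLinearMap.smulRight (1 : ℝ →L[ℝ] ℝ) (-((v y) ^ 2)⁻¹)).comp (fderiv ℝ v y))
        = ((v y) ^ 2)⁻¹ • fderiv ℝ v y := by
      ext w
      simp [ContinuousLinearMap.smulRight_apply, ContinuousLinearMap.comp_apply, smul_eq_mul]
      ring
    rw [h3] at h2
    exact h2.fderiv
  have hvx : v x ≠ 0 := (hpos x).ne'
  have hsummand : ∀ i : Fin n,
      fderiv ℝ (fun y => fderiv ℝ (fun z => -(v z)⁻¹) y (EuclideanSpace.single i 1)) x
          (EuclideanSpace.single i 1)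
        = ((v x) ^ 2)⁻¹
            * fderiv ℝ (fun y => fderiv ℝ v y (EuclideanSpace.single i 1)) x (EuclideanSpace.single i 1)
          - 2 * ((v x) ^ 3)⁻¹ * (fderiv ℝ v x (EuclideanSpace.single i 1)) ^ 2 := by
    intro i
    set w := EuclideanSpace.single i (1:ℝ) with hw
    have heq : (fun y => fderiv ℝ (fun z => -(v z)⁻¹) y w)
        = fun y => ((v y) ^ 2)⁻¹ * fderiv ℝ v y w := by
      funext y
      rw [hfd y]
      simp [smul_eq_mul]
    rw [heq]
    -- derivative of A := fun y => ((v y)^2)⁻¹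
    have hsq : HasFDerivAt (fun y => (v y) ^ 2) ((2 * v x) • fderiv ℝ v x) x := by
      have := ((hd x).hasFDerivAt).fun_mul ((hd x).hasFDerivAt)
      have h2 : (fun y => v y * v y) = fun y => (v y) ^ 2 := by funext y; ring
      rw [h2] at this
      rw [two_mul, add_smul]
      exact this
    have hsqne : (v x) ^ 2 ≠ 0 := pow_ne_zero _ hvx
    have hA : HasFDerivAt (fun y => ((v y) ^ 2)⁻¹)
        ((ContinuousLinearMap.smulRight (1 : ℝ →L[ℝ] ℝ) (-(((v x) ^ 2) ^ 2)⁻¹)).comp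
          ((2 * v x) • fderiv ℝ v x)) x :=
      (hasFDerivAt_inv hsqne).comp x hsq
    have hAd : DifferentiableAt ℝ (fun y => ((v y) ^ 2)⁻¹) x := hA.differentiableAt
    have hBd : DifferentiableAt ℝ (fun y => fderiv ℝ v y w) x := diffAt_fderiv_apply v hv w x
    rw [fderiv_fun_mul hAd hBd]
    have hAval : fderiv ℝ (fun y => ((v y) ^ 2)⁻¹) x w
        = -(((v x) ^ 2) ^ 2)⁻¹ * (2 * v x * fderiv ℝ v x w) := by
      rw [hA.fderiv]
      simp [ContinuousLinearMap.smulRight_apply, ContinuousLinearMap.comp_apply, smul_eq_mul]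
      ring
    simp only [ContinuousLinearMap.add_apply, ContinuousLinearMap.smul_apply, smul_eq_mul, hAval]
    field_simp
    ring
  unfold lap
  rw [Finset.sum_congr rfl (fun i _ => hsummand i), Finset.sum_sub_distrib, ← Finset.mul_sum,
    ← Finset.mul_sum, sq_norm_gradient]
  field_simp


variable {n : ℕ}

lemma smul_def' (g : EuclideanSpace ℝ (Fin n) ≃ᵢ EuclideanSpace ℝ (Fin n))
    (x : EuclideanSpace ℝ (Fin n)) : g • x = g x := rfl

lemma exists_compact_orbit_rep
    (Γ : Subgroup (EuclideanSpace ℝ (Fin n) ≃ᵢ EuclideanSpace ℝ (Fin n)))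
    (hΓ : CompactSpace (Quotient (MulAction.orbitRel Γ (EuclideanSpace ℝ (Fin n))))) :
    ∃ K : Set (EuclideanSpace ℝ (Fin n)), IsCompact K ∧ K.Nonempty ∧
      ∀ x : EuclideanSpace ℝ (Fin n), ∃ g : Γ, g • x ∈ K := by
  classical
  set E := EuclideanSpace ℝ (Fin n)
  let q : E → Quotient (MulAction.orbitRel Γ E) := Quotient.mk _
  have hopen : ∀ z : E, IsOpen (q '' Metric.ball z 1) := by
    intro z
    rw [isOpen_coinduced (f := q)]
    have hpre : q ⁻¹' (q '' Metric.ball z 1) = ⋃ g : Γ, (fun x : E => g • x) ⁻¹' Metric.ball z 1 := by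
      ext x
      simp only [mem_preimage, mem_image, mem_iUnion]
      constructor
      · rintro ⟨u, hu, hq⟩
        have : u ∈ MulAction.orbit Γ x := by
          rw [← MulAction.orbitRel_apply]
          exact Quotient.exact hq
        obtain ⟨g, hg⟩ := MulAction.mem_orbit_iff.1 this
        exact ⟨g, by rw [hg]; exact hu⟩
      · rintro ⟨g, hg⟩
        refine ⟨g • x, hg, Quotient.sound ?_⟩
        show (MulAction.orbitRel (↥Γ) _) (g • x) x
        rw [MulAction.orbitRel_apply]
        exact MulAction.mem_orbit _ _
    rw [hpre]
    refine isOpen_iUnion fun g => ?_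
    have hc : Continuous (fun x : E => g • x) := (g : E ≃ᵢ E).continuous
    exact Metric.isOpen_ball.preimage hc
  have hcover : (univ : Set (Quotient (MulAction.orbitRel Γ E))) ⊆ ⋃ z : E, q '' Metric.ball z 1 := by
    intro y _
    obtain ⟨x, rfl⟩ := Quotient.exists_rep y
    exact mem_iUnion.2 ⟨x, ⟨x, Metric.mem_ball_self one_pos, rfl⟩⟩
  obtain ⟨t, ht⟩ := isCompact_univ.elim_finite_subcover _ hopen hcover
  refine ⟨(⋃ z ∈ t, Metric.closedBall z 1) ∪ Metric.closedBall 0 1, ?_, ?_, ?_⟩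
  · exact (t.isCompact_biUnion fun z _ => isCompact_closedBall z 1).union (isCompact_closedBall 0 1)
  · exact ⟨0, Or.inr (Metric.mem_closedBall_self zero_le_one)⟩
  · intro x
    have : q x ∈ ⋃ z ∈ t, q '' Metric.ball z 1 := ht (mem_univ _)
    rw [mem_iUnion₂] at this
    obtain ⟨z, hz, u, hu, hq⟩ := this
    have : u ∈ MulAction.orbit Γ x := by
      rw [← MulAction.orbitRel_apply]
      exact Quotient.exact hq
    obtain ⟨g, hg⟩ := MulAction.mem_orbit_iff.1 this
    refine ⟨g, Or.inl ?_⟩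
    rw [hg]
    exact mem_biUnion hz (Metric.ball_subset_closedBall hu)
lemma key {n : ℕ}
    (Γ : Subgroup (EuclideanSpace ℝ (Fin n) ≃ᵢ EuclideanSpace ℝ (Fin n)))
    (K : Set (EuclideanSpace ℝ (Fin n))) (hK : IsCompact K) (hKne : K.Nonempty)
    (hKrep : ∀ x, ∃ g : Γ, g • x ∈ K)
    (va vb : ℝ → EuclideanSpace ℝ (Fin n) → ℝ)
    (hconta : ContinuousOn (fun p : ℝ × EuclideanSpace ℝ (Fin n) => va p.1 p.2)
      (Set.Ici 0 ×ˢ Set.univ))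
    (hcontb : ContinuousOn (fun p : ℝ × EuclideanSpace ℝ (Fin n) => vb p.1 p.2)
      (Set.Ici 0 ×ˢ Set.univ))
    (hsma : ContDiffOn ℝ (⊤ : ℕ∞) (fun p : ℝ × EuclideanSpace ℝ (Fin n) => va p.1 p.2)
      (Set.Ioi 0 ×ˢ Set.univ))
    (hsmb : ContDiffOn ℝ (⊤ : ℕ∞) (fun p : ℝ × EuclideanSpace ℝ (Fin n) => vb p.1 p.2)
      (Set.Ioi 0 ×ˢ Set.univ))
    (hposa : ∀ s, 0 ≤ s → ∀ x, 0 < va s x)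
    (hposb : ∀ s, 0 ≤ s → ∀ x, 0 < vb s x)
    (hpera : ∀ s, 0 ≤ s → ∀ g : Γ, ∀ x, va s (g • x) = va s x)
    (hperb : ∀ s, 0 ≤ s → ∀ g : Γ, ∀ x, vb s (g • x) = vb s x)
    (hpdea : ∀ s, 0 < s → ∀ x, deriv (fun t => va t x) s =
      lap (va s) x / (va s x) ^ 2 - 2 * ‖gradient (va s) x‖ ^ 2 / (va s x) ^ 3)
    (hpdeb : ∀ s, 0 < s → ∀ x, deriv (fun t => vb t x) s =
      lap (vb s) x / (vb s x) ^ 2 - 2 * ‖gradient (vb s) x‖ ^ 2 / (vb s x) ^ 3)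
    (hinit : ∀ x, va 0 x = vb 0 x) :
    ∀ S, 0 ≤ S → ∀ x, va S x ≤ vb S x := by
  intro S hS xstar
  -- continuity of time slices
  have hsliceW : ∀ (v : ℝ → EuclideanSpace ℝ (Fin n) → ℝ),
      ContinuousOn (fun p : ℝ × EuclideanSpace ℝ (Fin n) => v p.1 p.2)
        (Set.Ici 0 ×ˢ Set.univ) →
      ∀ (x : EuclideanSpace ℝ (Fin n)) t, 0 ≤ t →
      ContinuousWithinAt (fun s => v s x) (Ici 0) t := by
    intro v hv x t ht
    have h1 : ContinuousWithinAt (fun p : ℝ × EuclideanSpace ℝ (Fin n) => v p.1 p.2)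
        (Set.Ici 0 ×ˢ Set.univ) (t, x) := hv _ (by simp [ht])
    have h2 : Tendsto (fun s : ℝ => ((s, x) : ℝ × EuclideanSpace ℝ (Fin n)))
        (nhdsWithin t (Ici 0)) (nhdsWithin (t, x) (Set.Ici 0 ×ˢ Set.univ)) := by
      rw [tendsto_nhdsWithin_iff]
      refine ⟨((continuous_id.prodMk continuous_const).tendsto t).mono_left
        nhdsWithin_le_nhds, ?_⟩
      filter_upwards [self_mem_nhdsWithin] with s hs
      simp [hs]
    exact h1.tendsto.comp h2
  -- uniform positive lower bound for vb on [0,S] × ℝⁿ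
  have hcontbK : ContinuousOn (fun p : ℝ × EuclideanSpace ℝ (Fin n) => vb p.1 p.2)
      (Icc 0 S ×ˢ K) :=
    hcontb.mono (prod_mono Icc_subset_Ici_self (subset_univ K))
  obtain ⟨k₀, hk₀⟩ := hKne
  obtain ⟨p₀, hp₀mem, hp₀min⟩ := (isCompact_Icc.prod hK).exists_isMinOn
    ⟨(0, k₀), Set.mk_mem_prod ⟨le_refl 0, hS⟩ hk₀⟩ hcontbK
  set m := vb p₀.1 p₀.2 with hm
  have hmpos : 0 < m := hposb p₀.1 hp₀mem.1.1 p₀.2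
  have hmle : ∀ t, t ∈ Icc 0 S → ∀ x, m ≤ vb t x := by
    intro t ht x
    obtain ⟨g, hg⟩ := hKrep x
    have h1 : m ≤ vb t (g • x) := hp₀min (Set.mk_mem_prod ht hg)
    rwa [hperb t ht.1 g x] at h1
  -- main comparison claim with rescaled supersolutions
  have main : ∀ c₀ : ℝ, 1 < c₀ → ∀ s ∈ Icc 0 S, ∀ x,
      va s x < (c₀ + (c₀ - 1) * s) * vb (s / (c₀ * (c₀ + (c₀ - 1) * s))) x := by
    intro c₀ hc₀
    by_contra hcon
    push_neg at hcon
    obtain ⟨s', hs', x', hx'⟩ := hcon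
    have hc₀0 : 0 < c₀ := lt_trans one_pos hc₀
    set cf : ℝ → ℝ := fun s => c₀ + (c₀ - 1) * s with hcf
    set θ : ℝ → ℝ := fun s => s / (c₀ * cf s) with hθdef
    have hcfcont : Continuous cf := by
      simp only [hcf]; continuity
    have hcfpos : ∀ s, 0 ≤ s → 0 < cf s := by
      intro s hs; simp only [hcf]; nlinarith
    have hcfgt1 : ∀ s, 0 ≤ s → 1 < cf s := by
      intro s hs; simp only [hcf]; nlinarith
    have hθnonneg : ∀ s, 0 ≤ s → 0 ≤ θ s := fun s hs =>
      div_nonneg hs (mul_pos hc₀0 (hcfpos s hs)).le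
    have hθle : ∀ s, 0 ≤ s → θ s ≤ s := by
      intro s hs
      apply div_le_self hs
      nlinarith [hcfgt1 s hs]
    have hθmem : ∀ s, s ∈ Icc 0 S → θ s ∈ Icc 0 S :=
      fun s hs => ⟨hθnonneg s hs.1, le_trans (hθle s hs.1) hs.2⟩
    have hθcontOn : ∀ t, 0 ≤ t → ContinuousAt θ t := by
      intro t ht
      simp only [hθdef]
      exact continuousAt_id.div ((continuous_const.mul hcfcont).continuousAt)
        (ne_of_gt (mul_pos hc₀0 (hcfpos t ht)))
    set V : ℝ → EuclideanSpace ℝ (Fin n) → ℝ := fun s x => cf s * vb (θ s) x with hV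
    have hVper : ∀ s, 0 ≤ s → ∀ (g : Γ) x, V s (g • x) = V s x := by
      intro s hs g x
      simp only [hV]
      rw [hperb (θ s) (hθnonneg s hs) g x]
    -- continuity of time slices of V
    have hVcontW : ∀ (x : EuclideanSpace ℝ (Fin n)) t, 0 ≤ t →
        ContinuousWithinAt (fun s => V s x) (Ici 0) t := by
      intro x t ht
      simp only [hV]
      refine ContinuousWithinAt.mul (hcfcont.continuousWithinAt) ?_
      refine ContinuousWithinAt.comp (hsliceW vb hcontb x (θ t) (hθnonneg t ht)) ?_ ?_
      · exact (hθcontOn t ht).continuousWithinAt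
      · intro s hs
        exact hθnonneg s hs
    -- the bad set
    set D : Set (ℝ × EuclideanSpace ℝ (Fin n)) :=
      (Icc 0 S ×ˢ K) ∩
        (fun p : ℝ × EuclideanSpace ℝ (Fin n) => va p.1 p.2 - V p.1 p.2) ⁻¹' (Ici 0) with hD
    have hjointV : ContinuousOn (fun p : ℝ × EuclideanSpace ℝ (Fin n) => V p.1 p.2)
        (Icc 0 S ×ˢ K) := by
      simp only [hV]
      refine ContinuousOn.mul (hcfcont.comp continuous_fst).continuousOn ?_
      show ContinuousOn ((fun p : ℝ × EuclideanSpace ℝ (Fin n) => vb p.1 p.2) ∘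
        (fun p : ℝ × EuclideanSpace ℝ (Fin n) => (θ p.1, p.2))) (Icc 0 S ×ˢ K)
      refine ContinuousOn.comp hcontb ?_ ?_
      · refine ContinuousOn.prodMk ?_ continuous_snd.continuousOn
        intro p hp
        exact ((hθcontOn p.1 hp.1.1).comp continuousAt_fst).continuousWithinAt
      · intro p hp
        exact ⟨hθnonneg p.1 hp.1.1, mem_univ _⟩
    have hjointD : ContinuousOn
        (fun p : ℝ × EuclideanSpace ℝ (Fin n) => va p.1 p.2 - V p.1 p.2) (Icc 0 S ×ˢ K) :=
      (hconta.mono (prod_mono Icc_subset_Ici_self (subset_univ K))).sub hjointV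
    have hDclosed : IsClosed D :=
      hjointD.preimage_isClosed_of_isClosed
        (IsClosed.prod isClosed_Icc hK.isClosed) isClosed_Ici
    have hDcompact : IsCompact D :=
      (isCompact_Icc.prod hK).of_isClosed_subset hDclosed inter_subset_left
    have hDne : D.Nonempty := by
      obtain ⟨g, hg⟩ := hKrep x'
      refine ⟨(s', g • x'), Set.mem_inter (Set.mk_mem_prod hs' hg) ?_⟩
      simp only [mem_preimage, mem_Ici]
      rw [hVper s' hs'.1 g x', hpera s' hs'.1 g x']
      simp only [hV, hθdef, hcf]
      linarith
    obtain ⟨p₁, hp₁mem, hp₁min⟩ := hDcompact.exists_isMinOn hDne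
      (continuous_fst.continuousOn)
    set s₀ := p₁.1 with hs₀def
    set x₀ := p₁.2 with hx₀def
    have hs₀mem : s₀ ∈ Icc 0 S := hp₁mem.1.1
    have hx₀K : x₀ ∈ K := hp₁mem.1.2
    have htouch : V s₀ x₀ ≤ va s₀ x₀ := by
      have := hp₁mem.2
      simp only [mem_preimage, mem_Ici] at this
      linarith
    -- strictly before s₀ we have va < V
    have hstrict : ∀ s, 0 ≤ s → s < s₀ → ∀ x, va s x < V s x := by
      intro s hs hlt x
      by_contra hcontra
      push_neg at hcontra
      obtain ⟨g, hg⟩ := hKrep x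
      have hsIcc : s ∈ Icc 0 S := ⟨hs, le_trans hlt.le hs₀mem.2⟩
      have hmemD : (s, g • x) ∈ D := by
        refine Set.mem_inter (Set.mk_mem_prod hsIcc hg) ?_
        simp only [mem_preimage, mem_Ici]
        rw [hVper s hs g x, hpera s hs g x]
        linarith
      exact absurd (hp₁min hmemD) (not_le.2 hlt)
    -- s₀ is positive
    have hs₀pos : 0 < s₀ := by
      rcases lt_or_eq_of_le hs₀mem.1 with h | h
      · exact h
      have hθ0' : θ 0 = 0 := by simp [hθdef]
      have h1 : V s₀ x₀ = c₀ * va s₀ x₀ := by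
        simp only [hV, ← h, hθ0', hinit x₀]
        simp [hcf]
      have h2 : 0 < va s₀ x₀ := hposa s₀ (le_of_eq h) x₀
      nlinarith [htouch, h1, h2, hc₀]
    -- at time s₀, va ≤ V everywhere
    have hle₀ : ∀ x, va s₀ x ≤ V s₀ x := by
      intro x
      have hne : (𝓝[Ioo 0 s₀] s₀).NeBot := by
        rw [← mem_closure_iff_nhdsWithin_neBot, closure_Ioo hs₀pos.ne]
        exact ⟨hs₀pos.le, le_refl _⟩
      have htends : Tendsto (fun s => V s x - va s x) (𝓝[Ioo 0 s₀] s₀)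
          (𝓝 (V s₀ x - va s₀ x)) := by
        have h1 : ContinuousWithinAt (fun s => V s x - va s x) (Ici 0) s₀ :=
          (hVcontW x s₀ hs₀pos.le).sub (hsliceW va hconta x s₀ hs₀pos.le)
        exact h1.mono (fun s (hs : s ∈ Ioo 0 s₀) => hs.1.le)
      have hpos' : ∀ᶠ s in 𝓝[Ioo 0 s₀] s₀, 0 ≤ V s x - va s x := by
        filter_upwards [self_mem_nhdsWithin] with s hs
        linarith [hstrict s hs.1.le hs.2 x]
      linarith [ge_of_tendsto htends hpos']
    have heq : va s₀ x₀ = V s₀ x₀ := le_antisymm (hle₀ x₀) htouch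
    have hθ₀pos : 0 < θ s₀ := div_pos hs₀pos (mul_pos hc₀0 (hcfpos s₀ hs₀pos.le))
    have hθ₀Icc : θ s₀ ∈ Icc 0 S := hθmem s₀ hs₀mem
    -- spatial smoothness of the time-s₀ slices
    have hslice : ∀ (v : ℝ → EuclideanSpace ℝ (Fin n) → ℝ),
        ContDiffOn ℝ (⊤ : ℕ∞) (fun p : ℝ × EuclideanSpace ℝ (Fin n) => v p.1 p.2)
          (Set.Ioi 0 ×ˢ Set.univ) → ∀ t, 0 < t →
        ∀ x, ContDiffAt ℝ 2 (v t) x := by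
      intro v hv t ht x
      have hmem : (Ioi (0:ℝ) ×ˢ (univ : Set (EuclideanSpace ℝ (Fin n)))) ∈ 𝓝 ((t, x)) :=
        prod_mem_nhds (isOpen_Ioi.mem_nhds ht) univ_mem
      have h1 := hv.contDiffAt hmem
      have h2 : ContDiffAt ℝ (((⊤:ℕ∞)) : WithTop ℕ∞) (fun y => v t y) x :=
        h1.comp x (contDiffAt_const.prodMk contDiffAt_id)
      exact h2.of_le (by norm_cast)
    have hsliceA : ∀ x, ContDiffAt ℝ 2 (va s₀) x := hslice va hsma s₀ hs₀pos
    have hsliceB : ∀ x, ContDiffAt ℝ 2 (vb (θ s₀)) x := hslice vb hsmb (θ s₀) hθ₀pos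
    -- time differentiability
    have htime : ∀ (v : ℝ → EuclideanSpace ℝ (Fin n) → ℝ),
        ContDiffOn ℝ (⊤ : ℕ∞) (fun p : ℝ × EuclideanSpace ℝ (Fin n) => v p.1 p.2)
          (Set.Ioi 0 ×ˢ Set.univ) → ∀ t, 0 < t → ∀ x,
        HasDerivAt (fun r => v r x) (deriv (fun r => v r x) t) t := by
      intro v hv t ht x
      have hmem : (Ioi (0:ℝ) ×ˢ (univ : Set (EuclideanSpace ℝ (Fin n)))) ∈ 𝓝 ((t, x)) :=
        prod_mem_nhds (isOpen_Ioi.mem_nhds ht) univ_mem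
      have h1 := hv.contDiffAt hmem
      have h2 : ContDiffAt ℝ (((⊤:ℕ∞)) : WithTop ℕ∞) (fun r => v r x) t :=
        h1.comp t (contDiffAt_id.prodMk contDiffAt_const)
      exact (h2.differentiableAt (by simp)).hasDerivAt
    have htimeA : HasDerivAt (fun r => va r x₀) (deriv (fun r => va r x₀) s₀) s₀ :=
      htime va hsma s₀ hs₀pos x₀
    have htimeB : HasDerivAt (fun r => vb r x₀) (deriv (fun r => vb r x₀) (θ s₀)) (θ s₀) :=
      htime vb hsmb (θ s₀) hθ₀pos x₀
    set D₁ := deriv (fun r => va r x₀) s₀ with hD₁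
    set D₂ := deriv (fun r => vb r x₀) (θ s₀) with hD₂
    -- derivative of cf and θ
    have hcfD : HasDerivAt cf (c₀ - 1) s₀ := by
      have := ((hasDerivAt_id s₀).const_mul (c₀ - 1)).const_add c₀
      simpa [hcf] using this
    have hcfs₀ : cf s₀ ≠ 0 := (hcfpos s₀ hs₀pos.le).ne'
    have hθD : HasDerivAt θ ((cf s₀) ^ 2)⁻¹ s₀ := by
      have hdenom : HasDerivAt (fun s => c₀ * cf s) (c₀ * (c₀ - 1)) s₀ := hcfD.const_mul c₀
      have h := (hasDerivAt_id s₀).div hdenom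
        (ne_of_gt (mul_pos hc₀0 (hcfpos s₀ hs₀pos.le)))
      have heq2 : (1 * (c₀ * cf s₀) - id s₀ * (c₀ * (c₀ - 1))) / (c₀ * cf s₀) ^ 2
          = ((cf s₀) ^ 2)⁻¹ := by
        simp only [id, hcf]
        field_simp
        ring
      rw [heq2] at h
      exact h
    -- derivative of V in time at (s₀, x₀)
    have hVD : HasDerivAt (fun s => V s x₀)
        ((c₀ - 1) * vb (θ s₀) x₀ + cf s₀ * (D₂ * ((cf s₀) ^ 2)⁻¹)) s₀ := by
      have hcomp : HasDerivAt (fun s => vb (θ s) x₀) (D₂ * ((cf s₀) ^ 2)⁻¹) s₀ :=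
        HasDerivAt.comp s₀ htimeB hθD
      exact hcfD.mul hcomp
    -- time derivative inequality from the left maximum
    have hgD : HasDerivAt (fun s => va s x₀ - V s x₀)
        (D₁ - ((c₀ - 1) * vb (θ s₀) x₀ + cf s₀ * (D₂ * ((cf s₀) ^ 2)⁻¹))) s₀ :=
      htimeA.sub hVD
    have h0L : 0 ≤ D₁ - ((c₀ - 1) * vb (θ s₀) x₀ + cf s₀ * (D₂ * ((cf s₀) ^ 2)⁻¹)) := by
      refine deriv_nonneg_of_left_max hgD hs₀pos ?_
      intro s h0s hss₀
      have h1 := hstrict s h0s.le hss₀ x₀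
      have h2 : va s₀ x₀ - V s₀ x₀ = 0 := by rw [heq]; ring
      linarith
    -- spatial maximum principle at x₀
    have hposa' : ∀ y, 0 < va s₀ y := hposa s₀ hs₀pos.le
    have hposbθ : ∀ y, 0 < vb (θ s₀) y := hposb (θ s₀) hθ₀pos.le
    have hposV : ∀ y, 0 < V s₀ y := fun y =>
      mul_pos (hcfpos s₀ hs₀pos.le) (hposbθ y)
    have hsliceV : ∀ y, ContDiffAt ℝ 2 (fun z => cf s₀ * vb (θ s₀) z) y := fun y =>
      contDiffAt_const.mul (hsliceB y)
    have hHsmA : ∀ y, ContDiffAt ℝ 2 (fun z => -(va s₀ z)⁻¹) y := fun y =>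
      ((hsliceA y).inv (hposa' y).ne').neg
    have hHsmB : ∀ y, ContDiffAt ℝ 2 (fun z => -(cf s₀ * vb (θ s₀) z)⁻¹) y := fun y =>
      ((hsliceV y).inv (hposV y).ne').neg
    have hHmax : ∀ y, (fun z => -(va s₀ z)⁻¹ - -(cf s₀ * vb (θ s₀) z)⁻¹) y
        ≤ (fun z => -(va s₀ z)⁻¹ - -(cf s₀ * vb (θ s₀) z)⁻¹) x₀ := by
      intro y
      simp only
      have h1 : va s₀ y ≤ cf s₀ * vb (θ s₀) y := hle₀ y
      have h2 : (cf s₀ * vb (θ s₀) y)⁻¹ ≤ (va s₀ y)⁻¹ :=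
        inv_anti₀ (hposa' y) h1
      have h3 : va s₀ x₀ = cf s₀ * vb (θ s₀) x₀ := heq
      rw [← h3]
      have h4 : -(va s₀ y)⁻¹ - -(cf s₀ * vb (θ s₀) y)⁻¹ ≤ 0 := by linarith
      linarith
    have hHsm : ∀ y, ContDiffAt ℝ 2
        (fun z => -(va s₀ z)⁻¹ - -(cf s₀ * vb (θ s₀) z)⁻¹) y := fun y =>
      (hHsmA y).sub (hHsmB y)
    have hlapH : lap (fun z => -(va s₀ z)⁻¹ - -(cf s₀ * vb (θ s₀) z)⁻¹) x₀ ≤ 0 :=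
      lap_nonpos_at_max _ x₀ hHsm hHmax
    have hlapsplit : lap (fun z => -(va s₀ z)⁻¹ - -(cf s₀ * vb (θ s₀) z)⁻¹) x₀
        = lap (fun z => -(va s₀ z)⁻¹) x₀ - lap (fun z => -(cf s₀ * vb (θ s₀) z)⁻¹) x₀ :=
      lap_sub _ _ hHsmA hHsmB x₀
    have hlapA : lap (fun z => -(va s₀ z)⁻¹) x₀ = D₁ := by
      rw [lap_neg_inv (va s₀) hsliceA hposa' x₀]
      rw [hD₁, hpdea s₀ hs₀pos x₀]
    have hgradc : ‖gradient (fun z => cf s₀ * vb (θ s₀) z) x₀‖ ^ 2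
        = (cf s₀) ^ 2 * ‖gradient (vb (θ s₀)) x₀‖ ^ 2 := by
      rw [sq_norm_gradient, sq_norm_gradient, Finset.mul_sum]
      refine Finset.sum_congr rfl fun i _ => ?_
      rw [fderiv_const_mul ((hsliceB x₀).differentiableAt two_ne_zero)]
      simp only [ContinuousLinearMap.smul_apply, smul_eq_mul]
      ring
    have hlapB : lap (fun z => -(cf s₀ * vb (θ s₀) z)⁻¹) x₀ = (cf s₀)⁻¹ * D₂ := by
      rw [lap_neg_inv (fun z => cf s₀ * vb (θ s₀) z) hsliceV hposV x₀]
      rw [lap_const_mul (vb (θ s₀)) (cf s₀) hsliceB x₀, hgradc]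
      rw [hD₂, hpdeb (θ s₀) hθ₀pos x₀]
      have h5 : vb (θ s₀) x₀ ≠ 0 := (hposbθ x₀).ne'
      field_simp
    -- final contradiction
    have hcfinv : cf s₀ * (D₂ * ((cf s₀) ^ 2)⁻¹) = (cf s₀)⁻¹ * D₂ := by
      field_simp
    have hlapval : D₁ - (cf s₀)⁻¹ * D₂ ≤ 0 := by
      rw [← hlapA, ← hlapB, ← hlapsplit]
      exact hlapH
    have hvbm : m ≤ vb (θ s₀) x₀ := hmle (θ s₀) hθ₀Icc x₀
    have hc₀1 : 0 < c₀ - 1 := by linarith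
    rw [hcfinv] at h0L
    nlinarith
  -- pass to the limit c₀ → 1⁺
  have hne : (𝓝[Ioi (1:ℝ)] (1:ℝ)).NeBot := nhdsGT_neBot 1
  have htendθ : Tendsto (fun c₀ : ℝ => S / (c₀ * (c₀ + (c₀ - 1) * S))) (𝓝[Ioi 1] 1)
      (𝓝 S) := by
    have h1 : Tendsto (fun c₀ : ℝ => S / (c₀ * (c₀ + (c₀ - 1) * S))) (𝓝 1) (𝓝 S) := by
      have h2 : ContinuousAt (fun c₀ : ℝ => S / (c₀ * (c₀ + (c₀ - 1) * S))) 1 := by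
        refine ContinuousAt.div continuousAt_const ?_ (by norm_num)
        exact (continuous_id.mul ((continuous_id.add (((continuous_id.sub
          continuous_const)).mul continuous_const)))).continuousAt
      have h3 : S / ((1:ℝ) * ((1:ℝ) + ((1:ℝ) - 1) * S)) = S := by norm_num
      simpa [h3] using h2.tendsto
    exact h1.mono_left nhdsWithin_le_nhds
  have htendcf : Tendsto (fun c₀ : ℝ => c₀ + (c₀ - 1) * S) (𝓝[Ioi 1] 1) (𝓝 1) := by
    have h2 : ContinuousAt (fun c₀ : ℝ => c₀ + (c₀ - 1) * S) 1 :=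
      (continuous_id.add ((continuous_id.sub continuous_const).mul continuous_const)).continuousAt
    have h3 : (1:ℝ) + ((1:ℝ) - 1) * S = 1 := by norm_num
    exact (h3 ▸ h2.tendsto).mono_left nhdsWithin_le_nhds
  have htendvb : Tendsto (fun c₀ : ℝ => vb (S / (c₀ * (c₀ + (c₀ - 1) * S))) xstar)
      (𝓝[Ioi 1] 1) (𝓝 (vb S xstar)) := by
    have h4 : ContinuousWithinAt (fun p : ℝ × EuclideanSpace ℝ (Fin n) => vb p.1 p.2)
        (Set.Ici 0 ×ˢ Set.univ) (S, xstar) := hcontb _ (by simp [hS])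
    have h5 : Tendsto (fun c₀ : ℝ => ((S / (c₀ * (c₀ + (c₀ - 1) * S)), xstar) :
        ℝ × EuclideanSpace ℝ (Fin n))) (𝓝[Ioi 1] 1)
        (𝓝[Set.Ici 0 ×ˢ Set.univ] ((S, xstar) : ℝ × EuclideanSpace ℝ (Fin n))) := by
      rw [tendsto_nhdsWithin_iff]
      constructor
      · exact (htendθ.prodMk_nhds tendsto_const_nhds)
      · filter_upwards [self_mem_nhdsWithin] with c₀ hc₀
        have hc₀1 : (1:ℝ) < c₀ := hc₀
        have h1 : 0 < c₀ := lt_trans one_pos hc₀1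
        have h2 : 0 < c₀ + (c₀ - 1) * S := by nlinarith
        have : 0 ≤ S / (c₀ * (c₀ + (c₀ - 1) * S)) := div_nonneg hS (mul_pos h1 h2).le
        simp [this]
    exact h4.tendsto.comp h5
  have htendF : Tendsto (fun c₀ : ℝ => (c₀ + (c₀ - 1) * S) * vb (S / (c₀ * (c₀ + (c₀ - 1) * S))) xstar)
      (𝓝[Ioi 1] 1) (𝓝 (vb S xstar)) := by
    have := htendcf.mul htendvb
    simpa using this
  refine ge_of_tendsto htendF ?_
  filter_upwards [self_mem_nhdsWithin] with c₀ hc₀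
  exact (main c₀ hc₀ S ⟨hS, le_refl S⟩ xstar).le

/-- Uniqueness part of Theorem 3.1, in the rescaled variables used in its proof. -/
theorem uniqueness_rescaled (n : ℕ) (hn : 1 ≤ n)
    (Γ : Subgroup (EuclideanSpace ℝ (Fin n) ≃ᵢ EuclideanSpace ℝ (Fin n)))
    (hΓ : CompactSpace (Quotient (MulAction.orbitRel Γ (EuclideanSpace ℝ (Fin n)))))
    (v₀ : EuclideanSpace ℝ (Fin n) → ℝ)
    (hv₀per : ∀ g : Γ, ∀ x, v₀ (g • x) = v₀ x)
    (hv₀pos : ∀ x, 0 < v₀ x)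
    (hv₀cont : Continuous v₀)
    (v₁ v₂ : ℝ → EuclideanSpace ℝ (Fin n) → ℝ)
    (hcont : ∀ v ∈ ({v₁, v₂} : Set (ℝ → EuclideanSpace ℝ (Fin n) → ℝ)),
      ContinuousOn (fun p : ℝ × EuclideanSpace ℝ (Fin n) => v p.1 p.2)
        (Set.Ici 0 ×ˢ Set.univ))
    (hsmooth : ∀ v ∈ ({v₁, v₂} : Set (ℝ → EuclideanSpace ℝ (Fin n) → ℝ)),
      ContDiffOn ℝ (⊤ : ℕ∞) (fun p : ℝ × EuclideanSpace ℝ (Fin n) => v p.1 p.2)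
        (Set.Ioi 0 ×ˢ Set.univ))
    (hpos : ∀ v ∈ ({v₁, v₂} : Set (ℝ → EuclideanSpace ℝ (Fin n) → ℝ)),
      ∀ s, 0 ≤ s → ∀ x, 0 < v s x)
    (hper : ∀ v ∈ ({v₁, v₂} : Set (ℝ → EuclideanSpace ℝ (Fin n) → ℝ)),
      ∀ s, 0 ≤ s → ∀ g : Γ, ∀ x, v s (g • x) = v s x)
    (hpde : ∀ v ∈ ({v₁, v₂} : Set (ℝ → EuclideanSpace ℝ (Fin n) → ℝ)),
      ∀ s, 0 < s → ∀ x,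
        deriv (fun t => v t x) s =
          lap (v s) x / (v s x) ^ 2 - 2 * ‖gradient (v s) x‖ ^ 2 / (v s x) ^ 3)
    (hinit₁ : ∀ x, v₁ 0 x = v₀ x) (hinit₂ : ∀ x, v₂ 0 x = v₀ x) :
    ∀ s, 0 ≤ s → ∀ x, v₁ s x = v₂ s x := by
  have h1 : v₁ ∈ ({v₁, v₂} : Set (ℝ → EuclideanSpace ℝ (Fin n) → ℝ)) :=
    Set.mem_insert _ _
  have h2 : v₂ ∈ ({v₁, v₂} : Set (ℝ → EuclideanSpace ℝ (Fin n) → ℝ)) :=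
    Set.mem_insert_of_mem _ rfl
  obtain ⟨K, hKc, hKne, hKrep⟩ := exists_compact_orbit_rep Γ hΓ
  have hab := key Γ K hKc hKne hKrep v₁ v₂ (hcont _ h1) (hcont _ h2)
    (hsmooth _ h1) (hsmooth _ h2) (hpos _ h1) (hpos _ h2) (hper _ h1) (hper _ h2)
    (hpde _ h1) (hpde _ h2) (fun x => by rw [hinit₁ x, hinit₂ x])
  have hba := key Γ K hKc hKne hKrep v₂ v₁ (hcont _ h2) (hcont _ h1)
    (hsmooth _ h2) (hsmooth _ h1) (hpos _ h2) (hpos _ h1) (hper _ h2) (hper _ h1)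
    (hpde _ h2) (hpde _ h1) (fun x => by rw [hinit₁ x, hinit₂ x])
  intro s hs x
  exact le_antisymm (hab s hs x) (hba s hs x)
end
end

section
/- A priori bounds used in the proof of Theorem 3.1: Let n ≥ 1, let Γ be a subgroup of the isometry group of Euclidean space ℝⁿ whose orbit space ℝⁿ/Γ is compact, and let 0 < S ≤ ∞. Let v : [0,S) × ℝⁿ → ℝ be continuous on [0,S) × ℝⁿ, infinitely differentiable on (0,S) × ℝⁿ, everywhere positive, Γ-periodic in the spatial variable for every s, and solve ∂v/∂s = v⁻² Δv − 2 v⁻³ |∇v|² on (0,S) × ℝⁿ. Then for every s ∈ [0,S) and every x ∈ ℝⁿ one has 0 < inf_{y∈ℝⁿ} v(0,y) ≤ v(s,x) ≤ sup_{y∈ℝⁿ} v(0,y). -/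
open scoped RealInnerProductSpace

noncomputable section

open Filter Set

section Aux

lemma max_second_test {m : ℕ} {f : EuclideanSpace ℝ (Fin m) → ℝ}
    (hf : ContDiff ℝ (⊤ : ℕ∞) f) {x : EuclideanSpace ℝ (Fin m)}
    (hmax : ∀ y, f y ≤ f x) (e : EuclideanSpace ℝ (Fin m)) :
    fderiv ℝ (fun y => fderiv ℝ f y e) x e ≤ 0 := by
  by_contra hlt
  push_neg at hlt
  set g : EuclideanSpace ℝ (Fin m) → ℝ := fun y => fderiv ℝ f y e with hg
  set c : ℝ → EuclideanSpace ℝ (Fin m) := fun t => x + t • e with hc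
  have hc0 : c 0 = x := by simp [hc]
  have hccont : Continuous c := continuous_const.add (continuous_id.smul continuous_const)
  have hcder : ∀ t : ℝ, HasDerivAt c e t := by
    intro t
    have h := ((hasDerivAt_id t).smul_const e).const_add x
    rw [one_smul] at h
    exact h
  have hfd : ∀ y, DifferentiableAt ℝ f y := fun y => hf.differentiable (by simp) y
  have hφder : ∀ t, HasDerivAt (fun t => f (c t)) (g (c t)) t := by
    intro t
    exact ((hfd (c t)).hasFDerivAt).comp_hasDerivAt t (hcder t)
  have hgcd : ContDiff ℝ (⊤ : ℕ∞) g := by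
    have h1 : ContDiff ℝ (⊤ : ℕ∞) (fderiv ℝ f) := by
      apply hf.fderiv_right
      exact_mod_cast le_top
    exact (ContinuousLinearMap.apply ℝ ℝ e).contDiff.comp h1
  have hgdiff : DifferentiableAt ℝ g x := hgcd.differentiable (by simp) x
  have hψder : HasDerivAt (fun t => g (c t)) (fderiv ℝ g x e) 0 := by
    have h : HasFDerivAt g (fderiv ℝ g x) (c 0) := by rw [hc0]; exact hgdiff.hasFDerivAt
    exact h.comp_hasDerivAt 0 (hcder 0)
  have hψ0 : g (c 0) = 0 := by
    have hloc : IsLocalMax f x := Filter.Eventually.of_forall hmax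
    rw [hc0, hg]
    simp [hloc.fderiv_eq_zero]
  have hslope := hasDerivAt_iff_tendsto_slope.1 hψder
  have hev : ∀ᶠ t in nhdsWithin 0 {(0:ℝ)}ᶜ, (fderiv ℝ g x e)/2 < slope (fun t => g (c t)) 0 t :=
    hslope.eventually (eventually_gt_nhds (by linarith))
  rw [eventually_nhdsWithin_iff, Metric.eventually_nhds_iff] at hev
  obtain ⟨δ, hδ, hδp⟩ := hev
  have hψpos : ∀ t : ℝ, 0 < t → t < δ → 0 < g (c t) := by
    intro t ht htδ
    have := hδp (show dist t 0 < δ by simpa [abs_of_pos ht] using htδ) (by simp [ne_of_gt ht])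
    rw [slope_def_field] at this
    have h2 : 0 < (g (c t) - g (c 0)) / (t - 0) := lt_trans (by positivity) this
    rw [hψ0, sub_zero, sub_zero] at h2
    exact (div_pos_iff.1 h2).resolve_right (fun h => absurd h.2 (by linarith)) |>.1
  have hmono : StrictMonoOn (fun t => f (c t)) (Icc 0 (δ/2)) := by
    apply strictMonoOn_of_deriv_pos (convex_Icc _ _)
    · exact (hf.continuous.comp hccont).continuousOn
    · intro t ht
      rw [interior_Icc] at ht
      rw [(hφder t).deriv]
      exact hψpos t ht.1 (by linarith [ht.2])
  have h2 : f x < f (c (δ/2)) := by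
    simpa [hc0] using hmono (left_mem_Icc.2 (by linarith)) (right_mem_Icc.2 (by linarith))
      (by linarith)
  exact absurd (hmax (c (δ/2))) (not_le.2 h2)

lemma min_second_test {m : ℕ} {f : EuclideanSpace ℝ (Fin m) → ℝ}
    (hf : ContDiff ℝ (⊤ : ℕ∞) f) {x : EuclideanSpace ℝ (Fin m)}
    (hmin : ∀ y, f x ≤ f y) (e : EuclideanSpace ℝ (Fin m)) :
    0 ≤ fderiv ℝ (fun y => fderiv ℝ f y e) x e := by
  have h := max_second_test (f := fun y => -f y) hf.neg (fun y => neg_le_neg (hmin y)) e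
  have h1 : (fun y => fderiv ℝ (fun z => -f z) y e) = fun y => -(fderiv ℝ f y e) := by
    funext y; rw [fderiv_fun_neg]; simp
  rw [h1] at h
  have h2 : fderiv ℝ (fun y => -(fderiv ℝ f y e)) x e
      = -(fderiv ℝ (fun y => fderiv ℝ f y e) x e) := by
    rw [fderiv_fun_neg]; simp
  rw [h2] at h
  linarith

lemma max_grad_zero {m : ℕ} {f : EuclideanSpace ℝ (Fin m) → ℝ}
    {x : EuclideanSpace ℝ (Fin m)} (hmax : ∀ y, f y ≤ f x) : gradient f x = 0 := by
  have hloc : IsLocalMax f x := Filter.Eventually.of_forall hmax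
  unfold gradient
  rw [hloc.fderiv_eq_zero]
  simp

lemma min_grad_zero {m : ℕ} {f : EuclideanSpace ℝ (Fin m) → ℝ}
    {x : EuclideanSpace ℝ (Fin m)} (hmin : ∀ y, f x ≤ f y) : gradient f x = 0 := by
  have hloc : IsLocalMin f x := Filter.Eventually.of_forall hmin
  unfold gradient
  rw [hloc.fderiv_eq_zero]
  simp

lemma deriv_nonneg_left_max {g : ℝ → ℝ} {d a : ℝ} (ha : 0 < a)
    (hg : HasDerivAt g d a) (hmax : ∀ t ∈ Icc (0:ℝ) a, g t ≤ g a) : 0 ≤ d := by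
  have hs := hasDerivAt_iff_tendsto_slope.1 hg
  have hs' : Tendsto (slope g a) (nhdsWithin a (Iio a)) (nhds d) :=
    hs.mono_left (nhdsWithin_mono _ (fun t ht => ne_of_lt ht))
  refine ge_of_tendsto hs' ?_
  filter_upwards [Ioo_mem_nhdsLT_of_mem (show a ∈ Ioc (0:ℝ) a from ⟨ha, le_refl a⟩)] with t ht
  rw [slope_def_field]
  apply div_nonneg_of_nonpos
  · linarith [hmax t ⟨ht.1.le, ht.2.le⟩]
  · linarith [ht.2]

lemma deriv_nonpos_left_min {g : ℝ → ℝ} {d a : ℝ} (ha : 0 < a)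
    (hg : HasDerivAt g d a) (hmin : ∀ t ∈ Icc (0:ℝ) a, g a ≤ g t) : d ≤ 0 := by
  have := deriv_nonneg_left_max (g := fun t => -g t) ha hg.neg
    (fun t ht => neg_le_neg (hmin t ht))
  linarith

lemma exists_fund_radius (n : ℕ)
    (Γ : Subgroup (EuclideanSpace ℝ (Fin n) ≃ᵢ EuclideanSpace ℝ (Fin n)))
    (hΓ : CompactSpace (Quotient (MulAction.orbitRel Γ (EuclideanSpace ℝ (Fin n))))) :
    ∃ R : ℝ, 0 < R ∧ ∀ x : EuclideanSpace ℝ (Fin n), ∃ g : Γ,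
      g • x ∈ Metric.closedBall (0 : EuclideanSpace ℝ (Fin n)) R := by
  set E := EuclideanSpace ℝ (Fin n)
  set Q := Quotient (MulAction.orbitRel Γ E)
  set mk : E → Q := Quotient.mk (MulAction.orbitRel Γ E)
  have hsmulcont : ∀ g : Γ, Continuous (fun y : E => g • y) := fun g =>
    IsometryEquiv.continuous (g : E ≃ᵢ E)
  have hpre : ∀ s : Set E, mk ⁻¹' (mk '' s) = ⋃ g : Γ, (fun y : E => g • y) ⁻¹' s := by
    intro s
    ext y
    simp only [mem_preimage, mem_image, mem_iUnion]
    constructor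
    · rintro ⟨u, hu, hequ⟩
      obtain ⟨g, hg⟩ := MulAction.orbitRel_apply.1 (Quotient.eq''.1 hequ)
      have hg' : g • y = u := hg
      exact ⟨g, by rw [hg']; exact hu⟩
    · rintro ⟨g, hg⟩
      exact ⟨g • y, hg, Quotient.sound ⟨g, rfl⟩⟩
  have hopen : ∀ k : ℕ, IsOpen (mk '' Metric.ball (0:E) (k+1)) := by
    intro k
    rw [isOpen_coinduced (f := mk), hpre]
    exact isOpen_iUnion fun g => (Metric.isOpen_ball).preimage (hsmulcont g)
  have hcover : (univ : Set Q) ⊆ ⋃ k : ℕ, mk '' Metric.ball (0:E) (k+1) := by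
    intro q _
    obtain ⟨y, rfl⟩ := Quotient.exists_rep q
    simp only [mem_iUnion]
    exact ⟨⌈‖y‖⌉₊, ⟨y, by
      simp only [Metric.mem_ball, dist_zero_right]
      exact lt_of_le_of_lt (Nat.le_ceil _) (by exact_mod_cast lt_add_one _), rfl⟩⟩
  obtain ⟨t, ht⟩ := isCompact_univ.elim_finite_subcover _ hopen hcover
  refine ⟨(t.sup id : ℕ) + 1, by positivity, ?_⟩
  intro x
  have hx : mk x ∈ ⋃ k ∈ t, mk '' Metric.ball (0:E) (k+1) := ht (mem_univ _)
  simp only [mem_iUnion] at hx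
  obtain ⟨k, hkt, u, hu, hequ⟩ := hx
  obtain ⟨g, hg⟩ := MulAction.orbitRel_apply.1 (Quotient.eq''.1 hequ)
  have hg' : g • x = u := hg
  refine ⟨g, ?_⟩
  rw [Metric.mem_closedBall, dist_zero_right, hg']
  have h1 : (k:ℝ) + 1 ≤ (t.sup id : ℕ) + 1 := by
    have := Finset.le_sup (f := id) hkt
    exact_mod_cast add_le_add_left (Nat.cast_le.2 this) 1
  rw [Metric.mem_ball, dist_zero_right] at hu
  linarith

end Aux

/-- A priori bounds used in the proof of Theorem 3.1: a positive periodic solution of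
`∂v/∂s = v⁻² Δv − 2 v⁻³ |∇v|²` on `[0,S) × ℝⁿ` stays between the (positive) infimum
and the supremum of its initial data. -/
theorem a_priori_bounds (n : ℕ) (hn : 1 ≤ n)
    (Γ : Subgroup (EuclideanSpace ℝ (Fin n) ≃ᵢ EuclideanSpace ℝ (Fin n)))
    (hΓ : CompactSpace (Quotient (MulAction.orbitRel Γ (EuclideanSpace ℝ (Fin n)))))
    (S : EReal) (hS : 0 < S)
    (v : ℝ → EuclideanSpace ℝ (Fin n) → ℝ)
    (hcont : ContinuousOn (fun p : ℝ × EuclideanSpace ℝ (Fin n) => v p.1 p.2)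
      {p : ℝ × EuclideanSpace ℝ (Fin n) | 0 ≤ p.1 ∧ (p.1 : EReal) < S})
    (hsmooth : ContDiffOn ℝ (⊤ : ℕ∞) (fun p : ℝ × EuclideanSpace ℝ (Fin n) => v p.1 p.2)
      {p : ℝ × EuclideanSpace ℝ (Fin n) | 0 < p.1 ∧ (p.1 : EReal) < S})
    (hpos : ∀ s : ℝ, 0 ≤ s → (s : EReal) < S → ∀ x, 0 < v s x)
    (hper : ∀ s : ℝ, 0 ≤ s → (s : EReal) < S → ∀ g : Γ, ∀ x, v s (g • x) = v s x)
    (hpde : ∀ s : ℝ, 0 < s → (s : EReal) < S → ∀ x,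
      deriv (fun t => v t x) s =
        lap (v s) x / (v s x) ^ 2 - 2 * ‖gradient (v s) x‖ ^ 2 / (v s x) ^ 3) :
    ∀ s : ℝ, 0 ≤ s → (s : EReal) < S → ∀ x,
      (0 < ⨅ y, v 0 y) ∧ ((⨅ y, v 0 y) ≤ v s x) ∧ (v s x ≤ ⨆ y, v 0 y) := by
  obtain ⟨R, hR, hfund⟩ := exists_fund_radius n Γ hΓ
  have h0S : ((0:ℝ):EReal) < S := by rw [EReal.coe_zero]; exact hS
  -- continuity of time slices
  have hslice : ∀ s : ℝ, 0 ≤ s → (s:EReal) < S → Continuous (v s) := by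
    intro s hs hsS
    exact hcont.comp_continuous (continuous_const.prodMk continuous_id)
      (fun x => ⟨hs, hsS⟩)
  have hv0 : Continuous (v 0) := hslice 0 le_rfl h0S
  -- extrema of the initial data
  obtain ⟨xmax, hxmaxmem, hxmax'⟩ := (isCompact_closedBall (0:EuclideanSpace ℝ (Fin n)) R).exists_isMaxOn
      ⟨0, Metric.mem_closedBall_self hR.le⟩ hv0.continuousOn
  have hxmax : ∀ y, v 0 y ≤ v 0 xmax := by
    intro y
    obtain ⟨g, hg⟩ := hfund y
    calc v 0 y = v 0 (g • y) := (hper 0 le_rfl h0S g y).symm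
    _ ≤ v 0 xmax := hxmax' hg
  obtain ⟨xmin, hxminmem, hxmin'⟩ := (isCompact_closedBall (0:EuclideanSpace ℝ (Fin n)) R).exists_isMinOn
      ⟨0, Metric.mem_closedBall_self hR.le⟩ hv0.continuousOn
  have hxmin : ∀ y, v 0 xmin ≤ v 0 y := by
    intro y
    obtain ⟨g, hg⟩ := hfund y
    calc v 0 xmin ≤ v 0 (g • y) := hxmin' hg
    _ = v 0 y := hper 0 le_rfl h0S g y
  have hiInf : (⨅ y, v 0 y) = v 0 xmin :=
    le_antisymm (ciInf_le ⟨v 0 xmin, by rintro r ⟨y, rfl⟩; exact hxmin y⟩ xmin)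
      (le_ciInf hxmin)
  have hiSup : (⨆ y, v 0 y) = v 0 xmax :=
    le_antisymm (ciSup_le hxmax)
      (le_ciSup ⟨v 0 xmax, by rintro r ⟨y, rfl⟩; exact hxmax y⟩ xmax)
  -- the open parabolic domain
  have hOopen : IsOpen {p : ℝ × EuclideanSpace ℝ (Fin n) | 0 < p.1 ∧ (p.1:EReal) < S} := by
    have h1 : IsOpen {p : ℝ × EuclideanSpace ℝ (Fin n) | 0 < p.1} :=
      isOpen_lt continuous_const continuous_fst
    have h2 : IsOpen {p : ℝ × EuclideanSpace ℝ (Fin n) | (p.1:EReal) < S} :=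
      isOpen_Iio.preimage (continuous_coe_real_ereal.comp continuous_fst)
    exact h1.inter h2
  -- spatial smoothness of time slices
  have hspat : ∀ s : ℝ, 0 < s → (s:EReal) < S → ContDiff ℝ (⊤:ℕ∞) (v s) := by
    intro s hs hsS
    rw [← contDiffOn_univ]
    exact hsmooth.comp ((contDiff_const.prodMk contDiff_id).contDiffOn)
      (fun x _ => ⟨hs, hsS⟩)
  -- time differentiability
  have htime : ∀ s : ℝ, 0 < s → (s:EReal) < S → ∀ x,
      HasDerivAt (fun t => v t x) (deriv (fun t => v t x) s) s := by
    intro s hs hsS x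
    apply hasDerivAt_deriv_iff.2
    have h1 : ContDiffAt ℝ (⊤:ℕ∞) (fun p : ℝ × EuclideanSpace ℝ (Fin n) => v p.1 p.2) (s, x) :=
      hsmooth.contDiffAt (hOopen.mem_nhds ⟨hs, hsS⟩)
    have h2 : ContDiffAt ℝ (⊤:ℕ∞) (fun t : ℝ => v t x) s :=
      h1.comp s ((contDiff_id.prodMk contDiff_const).contDiffAt)
    exact h2.differentiableAt (by simp)
  -- upper bound claim
  have claim_up : ∀ s1 : ℝ, 0 < s1 → (s1:EReal) < S → ∀ x1, v s1 x1 ≤ v 0 xmax := by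
    intro s1 hs1 hs1S x1
    apply le_of_forall_pos_le_add
    intro ε hε
    set ε' := ε / s1 with hε'def
    have hε'pos : 0 < ε' := div_pos hε hs1
    have hε's1 : ε' * s1 = ε := by rw [hε'def, div_mul_cancel₀ ε hs1.ne']
    set F : ℝ × EuclideanSpace ℝ (Fin n) → ℝ := fun p => v p.1 p.2 - ε' * p.1 with hF
    set K : Set (ℝ × EuclideanSpace ℝ (Fin n)) :=
      Icc (0:ℝ) s1 ×ˢ Metric.closedBall (0:EuclideanSpace ℝ (Fin n)) R with hK
    have hKsub : K ⊆ {p : ℝ × EuclideanSpace ℝ (Fin n) | 0 ≤ p.1 ∧ (p.1:EReal) < S} := by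
      rintro ⟨s, x⟩ ⟨⟨h1, h2⟩, _⟩
      exact ⟨h1, lt_of_le_of_lt (EReal.coe_le_coe_iff.2 h2) hs1S⟩
    have hFcont : ContinuousOn F K :=
      (hcont.mono hKsub).sub ((continuous_const.mul continuous_fst).continuousOn)
    obtain ⟨⟨s₀, x₀⟩, hpK, hpmax⟩ :=
      ((isCompact_Icc).prod (isCompact_closedBall _ _)).exists_isMaxOn
        ⟨(0, 0), ⟨left_mem_Icc.2 hs1.le, Metric.mem_closedBall_self hR.le⟩⟩ hFcont
    have hs₀mem : s₀ ∈ Icc (0:ℝ) s1 := hpK.1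
    have hs₀S : ((s₀:ℝ):EReal) < S := lt_of_le_of_lt (EReal.coe_le_coe_iff.2 hs₀mem.2) hs1S
    have hglob : ∀ s ∈ Icc (0:ℝ) s1, ∀ x, F (s, x) ≤ F (s₀, x₀) := by
      intro s hs x
      obtain ⟨g, hg⟩ := hfund x
      have hsS' : (s:EReal) < S := lt_of_le_of_lt (EReal.coe_le_coe_iff.2 hs.2) hs1S
      have heq : F (s, x) = F (s, g • x) := by
        simp only [hF]
        rw [hper s hs.1 hsS' g x]
      rw [heq]
      exact hpmax ⟨hs, hg⟩
    rcases eq_or_lt_of_le hs₀mem.1 with h0 | hs₀pos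
    · have h1 := hglob s1 (right_mem_Icc.2 hs1.le) x1
      simp only [hF] at h1
      rw [← h0] at h1
      have h3 := hxmax x₀
      have h4 : ε' * (0:ℝ) = 0 := mul_zero _
      linarith
    · exfalso
      have hvmax : ∀ y, v s₀ y ≤ v s₀ x₀ := by
        intro y
        have := hglob s₀ hs₀mem y
        simp only [hF] at this
        linarith
      have hsm := hspat s₀ hs₀pos hs₀S
      have hlap : lap (v s₀) x₀ ≤ 0 :=
        Finset.sum_nonpos fun i _ => max_second_test hsm hvmax _
      have hder := htime s₀ hs₀pos hs₀S x₀
      have hdle : deriv (fun t => v t x₀) s₀ ≤ 0 := by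
        rw [hpde s₀ hs₀pos hs₀S x₀]
        have hvpos := hpos s₀ hs₀pos.le hs₀S x₀
        have hv2 : (0:ℝ) < v s₀ x₀ ^ 2 := by positivity
        have t1 : lap (v s₀) x₀ / v s₀ x₀ ^ 2 ≤ 0 := div_nonpos_iff.2 (Or.inr ⟨hlap, hv2.le⟩)
        have t2 : (0:ℝ) ≤ 2 * ‖gradient (v s₀) x₀‖^2 / v s₀ x₀ ^ 3 := by positivity
        linarith
      have hh : HasDerivAt (fun t => v t x₀ - ε' * t) (deriv (fun t => v t x₀) s₀ - ε') s₀ := by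
        simpa using hder.fun_sub ((hasDerivAt_id s₀).const_mul ε')
      have hmax' : ∀ t ∈ Icc (0:ℝ) s₀,
          v t x₀ - ε' * t ≤ v s₀ x₀ - ε' * s₀ := by
        intro t ht
        have := hglob t ⟨ht.1, le_trans ht.2 hs₀mem.2⟩ x₀
        simpa [hF] using this
      have := deriv_nonneg_left_max hs₀pos hh hmax'
      linarith
  -- lower bound claim
  have claim_lo : ∀ s1 : ℝ, 0 < s1 → (s1:EReal) < S → ∀ x1, v 0 xmin ≤ v s1 x1 := by
    intro s1 hs1 hs1S x1
    apply le_of_forall_pos_le_add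
    intro ε hε
    set ε' := ε / s1 with hε'def
    have hε'pos : 0 < ε' := div_pos hε hs1
    have hε's1 : ε' * s1 = ε := by rw [hε'def, div_mul_cancel₀ ε hs1.ne']
    set F : ℝ × EuclideanSpace ℝ (Fin n) → ℝ := fun p => v p.1 p.2 + ε' * p.1 with hF
    set K : Set (ℝ × EuclideanSpace ℝ (Fin n)) :=
      Icc (0:ℝ) s1 ×ˢ Metric.closedBall (0:EuclideanSpace ℝ (Fin n)) R with hK
    have hKsub : K ⊆ {p : ℝ × EuclideanSpace ℝ (Fin n) | 0 ≤ p.1 ∧ (p.1:EReal) < S} := by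
      rintro ⟨s, x⟩ ⟨⟨h1, h2⟩, _⟩
      exact ⟨h1, lt_of_le_of_lt (EReal.coe_le_coe_iff.2 h2) hs1S⟩
    have hFcont : ContinuousOn F K :=
      (hcont.mono hKsub).add ((continuous_const.mul continuous_fst).continuousOn)
    obtain ⟨⟨s₀, x₀⟩, hpK, hpmin⟩ :=
      ((isCompact_Icc).prod (isCompact_closedBall _ _)).exists_isMinOn
        ⟨(0, 0), ⟨left_mem_Icc.2 hs1.le, Metric.mem_closedBall_self hR.le⟩⟩ hFcont
    have hs₀mem : s₀ ∈ Icc (0:ℝ) s1 := hpK.1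
    have hs₀S : ((s₀:ℝ):EReal) < S := lt_of_le_of_lt (EReal.coe_le_coe_iff.2 hs₀mem.2) hs1S
    have hglob : ∀ s ∈ Icc (0:ℝ) s1, ∀ x, F (s₀, x₀) ≤ F (s, x) := by
      intro s hs x
      obtain ⟨g, hg⟩ := hfund x
      have hsS' : (s:EReal) < S := lt_of_le_of_lt (EReal.coe_le_coe_iff.2 hs.2) hs1S
      have heq : F (s, x) = F (s, g • x) := by
        simp only [hF]
        rw [hper s hs.1 hsS' g x]
      rw [heq]
      exact hpmin ⟨hs, hg⟩
    rcases eq_or_lt_of_le hs₀mem.1 with h0 | hs₀pos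
    · have h1 := hglob s1 (right_mem_Icc.2 hs1.le) x1
      simp only [hF] at h1
      rw [← h0] at h1
      have h3 := hxmin x₀
      have h4 : ε' * (0:ℝ) = 0 := mul_zero _
      linarith
    · exfalso
      have hvmin : ∀ y, v s₀ x₀ ≤ v s₀ y := by
        intro y
        have := hglob s₀ hs₀mem y
        simp only [hF] at this
        linarith
      have hsm := hspat s₀ hs₀pos hs₀S
      have hlap : 0 ≤ lap (v s₀) x₀ :=
        Finset.sum_nonneg fun i _ => min_second_test hsm hvmin _
      have hgrad : gradient (v s₀) x₀ = 0 := min_grad_zero hvmin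
      have hder := htime s₀ hs₀pos hs₀S x₀
      have hdge : 0 ≤ deriv (fun t => v t x₀) s₀ := by
        rw [hpde s₀ hs₀pos hs₀S x₀, hgrad]
        have hvpos := hpos s₀ hs₀pos.le hs₀S x₀
        have hv2 : (0:ℝ) < v s₀ x₀ ^ 2 := by positivity
        have t1 : (0:ℝ) ≤ lap (v s₀) x₀ / v s₀ x₀ ^ 2 := div_nonneg hlap hv2.le
        simp
        exact t1
      have hh : HasDerivAt (fun t => v t x₀ + ε' * t) (deriv (fun t => v t x₀) s₀ + ε') s₀ := by
        simpa using hder.fun_add ((hasDerivAt_id s₀).const_mul ε')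
      have hmin' : ∀ t ∈ Icc (0:ℝ) s₀,
          v s₀ x₀ + ε' * s₀ ≤ v t x₀ + ε' * t := by
        intro t ht
        have := hglob t ⟨ht.1, le_trans ht.2 hs₀mem.2⟩ x₀
        simpa [hF] using this
      have := deriv_nonpos_left_min hs₀pos hh hmin'
      linarith
  -- conclusion
  intro s hs hsS x
  refine ⟨by rw [hiInf]; exact hpos 0 le_rfl h0S xmin, ?_, ?_⟩
  · rw [hiInf]
    rcases eq_or_lt_of_le hs with h0 | hspos
    · rw [← h0]; exact hxmin x
    · exact claim_lo s hspos hsS x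
  · rw [hiSup]
    rcases eq_or_lt_of_le hs with h0 | hspos
    · rw [← h0]; exact hxmax x
    · exact claim_up s hspos hsS x
end
end

section
/- Change of time variable (reduction of the continuity equation (15) of the paper to the parabolic equation (21)): Let m ≥ 3 be an integer, n = m − 1, I ⊆ (0,∞) an interval, γ : I → ℝ continuous, and ζ, σ : I → ℝ differentiable functions satisfying ζ'(a) = −(m−1) γ(a)/a and σ'(a) = −((m−2)/2) e^{−ζ(a)}/a³ for all a ∈ I. Let J ⊆ ℝ contain σ(I) and let v : J × ℝⁿ → ℝ be everywhere positive, differentiable in s, twice differentiable in x, solving ∂v/∂s = v⁻² Δv − 2 v⁻³ |∇v|² on J × ℝⁿ. Then ρ(a,x) := e^{ζ(a)} v(σ(a),x)² satisfies a ∂ρ/∂a = −(m−1) γ(a) ρ + ((m−2)/(2a²)) ( (3/2) |∇ρ|²/ρ² − Δρ/ρ ) at every point of I × ℝⁿ. -/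
open scoped RealInnerProductSpace

noncomputable section

lemma hasFDerivAt_const_mul_sq {E : Type*} [NormedAddCommGroup E] [NormedSpace ℝ E]
    (c : ℝ) (f : E → ℝ) (x : E) (hf : DifferentiableAt ℝ f x) :
    HasFDerivAt (fun y => c * f y ^ 2) ((2 * c * f x) • fderiv ℝ f x) x := by
  have h := hf.hasFDerivAt
  have h2 : HasFDerivAt (fun y => c * (f y * f y))
      (c • (f x • fderiv ℝ f x + f x • fderiv ℝ f x)) x := (h.mul h).const_mul c
  have heq : (2 * c * f x) • fderiv ℝ f x = c • (f x • fderiv ℝ f x + f x • fderiv ℝ f x) := by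
    ext w
    simp [ContinuousLinearMap.smul_apply, ContinuousLinearMap.add_apply]
    ring
  rw [heq]
  simpa only [pow_two] using h2

lemma norm_gradient_sq {n : ℕ} (g : EuclideanSpace ℝ (Fin n) → ℝ) (x : EuclideanSpace ℝ (Fin n)) :
    ‖gradient g x‖ ^ 2 = ∑ i, (fderiv ℝ g x (EuclideanSpace.single i 1)) ^ 2 := by
  have h : ∀ i : Fin n, fderiv ℝ g x (EuclideanSpace.single i 1) = gradient g x i := by
    intro i
    have : ⟪gradient g x, EuclideanSpace.single i (1:ℝ)⟫ = fderiv ℝ g x (EuclideanSpace.single i 1) := by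
      simp [gradient, InnerProductSpace.toDual_symm_apply]
    rw [← this]
    rw [EuclideanSpace.inner_single_right, one_mul, conj_trivial]
  simp_rw [h]
  rw [EuclideanSpace.norm_eq, Real.sq_sqrt (by positivity)]
  simp [sq_abs]

lemma norm_gradient_const_mul_sq {n : ℕ} (c : ℝ) (f : EuclideanSpace ℝ (Fin n) → ℝ)
    (x : EuclideanSpace ℝ (Fin n)) (hf : DifferentiableAt ℝ f x) :
    ‖gradient (fun y => c * f y ^ 2) x‖ ^ 2 = (2 * c * f x) ^ 2 * ‖gradient f x‖ ^ 2 := by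
  have hgr : gradient (fun y => c * f y ^ 2) x = (2 * c * f x) • gradient f x := by
    unfold gradient
    rw [(hasFDerivAt_const_mul_sq c f x hf).fderiv, map_smul]
  rw [hgr, norm_smul]
  simp [mul_pow, sq_abs]

lemma lap_const_mul_sq {n : ℕ} (c : ℝ) (f : EuclideanSpace ℝ (Fin n) → ℝ)
    (hf : Differentiable ℝ f) (hf2 : Differentiable ℝ (fderiv ℝ f)) (x : EuclideanSpace ℝ (Fin n)) :
    lap (fun y => c * f y ^ 2) x =
      2 * c * ((∑ i, (fderiv ℝ f x (EuclideanSpace.single i 1)) ^ 2) + f x * lap f x) := by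
  unfold lap
  have hg : ∀ y, fderiv ℝ (fun z => c * f z ^ 2) y = (2 * c * f y) • fderiv ℝ f y :=
    fun y => (hasFDerivAt_const_mul_sq c f y (hf y)).fderiv
  have key : ∀ i : Fin n,
      fderiv ℝ (fun y => fderiv ℝ (fun z => c * f z ^ 2) y (EuclideanSpace.single i 1)) x
          (EuclideanSpace.single i 1)
      = 2 * c * (fderiv ℝ f x (EuclideanSpace.single i 1)) ^ 2 +
        2 * c * f x *
          fderiv ℝ (fun y => fderiv ℝ f y (EuclideanSpace.single i 1)) x
            (EuclideanSpace.single i 1) := by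
    intro i
    set w := EuclideanSpace.single i (1:ℝ) with hw
    have hb : DifferentiableAt ℝ (fun y => fderiv ℝ f y w) x :=
      (hf2 x).clm_apply (differentiableAt_const w)
    have ha' : HasFDerivAt (fun y => 2 * c * f y) ((2 * c) • fderiv ℝ f x) x :=
      (hf x).hasFDerivAt.const_mul (2 * c)
    have hmul := ha'.mul hb.hasFDerivAt
    have hfun : (fun y => fderiv ℝ (fun z => c * f z ^ 2) y w)
        = fun y => (2 * c * f y) * fderiv ℝ f y w := by
      funext y; rw [hg y]; simp
    rw [hfun, HasFDerivAt.fderiv (f := fun y => 2 * c * f y * fderiv ℝ f y w) hmul]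
    simp only [ContinuousLinearMap.add_apply, ContinuousLinearMap.smul_apply, smul_eq_mul]
    ring
  rw [Finset.sum_congr rfl (fun i _ => key i), Finset.sum_add_distrib,
    ← Finset.mul_sum, ← Finset.mul_sum]
  ring

/-- Change of time variable: a positive solution `v` of `∂v/∂s = v⁻² Δv − 2 v⁻³ |∇v|²`
gives, via `ρ(a,x) = e^{ζ(a)} v(σ(a),x)²` with `ζ' = −(m−1)γ/a` and
`σ' = −((m−2)/2) e^{−ζ}/a³`, a solution of the continuity equation
`a ∂ρ/∂a = −(m−1) γ ρ + ((m−2)/(2a²)) ( (3/2)|∇ρ|²/ρ² − Δρ/ρ )`. -/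
theorem change_of_time_variable (m : ℕ) (hm : 3 ≤ m) (n : ℕ) (hn : n = m - 1)
    (I : Set ℝ) (hI : I ⊆ Set.Ioi (0 : ℝ)) (hIinterval : I.OrdConnected)
    (γ ζ σ : ℝ → ℝ) (hγ : ContinuousOn γ I)
    (hζ : ∀ a ∈ I, HasDerivAt ζ (-((m : ℝ) - 1) * γ a / a) a)
    (hσ : ∀ a ∈ I, HasDerivAt σ (-(((m : ℝ) - 2) / 2) * Real.exp (-ζ a) / a ^ 3) a)
    (J : Set ℝ) (hJ : σ '' I ⊆ J)
    (v : ℝ → EuclideanSpace ℝ (Fin n) → ℝ)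
    (hpos : ∀ s ∈ J, ∀ x, 0 < v s x)
    (hdiff_s : ∀ x, ∀ s ∈ J, DifferentiableAt ℝ (fun t => v t x) s)
    (hdiff_x : ∀ s ∈ J, Differentiable ℝ (v s) ∧ Differentiable ℝ (fderiv ℝ (v s)))
    (hpde : ∀ s ∈ J, ∀ x,
      deriv (fun t => v t x) s =
        lap (v s) x / (v s x) ^ 2 - 2 * ‖gradient (v s) x‖ ^ 2 / (v s x) ^ 3)
    (ρ : ℝ → EuclideanSpace ℝ (Fin n) → ℝ)
    (hρ : ∀ a x, ρ a x = Real.exp (ζ a) * (v (σ a) x) ^ 2) :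
    ∀ a ∈ I, ∀ x,
      a * deriv (fun t => ρ t x) a =
        -((m : ℝ) - 1) * γ a * ρ a x +
          (((m : ℝ) - 2) / (2 * a ^ 2)) *
            ((3 / 2) * ‖gradient (ρ a) x‖ ^ 2 / (ρ a x) ^ 2 - lap (ρ a) x / ρ a x) := by
  intro a ha x₀
  have ha0 : (0 : ℝ) < a := hI ha
  have hsJ : σ a ∈ J := hJ ⟨a, ha, rfl⟩
  have hfpos : 0 < v (σ a) x₀ := hpos _ hsJ x₀
  have hfd : Differentiable ℝ (v (σ a)) := (hdiff_x _ hsJ).1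
  have hfd2 : Differentiable ℝ (fderiv ℝ (v (σ a))) := (hdiff_x _ hsJ).2
  -- time derivative
  have hvt : HasDerivAt (fun t => v t x₀) (deriv (fun t => v t x₀) (σ a)) (σ a) :=
    (hdiff_s x₀ _ hsJ).hasDerivAt
  have hcomp := hvt.comp a (hσ a ha)
  have hpow := hcomp.pow 2
  have hexp := (hζ a ha).exp
  have hρt := hexp.mul hpow
  simp only [Function.comp_def, pow_one, Nat.cast_ofNat] at hρt
  norm_num at hρt
  have hfunt : (fun t => ρ t x₀) = (fun t => Real.exp (ζ t) * (v (σ t) x₀) ^ 2) :=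
    funext fun t => hρ t x₀
  rw [hfunt, HasDerivAt.deriv (f := fun t => Real.exp (ζ t) * (v (σ t) x₀) ^ 2) hρt]
  -- spatial part
  have hρa : ρ a = (fun y => Real.exp (ζ a) * (v (σ a) y) ^ 2) := funext fun y => hρ a y
  rw [hρa,
    norm_gradient_const_mul_sq (Real.exp (ζ a)) (v (σ a)) x₀ (hfd x₀),
    lap_const_mul_sq (Real.exp (ζ a)) (v (σ a)) hfd hfd2 x₀,
    ← norm_gradient_sq (v (σ a)) x₀]
  have hvs := hpde _ hsJ x₀
  rw [hvs]
  have hcne : Real.exp (ζ a) ≠ 0 := (Real.exp_pos _).ne'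
  have hfne : v (σ a) x₀ ≠ 0 := hfpos.ne'
  have hane : a ≠ 0 := ha0.ne'
  rw [Real.exp_neg]
  field_simp
  ring
end
end

section
/- A priori bounds of Theorem 3.1 (ii): Let m ≥ 3 be an integer, n = m − 1, and let Γ be a subgroup of the isometry group of Euclidean space ℝⁿ whose orbit space ℝⁿ/Γ is compact. Let 0 ≤ a₁ < a₀, let γ : (a₁,a₀] → ℝ be continuous, and define ζ(a) := −(m−1) ∫_{a₀}^{a} γ(a')/a' da'. Let ρ : (a₁,a₀] × ℝⁿ → ℝ be continuous, everywhere positive, infinitely differentiable on (a₁,a₀) × ℝⁿ, Γ-periodic in the spatial variable for every a, and satisfy a ∂ρ/∂a = −(m−1) γ(a) ρ + ((m−2)/(2a²)) ( (3/2) |∇ρ|²/ρ² − Δρ/ρ ) on (a₁,a₀) × ℝⁿ. Set ρ₀ := ρ(a₀,·) and let ρ₀^{min}, ρ₀^{max} be its infimum and supremum over ℝⁿ. Then for every a ∈ (a₁,a₀] and x ∈ ℝⁿ one has ρ₀^{min} e^{ζ(a)} ≤ ρ(a,x) ≤ ρ₀^{max} e^{ζ(a)}. -/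
open scoped RealInnerProductSpace

noncomputable section

open Filter Set Topology


lemma aux_sd_nonpos {g g' : ℝ → ℝ} {L : ℝ}
    (hd : ∀ t, HasDerivAt g (g' t) t) (hL : HasDerivAt g' L 0)
    (hmax : ∀ t, g t ≤ g 0) : L ≤ 0 := by
  by_contra hcon
  push_neg at hcon
  have hloc : IsLocalMax g 0 := Filter.Eventually.of_forall hmax
  have hg'0 : g' 0 = 0 := hloc.hasDerivAt_eq_zero (hd 0)
  have hslope : Tendsto (slope g' 0) (𝓝[≠] (0:ℝ)) (𝓝 L) := hasDerivAt_iff_tendsto_slope.mp hL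
  have hmem : slope g' 0 ⁻¹' Set.Ioi 0 ∈ 𝓝[≠] (0:ℝ) := hslope (Ioi_mem_nhds hcon)
  rw [Metric.mem_nhdsWithin_iff] at hmem
  obtain ⟨δ, hδ, hball⟩ := hmem
  have hpos' : ∀ t ∈ Set.Ioo (0:ℝ) δ, 0 < g' t := by
    intro t ht
    have h1 : t ∈ Metric.ball (0:ℝ) δ ∩ {(0:ℝ)}ᶜ :=
      ⟨by simpa [Real.dist_eq, abs_of_pos ht.1] using ht.2, by simp [ne_of_gt ht.1]⟩
    have h2 := hball h1
    simp only [Set.mem_preimage, Set.mem_Ioi, slope_def_field, hg'0, sub_zero] at h2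
    have h3 := mul_pos h2 ht.1
    rwa [div_mul_cancel₀ _ (ne_of_gt ht.1)] at h3
  have hmono : StrictMonoOn g (Set.Icc 0 (δ/2)) := by
    apply strictMonoOn_of_deriv_pos (convex_Icc _ _)
    · exact (Differentiable.continuous fun t => (hd t).differentiableAt).continuousOn
    · intro t ht
      rw [interior_Icc] at ht
      rw [(hd t).deriv]
      exact hpos' t ⟨ht.1, by linarith [ht.2]⟩
  have hlt : g 0 < g (δ/2) :=
    hmono (Set.left_mem_Icc.2 (by linarith)) (Set.right_mem_Icc.2 (by linarith)) (by linarith)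
  exact absurd (hmax (δ/2)) (not_le.2 hlt)

lemma aux_sd_nonneg {g g' : ℝ → ℝ} {L : ℝ}
    (hd : ∀ t, HasDerivAt g (g' t) t) (hL : HasDerivAt g' L 0)
    (hmin : ∀ t, g 0 ≤ g t) : 0 ≤ L := by
  have := aux_sd_nonpos (g := fun t => -g t) (g' := fun t => -g' t) (L := -L)
    (fun t => (hd t).neg) hL.neg (fun t => neg_le_neg (hmin t))
  linarith

lemma aux_lap_le {n : ℕ} {f : EuclideanSpace ℝ (Fin n) → ℝ}
    (hf : ContDiff ℝ (⊤ : ℕ∞) f) {x₀ : EuclideanSpace ℝ (Fin n)}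
    (hmax : ∀ y, f y ≤ f x₀) : fderiv ℝ f x₀ = 0 ∧ lap f x₀ ≤ 0 := by
  have hloc : IsLocalMax f x₀ := Filter.Eventually.of_forall hmax
  refine ⟨hloc.fderiv_eq_zero, ?_⟩
  apply Finset.sum_nonpos
  intro i _
  set e := EuclideanSpace.single (𝕜 := ℝ) i (1:ℝ) with he
  set φ : EuclideanSpace ℝ (Fin n) → ℝ := fun y => fderiv ℝ f y e with hφ
  have h1 : ContDiff ℝ 1 (fderiv ℝ f) := (contDiff_infty.mp hf 2).fderiv_right (by norm_num)
  have hφdiff : Differentiable ℝ φ :=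
    ((ContinuousLinearMap.apply ℝ ℝ e).contDiff.comp h1).differentiable one_ne_zero
  have hline : ∀ t : ℝ, HasDerivAt (fun s : ℝ => x₀ + s • e) e t := by
    intro t
    simpa using ((hasDerivAt_id t).smul_const e).const_add x₀
  have hd : ∀ t : ℝ, HasDerivAt (fun s : ℝ => f (x₀ + s • e)) (φ (x₀ + t • e)) t := fun t =>
    (((contDiff_infty.mp hf 1).differentiable (by norm_num) (x₀ + t • e)).hasFDerivAt).comp_hasDerivAt t (hline t)
  have h0 : x₀ + (0:ℝ) • e = x₀ := by simp
  have hL2 : HasDerivAt (fun t : ℝ => φ (x₀ + t • e)) (fderiv ℝ φ x₀ e) (0:ℝ) := by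
    have := ((hφdiff (x₀ + (0:ℝ) • e)).hasFDerivAt).comp_hasDerivAt (0:ℝ) (hline 0)
    rw [h0] at this; exact this
  have hres := aux_sd_nonpos hd hL2 (fun t => by
    simpa [h0] using hmax (x₀ + t • e))
  exact hres

lemma aux_lap_ge {n : ℕ} {f : EuclideanSpace ℝ (Fin n) → ℝ}
    (hf : ContDiff ℝ (⊤ : ℕ∞) f) {x₀ : EuclideanSpace ℝ (Fin n)}
    (hmin : ∀ y, f x₀ ≤ f y) : fderiv ℝ f x₀ = 0 ∧ 0 ≤ lap f x₀ := by
  have hloc : IsLocalMin f x₀ := Filter.Eventually.of_forall hmin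
  refine ⟨hloc.fderiv_eq_zero, ?_⟩
  apply Finset.sum_nonneg
  intro i _
  set e := EuclideanSpace.single (𝕜 := ℝ) i (1:ℝ) with he
  set φ : EuclideanSpace ℝ (Fin n) → ℝ := fun y => fderiv ℝ f y e with hφ
  have h1 : ContDiff ℝ 1 (fderiv ℝ f) := (contDiff_infty.mp hf 2).fderiv_right (by norm_num)
  have hφdiff : Differentiable ℝ φ :=
    ((ContinuousLinearMap.apply ℝ ℝ e).contDiff.comp h1).differentiable one_ne_zero
  have hline : ∀ t : ℝ, HasDerivAt (fun s : ℝ => x₀ + s • e) e t := by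
    intro t
    simpa using ((hasDerivAt_id t).smul_const e).const_add x₀
  have hd : ∀ t : ℝ, HasDerivAt (fun s : ℝ => f (x₀ + s • e)) (φ (x₀ + t • e)) t := fun t =>
    (((contDiff_infty.mp hf 1).differentiable (by norm_num) (x₀ + t • e)).hasFDerivAt).comp_hasDerivAt t (hline t)
  have h0 : x₀ + (0:ℝ) • e = x₀ := by simp
  have hL2 : HasDerivAt (fun t : ℝ => φ (x₀ + t • e)) (fderiv ℝ φ x₀ e) (0:ℝ) := by
    have := ((hφdiff (x₀ + (0:ℝ) • e)).hasFDerivAt).comp_hasDerivAt (0:ℝ) (hline 0)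
    rw [h0] at this; exact this
  exact aux_sd_nonneg hd hL2 (fun t => by simpa [h0] using hmin (x₀ + t • e))

lemma aux_deriv_nonpos {h : ℝ → ℝ} {L c d : ℝ} (hcd : c < d)
    (hd : HasDerivAt h L c) (hm : ∀ a ∈ Set.Icc c d, h a ≤ h c) : L ≤ 0 := by
  have H := hd.hasDerivWithinAt (s := Set.Ioi c)
  rw [hasDerivWithinAt_iff_tendsto_slope' (by simp)] at H
  refine le_of_tendsto H ?_
  filter_upwards [Ioc_mem_nhdsGT_of_mem (Set.mem_Ico.2 ⟨le_refl c, hcd⟩)] with a haa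
  have h1 : h a ≤ h c := hm a ⟨haa.1.le, haa.2⟩
  have h2 : 0 < a - c := sub_pos.2 haa.1
  rw [slope_def_field]
  exact div_nonpos_of_nonpos_of_nonneg (by linarith) h2.le

lemma aux_deriv_nonneg {h : ℝ → ℝ} {L c d : ℝ} (hcd : c < d)
    (hd : HasDerivAt h L c) (hm : ∀ a ∈ Set.Icc c d, h c ≤ h a) : 0 ≤ L := by
  have := aux_deriv_nonpos (h := fun a => -h a) (L := -L) hcd hd.neg
    (fun a haI => neg_le_neg (hm a haI))
  linarith

lemma aux_transversal {n : ℕ}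
    (Γ : Subgroup (EuclideanSpace ℝ (Fin n) ≃ᵢ EuclideanSpace ℝ (Fin n)))
    (hΓ : CompactSpace (Quotient (MulAction.orbitRel Γ (EuclideanSpace ℝ (Fin n))))) :
    ∃ K : Set (EuclideanSpace ℝ (Fin n)), IsCompact K ∧ K.Nonempty ∧
      ∀ y, ∃ g : Γ, g • y ∈ K := by
  classical
  set E := EuclideanSpace ℝ (Fin n)
  letI srel : Setoid E := MulAction.orbitRel Γ E
  have hsmul : ∀ (g : Γ) (y : E), g • y = (g : E ≃ᵢ E) y := fun _ _ => rfl
  have hopen : ∀ z : E, IsOpen ((Quotient.mk srel) '' Metric.ball z 1) := by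
    intro z
    rw [← isQuotientMap_quotient_mk'.isOpen_preimage]
    have hpre : (Quotient.mk' : E → Quotient srel) ⁻¹'
        ((Quotient.mk srel) '' Metric.ball z 1)
        = ⋃ g : Γ, (fun y => g • y) ⁻¹' Metric.ball z 1 := by
      ext y
      simp only [Set.mem_preimage, Set.mem_image, Set.mem_iUnion]
      constructor
      · rintro ⟨u, hu, he⟩
        have hrel : u ∈ MulAction.orbit Γ y := by
          rw [← MulAction.orbitRel_apply]
          exact Quotient.exact he
        obtain ⟨g, rfl⟩ := hrel
        exact ⟨g, hu⟩
      · rintro ⟨g, hg⟩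
        exact ⟨g • y, hg, Quotient.sound (MulAction.orbitRel_apply.mpr (MulAction.mem_orbit y g))⟩
    rw [hpre]
    exact isOpen_iUnion fun g => Metric.isOpen_ball.preimage (by
      simpa [hsmul] using (g : E ≃ᵢ E).continuous)
  have hcover : (Set.univ : Set (Quotient srel)) ⊆
      ⋃ z : E, (Quotient.mk srel) '' Metric.ball z 1 := by
    intro q _
    obtain ⟨y, rfl⟩ := Quotient.exists_rep q
    exact Set.mem_iUnion.2 ⟨y, Set.mem_image_of_mem _ (by simp)⟩
  obtain ⟨t, ht⟩ := isCompact_univ.elim_finite_subcover _ hopen hcover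
  have hprop : ∀ y : E, ∃ g : Γ, g • y ∈ ⋃ z ∈ t, Metric.closedBall z 1 := by
    intro y
    have h1 : Quotient.mk srel y ∈ ⋃ z ∈ t, Quotient.mk srel '' Metric.ball z 1 :=
      ht (Set.mem_univ _)
    rw [Set.mem_iUnion₂] at h1
    obtain ⟨z, hz, u, hu, he⟩ := h1
    have hrel : u ∈ MulAction.orbit Γ y := by
      rw [← MulAction.orbitRel_apply]
      exact Quotient.exact he
    obtain ⟨g, rfl⟩ := hrel
    exact ⟨g, Set.mem_biUnion hz (Metric.ball_subset_closedBall hu)⟩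
  refine ⟨⋃ z ∈ t, Metric.closedBall z 1,
    t.isCompact_biUnion (fun _ _ => isCompact_closedBall _ _), ?_, hprop⟩
  obtain ⟨y⟩ := (inferInstance : Nonempty E)
  obtain ⟨g, hg⟩ := hprop y
  exact ⟨_, hg⟩

set_option maxHeartbeats 1000000 in
/-- A priori bounds of Theorem 3.1 (ii): a positive periodic solution of the continuity
equation on `(a₁,a₀] × ℝⁿ` satisfies
`ρ₀^{min} e^{ζ(a)} ≤ ρ(a,x) ≤ ρ₀^{max} e^{ζ(a)}`, where `ρ₀ = ρ(a₀,·)` and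
`ζ(a) = −(m−1)∫_{a₀}^a γ(a')/a' da'`. -/
theorem a_priori_bounds_scale_factor (m : ℕ) (hm : 3 ≤ m) (n : ℕ) (hn : n = m - 1)
    (Γ : Subgroup (EuclideanSpace ℝ (Fin n) ≃ᵢ EuclideanSpace ℝ (Fin n)))
    (hΓ : CompactSpace (Quotient (MulAction.orbitRel Γ (EuclideanSpace ℝ (Fin n)))))
    (a₁ a₀ : ℝ) (ha₁ : 0 ≤ a₁) (ha : a₁ < a₀)
    (γ : ℝ → ℝ) (hγ : ContinuousOn γ (Set.Ioc a₁ a₀))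
    (ζ : ℝ → ℝ) (hζ : ∀ a ∈ Set.Ioc a₁ a₀, ζ a = -((m : ℝ) - 1) * ∫ t in a₀..a, γ t / t)
    (ρ : ℝ → EuclideanSpace ℝ (Fin n) → ℝ)
    (hcont : ContinuousOn (fun p : ℝ × EuclideanSpace ℝ (Fin n) => ρ p.1 p.2)
      (Set.Ioc a₁ a₀ ×ˢ Set.univ))
    (hpos : ∀ a ∈ Set.Ioc a₁ a₀, ∀ x, 0 < ρ a x)
    (hsmooth : ContDiffOn ℝ (⊤ : ℕ∞) (fun p : ℝ × EuclideanSpace ℝ (Fin n) => ρ p.1 p.2)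
      (Set.Ioo a₁ a₀ ×ˢ Set.univ))
    (hper : ∀ a ∈ Set.Ioc a₁ a₀, ∀ g : Γ, ∀ x, ρ a (g • x) = ρ a x)
    (hpde : ∀ a ∈ Set.Ioo a₁ a₀, ∀ x,
      a * deriv (fun t => ρ t x) a =
        -((m : ℝ) - 1) * γ a * ρ a x +
          (((m : ℝ) - 2) / (2 * a ^ 2)) *
            ((3 / 2) * ‖gradient (ρ a) x‖ ^ 2 / (ρ a x) ^ 2 - lap (ρ a) x / ρ a x)) :
    ∀ a ∈ Set.Ioc a₁ a₀, ∀ x,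
      ((⨅ y, ρ a₀ y) * Real.exp (ζ a) ≤ ρ a x) ∧
        (ρ a x ≤ (⨆ y, ρ a₀ y) * Real.exp (ζ a)) := by
  classical
  have hm2 : (3:ℝ) ≤ (m:ℝ) := by exact_mod_cast hm
  have ha₀mem : a₀ ∈ Set.Ioc a₁ a₀ := ⟨ha, le_refl _⟩
  have hζa₀ : ζ a₀ = 0 := by rw [hζ a₀ ha₀mem, intervalIntegral.integral_same, mul_zero]
  obtain ⟨K, hK, hKne, hKtrans⟩ := aux_transversal Γ hΓ
  -- continuity of the time-a₀ slice
  have hρa₀ : Continuous (ρ a₀) := by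
    rw [← continuousOn_univ]
    exact hcont.comp ((continuous_const.prodMk continuous_id).continuousOn)
      (fun x _ => Set.mk_mem_prod ha₀mem trivial)
  obtain ⟨xM, hxMK, hxMmax⟩ := hK.exists_isMaxOn hKne hρa₀.continuousOn
  obtain ⟨xm, hxmK, hxmmin⟩ := hK.exists_isMinOn hKne hρa₀.continuousOn
  have hxMg : ∀ y, ρ a₀ y ≤ ρ a₀ xM := by
    intro y
    obtain ⟨g, hg⟩ := hKtrans y
    rw [← hper a₀ ha₀mem g y]
    exact hxMmax hg
  have hxmg : ∀ y, ρ a₀ xm ≤ ρ a₀ y := by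
    intro y
    obtain ⟨g, hg⟩ := hKtrans y
    rw [← hper a₀ ha₀mem g y]
    exact hxmmin hg
  have hsup : (⨆ y, ρ a₀ y) = ρ a₀ xM :=
    le_antisymm (ciSup_le hxMg) (le_ciSup ⟨ρ a₀ xM, by rintro _ ⟨y, rfl⟩; exact hxMg y⟩ xM)
  have hinf : (⨅ y, ρ a₀ y) = ρ a₀ xm :=
    le_antisymm (ciInf_le ⟨ρ a₀ xm, by rintro _ ⟨y, rfl⟩; exact hxmg y⟩ xm) (le_ciInf hxmg)
  -- ζ is continuous on [b, a₀] for a₁ < b, and differentiable on Ioo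
  have hζcont : ∀ b, a₁ < b → ContinuousOn ζ (Set.Icc b a₀) := by
    intro b hb1
    rcases le_or_gt b a₀ with hble | hblt
    swap
    · rw [Set.Icc_eq_empty (by linarith)]; exact continuousOn_empty _
    have hbpos : 0 < b := lt_of_le_of_lt ha₁ hb1
    have hIccIoc : Set.Icc b a₀ ⊆ Set.Ioc a₁ a₀ := fun t ht => ⟨lt_of_lt_of_le hb1 ht.1, ht.2⟩
    have hγ' : ContinuousOn (fun t => γ t / t) (Set.Icc b a₀) := by
      apply (hγ.mono hIccIoc).div continuousOn_id
      intro t ht; exact ne_of_gt (lt_of_lt_of_le hbpos ht.1)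
    have hint : IntervalIntegrable (fun t => γ t / t) MeasureTheory.volume b a₀ := by
      apply ContinuousOn.intervalIntegrable; rwa [Set.uIcc_of_le hble]
    have h4 := intervalIntegral.continuousOn_primitive_interval' hint
      (by rw [Set.uIcc_of_le hble]; exact Set.right_mem_Icc.2 hble)
    rw [Set.uIcc_of_le hble] at h4
    have hcontZ : ContinuousOn (fun x => -((m:ℝ)-1) * ∫ t in a₀..x, γ t / t) (Set.Icc b a₀) :=
      continuousOn_const.mul h4
    exact hcontZ.congr (fun t ht => hζ t (hIccIoc ht))
  have hζd : ∀ c ∈ Set.Ioo a₁ a₀, HasDerivAt ζ (-((m:ℝ)-1) * (γ c / c)) c := by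
    intro c hc
    have hcpos : 0 < c := lt_of_le_of_lt ha₁ hc.1
    have hnhds : Set.Ioc a₁ a₀ ∈ 𝓝 c := Ioc_mem_nhds hc.1 hc.2
    have hfc : ContinuousAt (fun t => γ t / t) c :=
      (hγ.continuousAt hnhds).div continuousAt_id (ne_of_gt hcpos)
    have hint : IntervalIntegrable (fun t => γ t / t) MeasureTheory.volume a₀ c := by
      apply ContinuousOn.intervalIntegrable
      rw [Set.uIcc_of_ge hc.2.le]
      apply (hγ.mono ?_).div continuousOn_id ?_
      · exact fun t ht => ⟨lt_of_lt_of_le hc.1 ht.1, ht.2⟩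
      · exact fun t ht => ne_of_gt (lt_of_lt_of_le hcpos ht.1)
    have hmeas : StronglyMeasurableAtFilter (fun t => γ t / t) (𝓝 c) MeasureTheory.volume := by
      apply ContinuousOn.stronglyMeasurableAtFilter isOpen_Ioo ?_ c hc
      exact (hγ.mono Set.Ioo_subset_Ioc_self).div continuousOn_id
        (fun t ht => ne_of_gt (lt_of_le_of_lt ha₁ ht.1))
    have hZ := (intervalIntegral.integral_hasDerivAt_right hint hmeas hfc).const_mul (-((m:ℝ)-1))
    apply hZ.congr_of_eventuallyEq
    filter_upwards [Ioo_mem_nhds hc.1 hc.2] with t ht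
    exact hζ t (Set.Ioo_subset_Ioc_self ht)
  -- smoothness of spatial and time slices
  have hslice : ∀ c ∈ Set.Ioo a₁ a₀, ContDiff ℝ (⊤:ℕ∞) (ρ c) := by
    intro c hc
    rw [← contDiffOn_univ]
    exact hsmooth.comp ((contDiff_const.prodMk contDiff_id).contDiffOn)
      (fun x _ => Set.mk_mem_prod hc trivial)
  have htslice : ∀ c ∈ Set.Ioo a₁ a₀, ∀ xc, DifferentiableAt ℝ (fun t => ρ t xc) c := by
    intro c hc xc
    have h1 : ContDiffOn ℝ (⊤:ℕ∞) (fun t => ρ t xc) (Set.Ioo a₁ a₀) :=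
      hsmooth.comp ((contDiff_id.prodMk contDiff_const).contDiffOn)
        (fun t ht => Set.mk_mem_prod ht trivial)
    exact ((h1.contDiffAt (Ioo_mem_nhds hc.1 hc.2)).differentiableAt (by norm_num))
  -- upper bound key
  have key_up : ∀ b ∈ Set.Ioc a₁ a₀, ∀ x₀, ρ b x₀ * Real.exp (-ζ b) ≤ ρ a₀ xM := by
    intro b hb x₀
    rcases eq_or_lt_of_le hb.2 with heq | hblt
    · rw [heq, hζa₀]
      simpa using hxMg x₀
    by_contra hcon
    push_neg at hcon
    have hb1 : a₁ < b := hb.1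
    have hbpos : 0 < b := lt_of_le_of_lt ha₁ hb1
    set V := ρ b x₀ * Real.exp (-ζ b) with hV
    set M := ρ a₀ xM with hM
    set ε := (V - M) / (2 * (a₀ - b)) with hε
    have hεpos : 0 < ε := div_pos (by linarith) (by linarith)
    have hIccIoc : Set.Icc b a₀ ⊆ Set.Ioc a₁ a₀ := fun t ht => ⟨lt_of_lt_of_le hb1 ht.1, ht.2⟩
    set W : ℝ × EuclideanSpace ℝ (Fin n) → ℝ :=
      fun p => ρ p.1 p.2 * Real.exp (-ζ p.1) + ε * p.1 with hW
    have hWcont : ContinuousOn W (Set.Icc b a₀ ×ˢ K) := by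
      apply ContinuousOn.add
      · apply ContinuousOn.mul
        · exact hcont.mono (Set.prod_mono hIccIoc (Set.subset_univ _))
        · exact Real.continuous_exp.comp_continuousOn
            (((hζcont b hb1).comp continuousOn_fst (fun p hp => hp.1)).neg)
      · exact (continuous_const.mul continuous_fst).continuousOn
    obtain ⟨⟨c, xc⟩, hmem, hmaxW⟩ := (isCompact_Icc.prod hK).exists_isMaxOn
      (Set.Nonempty.prod ⟨b, Set.left_mem_Icc.2 hb.2⟩ hKne) hWcont
    have hcI : c ∈ Set.Icc b a₀ := hmem.1
    have hxcK : xc ∈ K := hmem.2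
    have hglob : ∀ a ∈ Set.Icc b a₀, ∀ y, W (a, y) ≤ W (c, xc) := by
      intro a haI y
      obtain ⟨g, hg⟩ := hKtrans y
      have h1 : W (a, y) = W (a, g • y) := by
        simp only [hW]; rw [hper a (hIccIoc haI) g y]
      rw [h1]
      exact hmaxW (Set.mk_mem_prod haI hg)
    have hWb : M + ε * a₀ < W (b, x₀) := by
      have h1 : W (b, x₀) = V + ε * b := rfl
      have hne : (2:ℝ) * (a₀ - b) ≠ 0 := by
        have : (0:ℝ) < a₀ - b := by linarith
        positivity
      have h3 : (V - M) / (2 * (a₀ - b)) * a₀ - (V - M) / (2 * (a₀ - b)) * b = (V - M) / 2 := by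
        rw [div_mul_eq_mul_div, div_mul_eq_mul_div, div_sub_div_same, ← mul_sub]
        rw [div_eq_div_iff hne two_ne_zero]
        ring
      rw [h1, hε]
      linarith [h3, hcon]
    have hca : c < a₀ := by
      rcases lt_or_eq_of_le hcI.2 with h | h
      · exact h
      · exfalso
        have h1 : W (c, xc) ≤ M + ε * a₀ := by
          have : W (c, xc) = ρ a₀ xc * Real.exp (-ζ a₀) + ε * a₀ := by rw [hW, h]
          rw [this, hζa₀]
          simp only [neg_zero, Real.exp_zero, mul_one]
          have := hxMg xc
          linarith
        have h2 := hglob b (Set.left_mem_Icc.2 hb.2) x₀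
        linarith
    have hcIoo : c ∈ Set.Ioo a₁ a₀ := ⟨lt_of_lt_of_le hb1 hcI.1, hca⟩
    have hcpos : 0 < c := lt_of_le_of_lt ha₁ hcIoo.1
    have hxcmax : ∀ y, ρ c y ≤ ρ c xc := by
      intro y
      have h1 := hglob c ⟨hcI.1, hca.le⟩ y
      simp only [hW] at h1
      have hexp : 0 < Real.exp (-ζ c) := Real.exp_pos _
      exact le_of_mul_le_mul_right (by linarith) hexp
    obtain ⟨-, hlap⟩ := aux_lap_le (hslice c hcIoo) hxcmax
    have hρc : 0 < ρ c xc := hpos c (Set.Ioo_subset_Ioc_self hcIoo) xc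
    have hρd : HasDerivAt (fun t => ρ t xc) (deriv (fun t => ρ t xc) c) c :=
      (htslice c hcIoo xc).hasDerivAt
    have hPDE := hpde c hcIoo xc
    set r := deriv (fun t => ρ t xc) c with hr
    have hF : 0 ≤ (3 / 2) * ‖gradient (ρ c) xc‖ ^ 2 / (ρ c xc) ^ 2 - lap (ρ c) xc / ρ c xc := by
      have h1 : 0 ≤ (3 / 2) * ‖gradient (ρ c) xc‖ ^ 2 / (ρ c xc) ^ 2 := by positivity
      have h2 : lap (ρ c) xc / ρ c xc ≤ 0 := div_nonpos_of_nonpos_of_nonneg hlap hρc.le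
      linarith
    have hhd : HasDerivAt (fun a => ρ a xc * Real.exp (-ζ a) + ε * a)
        (r * Real.exp (-ζ c) + ρ c xc * (Real.exp (-ζ c) * -(-((m:ℝ)-1) * (γ c / c))) + ε * 1)
        c :=
      (hρd.mul (((hζd c hcIoo).neg).exp)).add ((hasDerivAt_id c).const_mul ε)
    have hCF : 0 ≤ (((m:ℝ)-2) / (2 * c ^ 2)) *
        ((3 / 2) * ‖gradient (ρ c) xc‖ ^ 2 / (ρ c xc) ^ 2 - lap (ρ c) xc / ρ c xc) := by
      apply mul_nonneg _ hF
      apply div_nonneg (by linarith) (by positivity)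
    have hsum : 0 ≤ c * r + ((m:ℝ)-1) * γ c * ρ c xc := by
      rw [hr, hPDE]
      linarith
    have hDpos : 0 < r * Real.exp (-ζ c) +
        ρ c xc * (Real.exp (-ζ c) * -(-((m:ℝ)-1) * (γ c / c))) + ε * 1 := by
      have hDeq : r * Real.exp (-ζ c) +
          ρ c xc * (Real.exp (-ζ c) * -(-((m:ℝ)-1) * (γ c / c))) + ε * 1
          = Real.exp (-ζ c) * ((c * r + ((m:ℝ)-1) * γ c * ρ c xc) / c) + ε := by
        field_simp
      rw [hDeq]
      have := mul_nonneg (Real.exp_pos (-ζ c)).le (div_nonneg hsum hcpos.le)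
      linarith
    have hhmax : ∀ a ∈ Set.Icc c a₀,
        (fun a => ρ a xc * Real.exp (-ζ a) + ε * a) a ≤
        (fun a => ρ a xc * Real.exp (-ζ a) + ε * a) c := by
      intro a haI
      exact hglob a ⟨le_trans hcI.1 haI.1, haI.2⟩ xc
    have := aux_deriv_nonpos hca hhd hhmax
    linarith
  -- lower bound key
  have key_low : ∀ b ∈ Set.Ioc a₁ a₀, ∀ x₀, ρ a₀ xm ≤ ρ b x₀ * Real.exp (-ζ b) := by
    intro b hb x₀
    rcases eq_or_lt_of_le hb.2 with heq | hblt
    · rw [heq, hζa₀]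
      simpa using hxmg x₀
    by_contra hcon
    push_neg at hcon
    have hb1 : a₁ < b := hb.1
    have hbpos : 0 < b := lt_of_le_of_lt ha₁ hb1
    set V := ρ b x₀ * Real.exp (-ζ b) with hV
    set M := ρ a₀ xm with hM
    set ε := (M - V) / (2 * (a₀ - b)) with hε
    have hεpos : 0 < ε := div_pos (by linarith) (by linarith)
    have hIccIoc : Set.Icc b a₀ ⊆ Set.Ioc a₁ a₀ := fun t ht => ⟨lt_of_lt_of_le hb1 ht.1, ht.2⟩
    set W : ℝ × EuclideanSpace ℝ (Fin n) → ℝ :=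
      fun p => ρ p.1 p.2 * Real.exp (-ζ p.1) - ε * p.1 with hW
    have hWcont : ContinuousOn W (Set.Icc b a₀ ×ˢ K) := by
      apply ContinuousOn.sub
      · apply ContinuousOn.mul
        · exact hcont.mono (Set.prod_mono hIccIoc (Set.subset_univ _))
        · exact Real.continuous_exp.comp_continuousOn
            (((hζcont b hb1).comp continuousOn_fst (fun p hp => hp.1)).neg)
      · exact (continuous_const.mul continuous_fst).continuousOn
    obtain ⟨⟨c, xc⟩, hmem, hminW⟩ := (isCompact_Icc.prod hK).exists_isMinOn
      (Set.Nonempty.prod ⟨b, Set.left_mem_Icc.2 hb.2⟩ hKne) hWcont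
    have hcI : c ∈ Set.Icc b a₀ := hmem.1
    have hxcK : xc ∈ K := hmem.2
    have hglob : ∀ a ∈ Set.Icc b a₀, ∀ y, W (c, xc) ≤ W (a, y) := by
      intro a haI y
      obtain ⟨g, hg⟩ := hKtrans y
      have h1 : W (a, y) = W (a, g • y) := by
        simp only [hW]; rw [hper a (hIccIoc haI) g y]
      rw [h1]
      exact hminW (Set.mk_mem_prod haI hg)
    have hWb : W (b, x₀) < M - ε * a₀ := by
      have h1 : W (b, x₀) = V - ε * b := rfl
      have hne : (2:ℝ) * (a₀ - b) ≠ 0 := by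
        have : (0:ℝ) < a₀ - b := by linarith
        positivity
      have h3 : (M - V) / (2 * (a₀ - b)) * a₀ - (M - V) / (2 * (a₀ - b)) * b = (M - V) / 2 := by
        rw [div_mul_eq_mul_div, div_mul_eq_mul_div, div_sub_div_same, ← mul_sub]
        rw [div_eq_div_iff hne two_ne_zero]
        ring
      rw [h1, hε]
      linarith [h3, hcon]
    have hca : c < a₀ := by
      rcases lt_or_eq_of_le hcI.2 with h | h
      · exact h
      · exfalso
        have h1 : M - ε * a₀ ≤ W (c, xc) := by
          have : W (c, xc) = ρ a₀ xc * Real.exp (-ζ a₀) - ε * a₀ := by rw [hW, h]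
          rw [this, hζa₀]
          simp only [neg_zero, Real.exp_zero, mul_one]
          have := hxmg xc
          linarith
        have h2 := hglob b (Set.left_mem_Icc.2 hb.2) x₀
        linarith
    have hcIoo : c ∈ Set.Ioo a₁ a₀ := ⟨lt_of_lt_of_le hb1 hcI.1, hca⟩
    have hcpos : 0 < c := lt_of_le_of_lt ha₁ hcIoo.1
    have hxcmin : ∀ y, ρ c xc ≤ ρ c y := by
      intro y
      have h1 := hglob c ⟨hcI.1, hca.le⟩ y
      simp only [hW] at h1
      have hexp : 0 < Real.exp (-ζ c) := Real.exp_pos _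
      exact le_of_mul_le_mul_right (by linarith) hexp
    obtain ⟨hfd0, hlap⟩ := aux_lap_ge (hslice c hcIoo) hxcmin
    have hgrad0 : gradient (ρ c) xc = 0 := by
      rw [gradient, hfd0]
      simp
    have hρc : 0 < ρ c xc := hpos c (Set.Ioo_subset_Ioc_self hcIoo) xc
    have hρd : HasDerivAt (fun t => ρ t xc) (deriv (fun t => ρ t xc) c) c :=
      (htslice c hcIoo xc).hasDerivAt
    have hPDE := hpde c hcIoo xc
    set r := deriv (fun t => ρ t xc) c with hr
    have hF : (3 / 2) * ‖gradient (ρ c) xc‖ ^ 2 / (ρ c xc) ^ 2 - lap (ρ c) xc / ρ c xc ≤ 0 := by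
      rw [hgrad0]
      simp only [norm_zero]
      have h2 : 0 ≤ lap (ρ c) xc / ρ c xc := div_nonneg hlap hρc.le
      have h3 : (3 / 2) * (0:ℝ) ^ 2 / (ρ c xc) ^ 2 = 0 := by ring
      rw [h3]
      linarith
    have hhd : HasDerivAt (fun a => ρ a xc * Real.exp (-ζ a) - ε * a)
        (r * Real.exp (-ζ c) + ρ c xc * (Real.exp (-ζ c) * -(-((m:ℝ)-1) * (γ c / c))) - ε * 1)
        c :=
      (hρd.mul (((hζd c hcIoo).neg).exp)).sub ((hasDerivAt_id c).const_mul ε)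
    have hCF : (((m:ℝ)-2) / (2 * c ^ 2)) *
        ((3 / 2) * ‖gradient (ρ c) xc‖ ^ 2 / (ρ c xc) ^ 2 - lap (ρ c) xc / ρ c xc) ≤ 0 := by
      apply mul_nonpos_of_nonneg_of_nonpos _ hF
      apply div_nonneg (by linarith) (by positivity)
    have hsum : c * r + ((m:ℝ)-1) * γ c * ρ c xc ≤ 0 := by
      rw [hr, hPDE]
      linarith
    have hDneg : r * Real.exp (-ζ c) +
        ρ c xc * (Real.exp (-ζ c) * -(-((m:ℝ)-1) * (γ c / c))) - ε * 1 < 0 := by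
      have hDeq : r * Real.exp (-ζ c) +
          ρ c xc * (Real.exp (-ζ c) * -(-((m:ℝ)-1) * (γ c / c))) - ε * 1
          = Real.exp (-ζ c) * ((c * r + ((m:ℝ)-1) * γ c * ρ c xc) / c) - ε := by
        field_simp
      rw [hDeq]
      have := mul_nonpos_of_nonneg_of_nonpos (Real.exp_pos (-ζ c)).le
        (div_nonpos_of_nonpos_of_nonneg hsum hcpos.le)
      linarith
    have hhmin : ∀ a ∈ Set.Icc c a₀,
        (fun a => ρ a xc * Real.exp (-ζ a) - ε * a) c ≤
        (fun a => ρ a xc * Real.exp (-ζ a) - ε * a) a := by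
      intro a haI
      exact hglob a ⟨le_trans hcI.1 haI.1, haI.2⟩ xc
    have := aux_deriv_nonneg hca hhd hhmin
    linarith
  -- conclusion
  intro a haIoc x
  constructor
  · rw [hinf]
    have hk := key_low a haIoc x
    have h2 := mul_le_mul_of_nonneg_right hk (Real.exp_pos (ζ a)).le
    rwa [mul_assoc, ← Real.exp_add, neg_add_cancel, Real.exp_zero, mul_one] at h2
  · rw [hsup]
    have hk := key_up a haIoc x
    have h2 := mul_le_mul_of_nonneg_right hk (Real.exp_pos (ζ a)).le
    rwa [mul_assoc, ← Real.exp_add, neg_add_cancel, Real.exp_zero, mul_one] at h2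
end
end

section
/- Corollary 3.2, monotonicity of the inhomogeneity modulus: Let m ≥ 3 be an integer, n = m − 1, and let Γ be a subgroup of the isometry group of Euclidean space ℝⁿ whose orbit space ℝⁿ/Γ is compact. Let 0 ≤ a₁ < a₀, let γ : (a₁,a₀] → ℝ be continuous, and let ρ : (a₁,a₀] × ℝⁿ → ℝ be continuous, everywhere positive, infinitely differentiable on (a₁,a₀) × ℝⁿ, Γ-periodic in the spatial variable for every a, and satisfy a ∂ρ/∂a = −(m−1) γ(a) ρ + ((m−2)/(2a²)) ( (3/2) |∇ρ|²/ρ² − Δρ/ρ ) on (a₁,a₀) × ℝⁿ. Define ρ^{max}(a) := sup_{x∈ℝⁿ} ρ(a,x), ρ^{min}(a) := inf_{x∈ℝⁿ} ρ(a,x), and the inhomogeneity modulus Δ(a) := (ρ^{max}(a) − ρ^{min}(a))/ρ^{max}(a). Then Δ is nondecreasing on (a₁,a₀]; in particular 0 ≤ Δ(a) ≤ Δ(a₀) ≤ 1 for every a ∈ (a₁,a₀]. -/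
open scoped RealInnerProductSpace

open Set Filter Topology

noncomputable section

/- ### Auxiliary lemmas -/

lemma aux_secondDeriv_nonpos_of_isLocalMax {f f' : ℝ → ℝ} {L : ℝ}
    (hf : ∀ t, HasDerivAt f (f' t) t) (hf' : HasDerivAt f' L 0)
    (hmax : IsLocalMax f 0) : L ≤ 0 := by
  by_contra hL
  push_neg at hL
  have h0 : f' 0 = 0 := by
    have := hmax.deriv_eq_zero
    rwa [(hf 0).deriv] at this
  have hslope : Tendsto (slope f' 0) (𝓝[≠] 0) (𝓝 L) :=
    hasDerivAt_iff_tendsto_slope.1 hf'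
  have hpos : ∀ᶠ z in 𝓝[>] (0:ℝ), 0 < f' z := by
    have : ∀ᶠ z in 𝓝[>] (0:ℝ), 0 < slope f' 0 z := by
      apply (hslope.mono_left (nhdsWithin_mono _ fun z hz => ne_of_gt hz)).eventually
      exact eventually_gt_nhds hL
    filter_upwards [this, self_mem_nhdsWithin] with z hz hz0
    have hzpos : (0:ℝ) < z := hz0
    have : slope f' 0 z = z⁻¹ * f' z := by simp [slope, h0]
    rw [this] at hz
    by_contra hc
    push_neg at hc
    have : z⁻¹ * f' z ≤ 0 := mul_nonpos_of_nonneg_of_nonpos (inv_nonneg.2 hzpos.le) hc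
    linarith
  rw [eventually_nhdsWithin_iff] at hpos
  obtain ⟨δ₁, hδ₁, h₁⟩ := Metric.eventually_nhds_iff.1 hpos
  obtain ⟨δ₂, hδ₂, h₂⟩ := Metric.eventually_nhds_iff.1 hmax
  set δ := min δ₁ δ₂ / 2 with hδdef
  have hδpos : 0 < δ := by positivity
  have hmono : StrictMonoOn f (Icc 0 δ) := by
    apply strictMonoOn_of_deriv_pos (convex_Icc _ _)
    · exact fun t _ => (hf t).continuousAt.continuousWithinAt
    · intro t ht
      rw [interior_Icc] at ht
      rw [(hf t).deriv]
      apply h₁ ?_ ht.1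
      rw [Real.dist_eq, sub_zero, abs_of_pos ht.1]
      calc t < δ := ht.2
        _ ≤ δ₁ := by rw [hδdef]; nlinarith [min_le_left δ₁ δ₂]
  have h3 : f 0 < f δ :=
    hmono (left_mem_Icc.2 hδpos.le) (right_mem_Icc.2 hδpos.le) hδpos
  have h4 : f δ ≤ f 0 := by
    apply h₂
    rw [Real.dist_eq, sub_zero, abs_of_pos hδpos]
    rw [hδdef]; nlinarith [min_le_right δ₁ δ₂]
  linarith

lemma aux_secondDeriv_nonneg_of_isLocalMin {f f' : ℝ → ℝ} {L : ℝ}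
    (hf : ∀ t, HasDerivAt f (f' t) t) (hf' : HasDerivAt f' L 0)
    (hmin : IsLocalMin f 0) : 0 ≤ L := by
  have := aux_secondDeriv_nonpos_of_isLocalMax (f := -f) (f' := -f')
    (fun t => (hf t).neg) hf'.neg hmin.neg
  linarith

section LapLemmas
variable {n : ℕ} {f : EuclideanSpace ℝ (Fin n) → ℝ} {x v : EuclideanSpace ℝ (Fin n)}

lemma aux_line_hasDerivAt (x v : EuclideanSpace ℝ (Fin n)) (t : ℝ) :
    HasDerivAt (fun s : ℝ => x + s • v) v t := by
  simpa using ((hasDerivAt_id t).smul_const v).const_add x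

lemma aux_dirDeriv_hasDerivAt (hf : ContDiff ℝ (⊤:ℕ∞) f) (t : ℝ) :
    HasDerivAt (fun s : ℝ => f (x + s • v)) (fderiv ℝ f (x + t • v) v) t :=
  (hf.differentiable (by simp) (x + t • v)).hasFDerivAt.comp_hasDerivAt t
    (aux_line_hasDerivAt x v t)

lemma aux_dirDeriv2_hasDerivAt (hf : ContDiff ℝ (⊤:ℕ∞) f) (t : ℝ) :
    HasDerivAt (fun s : ℝ => fderiv ℝ f (x + s • v) v)
      (fderiv ℝ (fun y => fderiv ℝ f y v) (x + t • v) v) t := by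
  have hD : Differentiable ℝ (fun y => fderiv ℝ f y v) := by
    have h1 : ContDiff ℝ (⊤:ℕ∞) (fderiv ℝ f) := hf.fderiv_right (by exact_mod_cast le_top)
    exact ((ContinuousLinearMap.apply ℝ ℝ v).contDiff.comp h1).differentiable
      (by simp)
  exact (hD (x + t • v)).hasFDerivAt.comp_hasDerivAt t (aux_line_hasDerivAt x v t)

lemma aux_isMaxOn_lap_nonpos (hf : ContDiff ℝ (⊤:ℕ∞) f) (hx : IsMaxOn f univ x) :
    lap f x ≤ 0 := by
  apply Finset.sum_nonpos
  intro i _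
  set v := EuclideanSpace.single i (1:ℝ)
  have key : fderiv ℝ (fun y => fderiv ℝ f y v) (x + (0:ℝ) • v) v ≤ 0 := by
    apply aux_secondDeriv_nonpos_of_isLocalMax (f := fun s : ℝ => f (x + s • v))
      (f' := fun s : ℝ => fderiv ℝ f (x + s • v) v)
      (fun t => aux_dirDeriv_hasDerivAt hf t) (aux_dirDeriv2_hasDerivAt hf 0)
    apply Filter.Eventually.of_forall
    intro t
    simpa using hx (mem_univ (x + t • v))
  simpa using key

lemma aux_isMinOn_lap_nonneg (hf : ContDiff ℝ (⊤:ℕ∞) f) (hx : IsMinOn f univ x) :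
    0 ≤ lap f x := by
  apply Finset.sum_nonneg
  intro i _
  set v := EuclideanSpace.single i (1:ℝ)
  have key : 0 ≤ fderiv ℝ (fun y => fderiv ℝ f y v) (x + (0:ℝ) • v) v := by
    apply aux_secondDeriv_nonneg_of_isLocalMin (f := fun s : ℝ => f (x + s • v))
      (f' := fun s : ℝ => fderiv ℝ f (x + s • v) v)
      (fun t => aux_dirDeriv_hasDerivAt hf t) (aux_dirDeriv2_hasDerivAt hf 0)
    apply Filter.Eventually.of_forall
    intro t
    simpa using hx (mem_univ (x + t • v))
  simpa using key

lemma aux_isMinOn_gradient_eq_zero (hx : IsMinOn f univ x) :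
    gradient f x = 0 := by
  have h : fderiv ℝ f x = 0 := (hx.isLocalMin univ_mem).fderiv_eq_zero
  simp [gradient, h]

end LapLemmas

section Saturate
variable {n : ℕ} (Γ : Subgroup (EuclideanSpace ℝ (Fin n) ≃ᵢ EuclideanSpace ℝ (Fin n)))

instance : ContinuousConstSMul Γ (EuclideanSpace ℝ (Fin n)) :=
  ⟨fun g => (g : EuclideanSpace ℝ (Fin n) ≃ᵢ EuclideanSpace ℝ (Fin n)).continuous⟩

lemma aux_exists_compact_saturating
    (hΓ : CompactSpace (Quotient (MulAction.orbitRel Γ (EuclideanSpace ℝ (Fin n))))) :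
    ∃ K : Set (EuclideanSpace ℝ (Fin n)), IsCompact K ∧ K.Nonempty ∧
      ∀ x, ∃ k ∈ K, ∃ g : Γ, g • k = x := by
  set E := EuclideanSpace ℝ (Fin n)
  set π : E → Quotient (MulAction.orbitRel Γ E) := Quotient.mk _
  have hopen : IsOpenMap π := MulAction.isOpenQuotientMap_quotientMk.isOpenMap
  have hcover : univ ⊆ ⋃ x : E, π '' Metric.ball x 1 := by
    intro q _
    obtain ⟨y, rfl⟩ := Quotient.mk_surjective q
    exact mem_iUnion.2 ⟨y, ⟨y, Metric.mem_ball_self one_pos, rfl⟩⟩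
  obtain ⟨s, hs⟩ := isCompact_univ.elim_finite_subcover (fun x : E => π '' Metric.ball x 1)
    (fun x => hopen _ Metric.isOpen_ball) hcover
  refine ⟨(⋃ x ∈ s, Metric.closedBall x 1) ∪ {0}, ?_, ⟨0, by simp⟩, ?_⟩
  · exact ((s.isCompact_biUnion (fun x _ => isCompact_closedBall x 1))).union isCompact_singleton
  · intro y
    have : π y ∈ ⋃ x ∈ s, π '' Metric.ball x 1 := hs (mem_univ _)
    obtain ⟨x, hxs, u, hu, huy⟩ := by
      simpa only [mem_iUnion, exists_prop] using this
    have : (MulAction.orbitRel Γ E) u y := Quotient.exact' huy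
    rw [MulAction.orbitRel_apply, MulAction.mem_orbit_iff] at this
    obtain ⟨g, hg⟩ := this
    exact ⟨u, Or.inl (mem_iUnion₂.2 ⟨x, hxs, Metric.ball_subset_closedBall hu⟩), g⁻¹,
      by rw [← hg, inv_smul_smul]⟩

end Saturate
/-- Corollary 3.2, monotonicity of the inhomogeneity modulus
`Δ(a) = (ρ^{max}(a) − ρ^{min}(a))/ρ^{max}(a)`: it is nondecreasing in the scale factor,
and in particular `0 ≤ Δ(a) ≤ Δ(a₀) ≤ 1` for all `a ∈ (a₁,a₀]`. -/
theorem inhomogeneity_modulus_monotone (m : ℕ) (hm : 3 ≤ m) (n : ℕ) (hn : n = m - 1)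
    (Γ : Subgroup (EuclideanSpace ℝ (Fin n) ≃ᵢ EuclideanSpace ℝ (Fin n)))
    (hΓ : CompactSpace (Quotient (MulAction.orbitRel Γ (EuclideanSpace ℝ (Fin n)))))
    (a₁ a₀ : ℝ) (ha₁ : 0 ≤ a₁) (ha : a₁ < a₀)
    (γ : ℝ → ℝ) (hγ : ContinuousOn γ (Set.Ioc a₁ a₀))
    (ρ : ℝ → EuclideanSpace ℝ (Fin n) → ℝ)
    (hcont : ContinuousOn (fun p : ℝ × EuclideanSpace ℝ (Fin n) => ρ p.1 p.2)
      (Set.Ioc a₁ a₀ ×ˢ Set.univ))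
    (hpos : ∀ a ∈ Set.Ioc a₁ a₀, ∀ x, 0 < ρ a x)
    (hsmooth : ContDiffOn ℝ (⊤ : ℕ∞) (fun p : ℝ × EuclideanSpace ℝ (Fin n) => ρ p.1 p.2)
      (Set.Ioo a₁ a₀ ×ˢ Set.univ))
    (hper : ∀ a ∈ Set.Ioc a₁ a₀, ∀ g : Γ, ∀ x, ρ a (g • x) = ρ a x)
    (hpde : ∀ a ∈ Set.Ioo a₁ a₀, ∀ x,
      a * deriv (fun t => ρ t x) a =
        -((m : ℝ) - 1) * γ a * ρ a x +
          (((m : ℝ) - 2) / (2 * a ^ 2)) *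
            ((3 / 2) * ‖gradient (ρ a) x‖ ^ 2 / (ρ a x) ^ 2 - lap (ρ a) x / ρ a x)) :
    MonotoneOn (fun a => ((⨆ x, ρ a x) - ⨅ x, ρ a x) / ⨆ x, ρ a x) (Set.Ioc a₁ a₀) ∧
    ∀ a ∈ Set.Ioc a₁ a₀,
      (0 ≤ ((⨆ x, ρ a x) - ⨅ x, ρ a x) / ⨆ x, ρ a x) ∧
      (((⨆ x, ρ a x) - ⨅ x, ρ a x) / ⨆ x, ρ a x
        ≤ ((⨆ x, ρ a₀ x) - ⨅ x, ρ a₀ x) / ⨆ x, ρ a₀ x) ∧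
      (((⨆ x, ρ a₀ x) - ⨅ x, ρ a₀ x) / ⨆ x, ρ a₀ x ≤ 1) := by
  have hm3 : (3:ℝ) ≤ (m:ℝ) := by exact_mod_cast hm
  obtain ⟨K, hK, hKne, hKsat⟩ := aux_exists_compact_saturating Γ hΓ
  set F : ℝ × EuclideanSpace ℝ (Fin n) → ℝ := fun p => ρ p.1 p.2 with hF
  set Ms : ℝ → ℝ := fun a => ⨆ x, ρ a x with hMs
  set Mi : ℝ → ℝ := fun a => ⨅ x, ρ a x with hMi
  have hρc : ∀ a ∈ Ioc a₁ a₀, Continuous (ρ a) := by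
    intro a haI
    rw [← continuousOn_univ]
    exact hcont.comp ((continuous_const.prodMk continuous_id).continuousOn)
      (fun x _ => ⟨haI, mem_univ x⟩)
  have hmaxx : ∀ a ∈ Ioc a₁ a₀, ∃ xm ∈ K, IsMaxOn (ρ a) univ xm ∧ Ms a = ρ a xm := by
    intro a haI
    obtain ⟨xm, hxmK, hxm⟩ := hK.exists_isMaxOn hKne ((hρc a haI).continuousOn)
    have hMax : IsMaxOn (ρ a) univ xm := by
      intro y _
      obtain ⟨k, hkK, g, rfl⟩ := hKsat y
      calc ρ a (g • k) = ρ a k := hper a haI g k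
        _ ≤ ρ a xm := hxm hkK
    refine ⟨xm, hxmK, hMax, ?_⟩
    exact IsGreatest.csSup_eq ⟨mem_range_self xm, fun y ⟨z, hz⟩ => hz ▸ hMax (mem_univ z)⟩
  have hminx : ∀ a ∈ Ioc a₁ a₀, ∃ xm ∈ K, IsMinOn (ρ a) univ xm ∧ Mi a = ρ a xm := by
    intro a haI
    obtain ⟨xm, hxmK, hxm⟩ := hK.exists_isMinOn hKne ((hρc a haI).continuousOn)
    have hMin : IsMinOn (ρ a) univ xm := by
      intro y _
      obtain ⟨k, hkK, g, rfl⟩ := hKsat y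
      calc ρ a xm ≤ ρ a k := hxm hkK
        _ = ρ a (g • k) := (hper a haI g k).symm
    refine ⟨xm, hxmK, hMin, ?_⟩
    exact IsLeast.csInf_eq ⟨mem_range_self xm, fun y ⟨z, hz⟩ => hz ▸ hMin (mem_univ z)⟩
  have hMipos : ∀ a ∈ Ioc a₁ a₀, 0 < Mi a := by
    intro a haI
    obtain ⟨xm, _, _, hEq⟩ := hminx a haI
    rw [hEq]; exact hpos a haI xm
  have hMspos : ∀ a ∈ Ioc a₁ a₀, 0 < Ms a := by
    intro a haI
    obtain ⟨xm, _, _, hEq⟩ := hmaxx a haI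
    rw [hEq]; exact hpos a haI xm
  have hMile : ∀ a ∈ Ioc a₁ a₀, Mi a ≤ Ms a := by
    intro a haI
    obtain ⟨xm, _, hOn, hEq⟩ := hmaxx a haI
    obtain ⟨ym, _, hOn', hEq'⟩ := hminx a haI
    rw [hEq, hEq']
    exact hOn (mem_univ ym)
  -- continuity of Ms and Mi
  have hcontM : ∀ b ∈ Ioc a₁ a₀, ContinuousOn Ms (Icc b a₀) ∧ ContinuousOn Mi (Icc b a₀) := by
    intro b hb
    have hsub : Icc b a₀ ⊆ Ioc a₁ a₀ := fun t ht => ⟨lt_of_lt_of_le hb.1 ht.1, ht.2⟩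
    have hScomp : IsCompact (Icc b a₀ ×ˢ K) := isCompact_Icc.prod hK
    have hScont : ContinuousOn F (Icc b a₀ ×ˢ K) :=
      hcont.mono (prod_mono hsub (subset_univ K))
    have hUC := hScomp.uniformContinuousOn_of_continuous hScont
    rw [Metric.uniformContinuousOn_iff] at hUC
    have claim : ∀ ε > (0:ℝ), ∃ δ > (0:ℝ), ∀ s ∈ Icc b a₀, ∀ t ∈ Icc b a₀, dist s t < δ →
        |Ms s - Ms t| < ε ∧ |Mi s - Mi t| < ε := by
      intro ε hε
      obtain ⟨δ, hδ, hδ'⟩ := hUC ε hε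
      refine ⟨δ, hδ, ?_⟩
      intro s hs t ht hst
      have hptwise : ∀ x ∈ K, |ρ s x - ρ t x| < ε := by
        intro x hx
        have hd : dist ((s, x) : ℝ × EuclideanSpace ℝ (Fin n)) ((t, x) : ℝ × EuclideanSpace ℝ (Fin n)) = dist s t := by
          simp [Prod.dist_eq, dist_self, max_eq_left dist_nonneg]
        have := hδ' (s, x) ⟨hs, hx⟩ (t, x) ⟨ht, hx⟩ (by rw [hd]; exact hst)
        rwa [Real.dist_eq] at this
      obtain ⟨xs, hxsK, hxsOn, hxsEq⟩ := hmaxx s (hsub hs)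
      obtain ⟨xt, hxtK, hxtOn, hxtEq⟩ := hmaxx t (hsub ht)
      obtain ⟨ys, hysK, hysOn, hysEq⟩ := hminx s (hsub hs)
      obtain ⟨yt, hytK, hytOn, hytEq⟩ := hminx t (hsub ht)
      constructor
      · rw [abs_sub_lt_iff]
        constructor
        · have h1 : Ms s = ρ s xs := hxsEq
          have h2 : ρ t xs ≤ Ms t := by rw [hxtEq]; exact hxtOn (mem_univ xs)
          have := (abs_sub_lt_iff.1 (hptwise xs hxsK)).1
          linarith
        · have h1 : Ms t = ρ t xt := hxtEq
          have h2 : ρ s xt ≤ Ms s := by rw [hxsEq]; exact hxsOn (mem_univ xt)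
          have := (abs_sub_lt_iff.1 (hptwise xt hxtK)).2
          linarith
      · rw [abs_sub_lt_iff]
        constructor
        · have h1 : Mi s ≤ ρ s yt := by rw [hysEq]; exact hysOn (mem_univ yt)
          have h2 : Mi t = ρ t yt := hytEq
          have := (abs_sub_lt_iff.1 (hptwise yt hytK)).1
          linarith
        · have h1 : Mi t ≤ ρ t ys := by rw [hytEq]; exact hytOn (mem_univ ys)
          have h2 : Mi s = ρ s ys := hysEq
          have := (abs_sub_lt_iff.1 (hptwise ys hysK)).2
          linarith
    constructor
    · rw [Metric.continuousOn_iff]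
      intro x hx ε hε
      obtain ⟨δ, hδ, hcl⟩ := claim ε hε
      exact ⟨δ, hδ, fun y hy hyx => by
        rw [Real.dist_eq]; exact (hcl y hy x hx hyx).1⟩
    · rw [Metric.continuousOn_iff]
      intro x hx ε hε
      obtain ⟨δ, hδ, hcl⟩ := claim ε hε
      exact ⟨δ, hδ, fun y hy hyx => by
        rw [Real.dist_eq]; exact (hcl y hy x hx hyx).2⟩
  have hIooIoc : Ioo a₁ a₀ ⊆ Ioc a₁ a₀ := Ioo_subset_Ioc_self
  have hFdiff : ∀ a ∈ Ioo a₁ a₀, ∀ x : EuclideanSpace ℝ (Fin n),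
      HasDerivAt (fun t => ρ t x) (deriv (fun t => ρ t x) a) a := by
    intro a haI x
    have hop : IsOpen (Ioo a₁ a₀ ×ˢ (univ : Set (EuclideanSpace ℝ (Fin n)))) := isOpen_Ioo.prod isOpen_univ
    have hFd : DifferentiableAt ℝ F (a, x) :=
      (hsmooth.differentiableOn (by simp)).differentiableAt
        (hop.mem_nhds ⟨haI, mem_univ x⟩)
    exact (hFd.comp a (differentiableAt_id.prodMk (differentiableAt_const x))).hasDerivAt
  have hsm : ∀ a ∈ Ioo a₁ a₀, ContDiff ℝ (⊤:ℕ∞) (ρ a) := by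
    intro a haI
    rw [← contDiffOn_univ]
    exact hsmooth.comp ((contDiff_const.prodMk contDiff_id).contDiffOn)
      (fun x _ => ⟨haI, mem_univ x⟩)
  set c : ℝ → ℝ := fun t => -(((m:ℝ) - 1) * γ t) / t with hc
  have hlogmax : ∀ a ∈ Ioo a₁ a₀, ∀ xm, IsMaxOn (ρ a) univ xm →
      HasDerivAt (fun t => Real.log (ρ t xm)) (deriv (fun t => ρ t xm) a / ρ a xm) a ∧
      c a ≤ deriv (fun t => ρ t xm) a / ρ a xm := by
    intro a haI xm hxm
    have haIoc := hIooIoc haI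
    have hρpos := hpos a haIoc xm
    have h1 := hFdiff a haI xm
    refine ⟨h1.log (ne_of_gt hρpos), ?_⟩
    have hpde' := hpde a haI xm
    have hapos : 0 < a := lt_of_le_of_lt ha₁ haI.1
    have hlap : lap (ρ a) xm ≤ 0 := aux_isMaxOn_lap_nonpos (hsm a haI) hxm
    have hC : 0 ≤ ((m:ℝ) - 2) / (2 * a ^ 2) := by
      apply div_nonneg (by linarith) (by positivity)
    have hS : 0 ≤ (3 / 2) * ‖gradient (ρ a) xm‖ ^ 2 / (ρ a xm) ^ 2 - lap (ρ a) xm / ρ a xm := by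
      have h2 : 0 ≤ (3 / 2) * ‖gradient (ρ a) xm‖ ^ 2 / (ρ a xm) ^ 2 := by positivity
      have h3 : lap (ρ a) xm / ρ a xm ≤ 0 := div_nonpos_of_nonpos_of_nonneg hlap hρpos.le
      linarith
    have key : -(((m:ℝ) - 1) * γ a) * ρ a xm ≤ a * deriv (fun t => ρ t xm) a := by
      rw [hpde']
      nlinarith [mul_nonneg hC hS]
    rw [hc]
    rw [div_le_div_iff₀ hapos hρpos]
    linarith [key]
  have hlogmin : ∀ a ∈ Ioo a₁ a₀, ∀ xm, IsMinOn (ρ a) univ xm →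
      HasDerivAt (fun t => Real.log (ρ t xm)) (deriv (fun t => ρ t xm) a / ρ a xm) a ∧
      deriv (fun t => ρ t xm) a / ρ a xm ≤ c a := by
    intro a haI xm hxm
    have haIoc := hIooIoc haI
    have hρpos := hpos a haIoc xm
    have h1 := hFdiff a haI xm
    refine ⟨h1.log (ne_of_gt hρpos), ?_⟩
    have hpde' := hpde a haI xm
    have hapos : 0 < a := lt_of_le_of_lt ha₁ haI.1
    have hlap : 0 ≤ lap (ρ a) xm := aux_isMinOn_lap_nonneg (hsm a haI) hxm
    have hgrad : gradient (ρ a) xm = 0 := aux_isMinOn_gradient_eq_zero hxm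
    have hC : 0 ≤ ((m:ℝ) - 2) / (2 * a ^ 2) := by
      apply div_nonneg (by linarith) (by positivity)
    have hS : (3 / 2) * ‖gradient (ρ a) xm‖ ^ 2 / (ρ a xm) ^ 2 - lap (ρ a) xm / ρ a xm ≤ 0 := by
      have h2 : (3 / 2) * ‖gradient (ρ a) xm‖ ^ 2 / (ρ a xm) ^ 2 = 0 := by
        rw [hgrad]; simp
      have h3 : 0 ≤ lap (ρ a) xm / ρ a xm := div_nonneg hlap hρpos.le
      linarith
    have key : a * deriv (fun t => ρ t xm) a ≤ -(((m:ℝ) - 1) * γ a) * ρ a xm := by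
      rw [hpde']
      nlinarith [mul_nonneg hC (neg_nonneg.2 hS)]
    rw [hc]
    rw [div_le_div_iff₀ hρpos hapos]
    linarith [key]
  -- the key comparison
  have hGmono : ∀ aa ∈ Ioc a₁ a₀, ∀ bb ∈ Ioc a₁ a₀, aa ≤ bb →
      Real.log (Mi bb) - Real.log (Ms bb) ≤ Real.log (Mi aa) - Real.log (Ms aa) := by
    intro aa haa bb hbb hab
    set G : ℝ → ℝ := fun t => Real.log (Mi t) - Real.log (Ms t) with hG
    have hsubI : Icc aa bb ⊆ Ioc a₁ a₀ := fun t ht =>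
      ⟨lt_of_lt_of_le haa.1 ht.1, le_trans ht.2 hbb.2⟩
    have hGcont : ContinuousOn G (Icc aa bb) := by
      have hsub2 : Icc aa bb ⊆ Icc aa a₀ := Icc_subset_Icc_right hbb.2
      have h1 := ((hcontM aa haa).1).mono hsub2
      have h2 := ((hcontM aa haa).2).mono hsub2
      exact (h2.log (fun t ht => ne_of_gt (hMipos t (hsubI ht)))).sub
        (h1.log (fun t ht => ne_of_gt (hMspos t (hsubI ht))))
    have bound : ∀ x ∈ Ico aa bb, ∀ r, (0:ℝ) < r → ∃ᶠ z in 𝓝[>] x, slope G x z < r := by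
      intro x hx r hr
      have hxIoo : x ∈ Ioo a₁ a₀ := ⟨lt_of_lt_of_le haa.1 hx.1, lt_of_lt_of_le hx.2 hbb.2⟩
      have hxIoc := hIooIoc hxIoo
      obtain ⟨xmin, _, hxminOn, hxminEq⟩ := hminx x hxIoc
      obtain ⟨xmax, _, hxmaxOn, hxmaxEq⟩ := hmaxx x hxIoc
      obtain ⟨hu, hDu⟩ := hlogmin x hxIoo xmin hxminOn
      obtain ⟨hw, hDw⟩ := hlogmax x hxIoo xmax hxmaxOn
      set u : ℝ → ℝ := fun t => Real.log (ρ t xmin) with hudef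
      set w : ℝ → ℝ := fun t => Real.log (ρ t xmax) with hwdef
      set Du := deriv (fun t => ρ t xmin) x / ρ x xmin with hDudef
      set Dw := deriv (fun t => ρ t xmax) x / ρ x xmax with hDwdef
      have hu' : Tendsto (slope u x) (𝓝[>] x) (𝓝 Du) :=
        (hasDerivAt_iff_tendsto_slope.1 hu).mono_left
          (nhdsWithin_mono _ (fun z hz => ne_of_gt hz))
      have hw' : Tendsto (slope w x) (𝓝[>] x) (𝓝 Dw) :=
        (hasDerivAt_iff_tendsto_slope.1 hw).mono_left
          (nhdsWithin_mono _ (fun z hz => ne_of_gt hz))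
      have e1 : ∀ᶠ z in 𝓝[>] x, slope u x z < Du + r/2 :=
        hu'.eventually_lt_const (by linarith)
      have e2 : ∀ᶠ z in 𝓝[>] x, Dw - r/2 < slope w x z :=
        hw'.eventually_const_lt (by linarith)
      have e3 : ∀ᶠ z in 𝓝[>] x, z ∈ Ioc a₁ a₀ := by
        have hmem : Ioo a₁ a₀ ∈ 𝓝 x := isOpen_Ioo.mem_nhds hxIoo
        exact eventually_nhdsWithin_of_eventually_nhds
          (eventually_of_mem hmem (fun z hz => hIooIoc hz))
      apply ((e1.and (e2.and (e3.and self_mem_nhdsWithin))).mono ?_).frequently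
      rintro z ⟨h1, h2, h3, (h4 : z ∈ Ioi x)⟩
      have hzx : (0:ℝ) < z - x := sub_pos.2 h4
      obtain ⟨pz, _, hpzOn, hpzEq⟩ := hminx z h3
      obtain ⟨qz, _, hqzOn, hqzEq⟩ := hmaxx z h3
      have hlog1 : Real.log (Mi z) ≤ u z := by
        rw [hudef]
        apply Real.log_le_log (hMipos z h3)
        rw [hpzEq]; exact hpzOn (mem_univ xmin)
      have hlog2 : w z ≤ Real.log (Ms z) := by
        rw [hwdef]
        apply Real.log_le_log (hpos z h3 xmax)
        rw [hqzEq]; exact hqzOn (mem_univ xmax)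
      have hlog3 : u x = Real.log (Mi x) := by rw [hudef, hxminEq]
      have hlog4 : w x = Real.log (Ms x) := by rw [hwdef, hxmaxEq]
      have hnum : G z - G x ≤ (u z - u x) - (w z - w x) := by
        rw [hG]
        simp only []
        linarith
      have hslopes : slope G x z ≤ slope u x z - slope w x z := by
        rw [slope_def_field, slope_def_field, slope_def_field, div_sub_div_same]
        exact div_le_div_of_nonneg_right hnum hzx.le
      have : slope u x z - slope w x z < r := by
        have := hDu.trans hDw
        linarith
      linarith
    have := image_le_of_liminf_slope_right_le_deriv_boundary (f := G) (a := aa) (b := bb)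
      (B := fun _ => G aa) (B' := fun _ => (0:ℝ)) hGcont (le_refl (G aa)) continuousOn_const
      (fun x _ => hasDerivWithinAt_const x _ (G aa)) bound
    exact this (right_mem_Icc.2 hab)
  have hMono : MonotoneOn (fun a => (Ms a - Mi a) / Ms a) (Ioc a₁ a₀) := by
    intro aa haa bb hbb hab
    show (Ms aa - Mi aa) / Ms aa ≤ (Ms bb - Mi bb) / Ms bb
    have h := hGmono aa haa bb hbb hab
    have h1 : Mi bb / Ms bb ≤ Mi aa / Ms aa := by
      rw [← Real.log_le_log_iff (div_pos (hMipos bb hbb) (hMspos bb hbb))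
        (div_pos (hMipos aa haa) (hMspos aa haa)),
        Real.log_div (ne_of_gt (hMipos bb hbb)) (ne_of_gt (hMspos bb hbb)),
        Real.log_div (ne_of_gt (hMipos aa haa)) (ne_of_gt (hMspos aa haa))]
      exact h
    have e1 : (Ms aa - Mi aa) / Ms aa = 1 - Mi aa / Ms aa := by
      rw [sub_div, div_self (ne_of_gt (hMspos aa haa))]
    have e2 : (Ms bb - Mi bb) / Ms bb = 1 - Mi bb / Ms bb := by
      rw [sub_div, div_self (ne_of_gt (hMspos bb hbb))]
    rw [e1, e2]
    linarith
  refine ⟨hMono, ?_⟩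
  intro a haI
  have ha0 : a₀ ∈ Ioc a₁ a₀ := ⟨ha, le_refl _⟩
  refine ⟨?_, ?_, ?_⟩
  · show 0 ≤ (Ms a - Mi a) / Ms a
    exact div_nonneg (sub_nonneg.2 (hMile a haI)) (hMspos a haI).le
  · show (Ms a - Mi a) / Ms a ≤ (Ms a₀ - Mi a₀) / Ms a₀
    exact hMono haI ha0 haI.2
  · show (Ms a₀ - Mi a₀) / Ms a₀ ≤ 1
    rw [div_le_one (hMspos a₀ ha0)]
    linarith [hMipos a₀ ha0]
end
end

section
/- Corollary 3.2, bounds on the density contrast: Let m ≥ 3 be an integer, n = m − 1, L₀ > 0, and let ρ : (a₁,a₀] × ℝⁿ → ℝ (with 0 ≤ a₁ < a₀) be continuous, everywhere positive, infinitely differentiable on (a₁,a₀) × ℝⁿ, periodic with period L₀ in each spatial coordinate for every a, and satisfy a ∂ρ/∂a = −(m−1) γ(a) ρ + ((m−2)/(2a²)) ( (3/2) |∇ρ|²/ρ² − Δρ/ρ ) on (a₁,a₀) × ℝⁿ, where γ : (a₁,a₀] → ℝ is continuous. Define, over the cell K = [0,L₀]ⁿ: ρ^{max}(a) := max_{x∈K}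 ρ(a,x), ρ^{min}(a) := min_{x∈K} ρ(a,x), the mean ρ̄(a) := L₀^{−n} ∫_K ρ(a,x) dx, the inhomogeneity modulus Δ(a) := (ρ^{max}(a) − ρ^{min}(a))/ρ^{max}(a), the density contrast δ(a,x) := (ρ(a,x) − ρ̄(a))/ρ̄(a), and Δ₀ := Δ(a₀). Then Δ(a) ≤ Δ₀ < 1 and, for every a ∈ (a₁,a₀] and x ∈ ℝⁿ, −Δ₀ ≤ −Δ(a) ≤ δ(a,x) ≤ Δ(a)/(1−Δ(a)) ≤ Δ₀/(1−Δ₀). -/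
open scoped RealInnerProductSpace

noncomputable section

open MeasureTheory

/-- The cubic cosmological cell `K = [0,L₀]ⁿ`. -/
def cell (n : ℕ) (L₀ : ℝ) : Set (EuclideanSpace ℝ (Fin n)) :=
  {x | ∀ i, x i ∈ Set.Icc (0 : ℝ) L₀}

/-- The maximum of the energy density over the cell. -/
def rhoMax {n : ℕ} (L₀ : ℝ) (ρ : ℝ → EuclideanSpace ℝ (Fin n) → ℝ) (a : ℝ) : ℝ :=
  sSup (ρ a '' cell n L₀)

/-- The minimum of the energy density over the cell. -/
def rhoMin {n : ℕ} (L₀ : ℝ) (ρ : ℝ → EuclideanSpace ℝ (Fin n) → ℝ) (a : ℝ) : ℝ :=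
  sInf (ρ a '' cell n L₀)

/-- The mean of the energy density over the cell. -/
def rhoMean {n : ℕ} (L₀ : ℝ) (ρ : ℝ → EuclideanSpace ℝ (Fin n) → ℝ) (a : ℝ) : ℝ :=
  (L₀ ^ n)⁻¹ * ∫ x in cell n L₀, ρ a x

/-- The inhomogeneity modulus `Δ(a) = (ρ^{max}(a) − ρ^{min}(a))/ρ^{max}(a)`. -/
def inhomMod {n : ℕ} (L₀ : ℝ) (ρ : ℝ → EuclideanSpace ℝ (Fin n) → ℝ) (a : ℝ) : ℝ :=
  (rhoMax L₀ ρ a - rhoMin L₀ ρ a) / rhoMax L₀ ρ a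

/-- The density contrast `δ(a,x) = (ρ(a,x) − ρ̄(a))/ρ̄(a)`. -/
def densityContrast {n : ℕ} (L₀ : ℝ) (ρ : ℝ → EuclideanSpace ℝ (Fin n) → ℝ)
    (a : ℝ) (x : EuclideanSpace ℝ (Fin n)) : ℝ :=
  (ρ a x - rhoMean L₀ ρ a) / rhoMean L₀ ρ a

/-! ### Auxiliary geometric and measure-theoretic lemmas -/

lemma cell_eq_preimage (n : ℕ) (L₀ : ℝ) :
    cell n L₀ = (MeasurableEquiv.toLp 2 (Fin n → ℝ)).symm ⁻¹'
      (Set.univ.pi fun _ => Set.Icc (0:ℝ) L₀) := by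
  ext x
  simp only [cell, Set.mem_preimage, Set.mem_pi, Set.mem_univ, forall_true_left, Set.mem_setOf_eq]
  constructor
  · intro h i
    exact h i
  · intro h i
    exact h i

lemma measurableSet_cell (n : ℕ) (L₀ : ℝ) : MeasurableSet (cell n L₀) := by
  rw [cell_eq_preimage]
  exact (MeasurableEquiv.toLp 2 (Fin n → ℝ)).symm.measurable
    (MeasurableSet.univ_pi fun _ => measurableSet_Icc)

lemma volume_cell (n : ℕ) (L₀ : ℝ) (hL₀ : 0 ≤ L₀) :
    volume (cell n L₀) = ENNReal.ofReal (L₀ ^ n) := by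
  rw [cell_eq_preimage,
    (EuclideanSpace.volume_preserving_symm_measurableEquiv_toLp (Fin n)).measure_preimage
      ((MeasurableSet.univ_pi fun _ => measurableSet_Icc).nullMeasurableSet),
    volume_pi_pi]
  simp [Real.volume_Icc, ENNReal.ofReal_pow hL₀]

lemma zero_mem_cell {n : ℕ} {L₀ : ℝ} (hL₀ : 0 ≤ L₀) :
    (0 : EuclideanSpace ℝ (Fin n)) ∈ cell n L₀ := by
  intro i
  constructor
  · exact le_of_eq rfl
  · simpa using hL₀

lemma isCompact_cell (n : ℕ) (L₀ : ℝ) : IsCompact (cell n L₀) := by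
  have h : cell n L₀ = (EuclideanSpace.equiv (Fin n) ℝ).symm ''
      (Set.univ.pi fun _ => Set.Icc (0:ℝ) L₀) := by
    ext x
    constructor
    · intro hx
      exact ⟨fun i => x i, fun i _ => hx i, rfl⟩
    · rintro ⟨y, hy, rfl⟩
      intro i
      exact hy i (Set.mem_univ i)
  rw [h]
  exact (isCompact_univ_pi fun _ => isCompact_Icc).image
    (EuclideanSpace.equiv (Fin n) ℝ).symm.continuous

lemma exists_cell_rep {n : ℕ} {L₀ : ℝ} (hL₀ : 0 < L₀) (f : EuclideanSpace ℝ (Fin n) → ℝ)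
    (hper : ∀ i : Fin n, ∀ x, f (x + L₀ • EuclideanSpace.single i (1:ℝ)) = f x)
    (x : EuclideanSpace ℝ (Fin n)) :
    ∃ y ∈ cell n L₀, f y = f x := by
  have hnat : ∀ (i : Fin n) (k : ℕ) (z : EuclideanSpace ℝ (Fin n)),
      f (z + (k : ℝ) • (L₀ • EuclideanSpace.single i (1:ℝ))) = f z := by
    intro i k
    induction k with
    | zero => intro z; simp
    | succ k ih =>
      intro z
      have h2 : z + ((k+1 : ℕ) : ℝ) • (L₀ • EuclideanSpace.single i (1:ℝ))
          = (z + (k : ℝ) • (L₀ • EuclideanSpace.single i (1:ℝ)))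
            + L₀ • EuclideanSpace.single i (1:ℝ) := by
        push_cast
        rw [add_smul, one_smul, add_assoc]
      rw [h2, hper i _]
      exact ih z
  have hint : ∀ (i : Fin n) (k : ℤ) (z : EuclideanSpace ℝ (Fin n)),
      f (z + (k : ℝ) • (L₀ • EuclideanSpace.single i (1:ℝ))) = f z := by
    intro i k z
    obtain ⟨k', rfl | rfl⟩ := k.eq_nat_or_neg
    · exact_mod_cast hnat i k' z
    · have h3 : z = (z + ((-(k' : ℤ) : ℤ) : ℝ) • (L₀ • EuclideanSpace.single i (1:ℝ)))
          + ((k' : ℕ) : ℝ) • (L₀ • EuclideanSpace.single i (1:ℝ)) := by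
        push_cast
        module
      conv_rhs => rw [h3, hnat i k' _]
  have hsum : ∀ (s : Finset (Fin n)) (v : Fin n → ℤ) (z : EuclideanSpace ℝ (Fin n)),
      f (z + ∑ i ∈ s, (v i : ℝ) • (L₀ • EuclideanSpace.single i (1:ℝ))) = f z := by
    intro s
    induction s using Finset.induction_on with
    | empty => intro v z; simp
    | @insert j s hj ih =>
      intro v z
      rw [Finset.sum_insert hj]
      have h4 : z + ((v j : ℝ) • (L₀ • EuclideanSpace.single j (1:ℝ))
            + ∑ i ∈ s, (v i : ℝ) • (L₀ • EuclideanSpace.single i (1:ℝ)))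
          = (z + ∑ i ∈ s, (v i : ℝ) • (L₀ • EuclideanSpace.single i (1:ℝ)))
            + (v j : ℝ) • (L₀ • EuclideanSpace.single j (1:ℝ)) := by
        abel
      rw [h4, hint j (v j) _]
      exact ih v z
  set v : Fin n → ℤ := fun i => -⌊x i / L₀⌋ with hv
  refine ⟨x + ∑ i : Fin n, (v i : ℝ) • (L₀ • EuclideanSpace.single i (1:ℝ)), ?_,
    hsum Finset.univ v x⟩
  intro j
  have hcoord : (x + ∑ i : Fin n, (v i : ℝ) • (L₀ • EuclideanSpace.single i (1:ℝ))) j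
      = x j + (v j : ℝ) * L₀ := by
    have h5 : (∑ i : Fin n, (v i : ℝ) • (L₀ • EuclideanSpace.single i (1:ℝ))) j
        = ∑ i : Fin n, (v i : ℝ) * (L₀ * (EuclideanSpace.single i (1:ℝ) j)) :=
      by simp only [WithLp.ofLp_sum, Finset.sum_apply, PiLp.smul_apply, smul_eq_mul]
    have h6 : (x + ∑ i : Fin n, (v i : ℝ) • (L₀ • EuclideanSpace.single i (1:ℝ))) j
        = x j + (∑ i : Fin n, (v i : ℝ) • (L₀ • EuclideanSpace.single i (1:ℝ))) j := rfl
    rw [h6, h5]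
    congr 1
    rw [Finset.sum_eq_single j]
    · simp [EuclideanSpace.single_apply]
    · intro b _ hb; simp [EuclideanSpace.single_apply, Ne.symm hb]
    · simp
  rw [hcoord]
  have h1 : x j + (v j : ℝ) * L₀ = L₀ * Int.fract (x j / L₀) := by
    rw [Int.fract, hv]
    push_cast
    field_simp
    ring
  rw [h1]
  constructor
  · exact mul_nonneg hL₀.le (Int.fract_nonneg _)
  · nlinarith [Int.fract_lt_one (x j / L₀), Int.fract_nonneg (x j / L₀), hL₀.le]

lemma slice_continuous {n : ℕ} {a₁ a₀ : ℝ} {ρ : ℝ → EuclideanSpace ℝ (Fin n) → ℝ}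
    (hcont : ContinuousOn (fun p : ℝ × EuclideanSpace ℝ (Fin n) => ρ p.1 p.2)
      (Set.Ioc a₁ a₀ ×ˢ Set.univ)) {a : ℝ} (ha : a ∈ Set.Ioc a₁ a₀) :
    Continuous (ρ a) := by
  rw [← continuousOn_univ]
  have h : ContinuousOn (fun x : EuclideanSpace ℝ (Fin n) => (a, x)) Set.univ :=
    (continuous_const.prodMk continuous_id).continuousOn
  exact hcont.comp h (fun x _ => ⟨ha, Set.mem_univ x⟩)

lemma rhoMax_spec {n : ℕ} {L₀ : ℝ} {f : EuclideanSpace ℝ (Fin n) → ℝ} (hL₀ : 0 < L₀)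
    (hc : Continuous f)
    (hper : ∀ i : Fin n, ∀ x, f (x + L₀ • EuclideanSpace.single i (1:ℝ)) = f x) :
    ∃ xM ∈ cell n L₀, sSup (f '' cell n L₀) = f xM ∧ ∀ y, f y ≤ f xM := by
  have hK : IsCompact (cell n L₀) := isCompact_cell n L₀
  have hne : (cell n L₀).Nonempty := ⟨0, zero_mem_cell hL₀.le⟩
  have himg : IsCompact (f '' cell n L₀) := hK.image hc
  have hmem : sSup (f '' cell n L₀) ∈ f '' cell n L₀ :=
    himg.sSup_mem (hne.image f)
  obtain ⟨xM, hxM, hfxM⟩ := hmem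
  refine ⟨xM, hxM, hfxM.symm, fun y => ?_⟩
  obtain ⟨z, hz, hfz⟩ := exists_cell_rep hL₀ f hper y
  have h2 : f z ≤ sSup (f '' cell n L₀) := le_csSup himg.bddAbove ⟨z, hz, rfl⟩
  rw [← hfxM] at h2
  rw [← hfz]
  exact h2

lemma rhoMin_spec {n : ℕ} {L₀ : ℝ} {f : EuclideanSpace ℝ (Fin n) → ℝ} (hL₀ : 0 < L₀)
    (hc : Continuous f)
    (hper : ∀ i : Fin n, ∀ x, f (x + L₀ • EuclideanSpace.single i (1:ℝ)) = f x) :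
    ∃ xm ∈ cell n L₀, sInf (f '' cell n L₀) = f xm ∧ ∀ y, f xm ≤ f y := by
  have hK : IsCompact (cell n L₀) := isCompact_cell n L₀
  have hne : (cell n L₀).Nonempty := ⟨0, zero_mem_cell hL₀.le⟩
  have himg : IsCompact (f '' cell n L₀) := hK.image hc
  have hmem : sInf (f '' cell n L₀) ∈ f '' cell n L₀ :=
    himg.sInf_mem (hne.image f)
  obtain ⟨xm, hxm, hfxm⟩ := hmem
  refine ⟨xm, hxm, hfxm.symm, fun y => ?_⟩
  obtain ⟨z, hz, hfz⟩ := exists_cell_rep hL₀ f hper y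
  have h2 : sInf (f '' cell n L₀) ≤ f z := csInf_le himg.bddBelow ⟨z, hz, rfl⟩
  rw [← hfxm] at h2
  rw [← hfz]
  exact h2

lemma integral_cell_bounds {n : ℕ} {L₀ : ℝ} (hL₀ : 0 < L₀) {f : EuclideanSpace ℝ (Fin n) → ℝ}
    (hc : Continuous f) {mlo Mhi : ℝ} (hm : ∀ y ∈ cell n L₀, mlo ≤ f y)
    (hM : ∀ y ∈ cell n L₀, f y ≤ Mhi) :
    mlo * L₀ ^ n ≤ (∫ x in cell n L₀, f x) ∧ (∫ x in cell n L₀, f x) ≤ Mhi * L₀ ^ n := by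
  have hK := isCompact_cell n L₀
  have hms := measurableSet_cell n L₀
  have hvol : volume (cell n L₀) = ENNReal.ofReal (L₀ ^ n) := volume_cell n L₀ hL₀.le
  have hfin : volume (cell n L₀) < ⊤ := by rw [hvol]; exact ENNReal.ofReal_lt_top
  have hint : IntegrableOn f (cell n L₀) := hc.continuousOn.integrableOn_compact hK
  have hconst : ∀ c : ℝ, IntegrableOn (fun _ => c) (cell n L₀) := fun c =>
    integrableOn_const hfin.ne
  have htr : (volume (cell n L₀)).toReal = L₀ ^ n := by
    rw [hvol, ENNReal.toReal_ofReal (by positivity)]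
  constructor
  · have := setIntegral_mono_on (hconst mlo) hint hms hm
    rw [setIntegral_const, measureReal_def, htr, smul_eq_mul] at this; linarith
  · have := setIntegral_mono_on hint (hconst Mhi) hms hM
    rw [setIntegral_const, measureReal_def, htr, smul_eq_mul] at this; linarith


section CoreLemmas
open Filter Set

/-- Second derivative test at an (interior) global maximum of a 1D function. -/
lemma second_deriv_nonpos_at_max {g g' : ℝ → ℝ} {r c : ℝ} (hr : 0 < r)
    (hder : ∀ s ∈ Set.Ioo (-r) r, HasDerivAt g (g' s) s)
    (hder2 : HasDerivAt g' c 0)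
    (hmax : ∀ s, g s ≤ g 0) : c ≤ 0 := by
  have h0mem : (0:ℝ) ∈ Set.Ioo (-r) r := by constructor <;> linarith
  have hg'0 : g' 0 = 0 := by
    have hlm : IsLocalMax g 0 := Filter.Eventually.of_forall hmax
    exact hlm.hasDerivAt_eq_zero (hder 0 h0mem)
  -- frequently, g' u ≤ 0 for u → 0⁺
  have hfreq : ∃ᶠ u in nhdsWithin 0 (Set.Ioi 0), g' u ≤ 0 := by
    rw [Filter.frequently_iff]
    intro U hU
    obtain ⟨ε, hε, hsub⟩ := mem_nhdsGT_iff_exists_Ioo_subset.1 hU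
    have hε' : (0:ℝ) < ε := hε
    set s := min (ε / 2) (r / 2) with hs
    have hs0 : 0 < s := lt_min (by linarith) (by linarith)
    have hsr : s < r := by
      have : s ≤ r / 2 := min_le_right _ _
      linarith
    have hsε : s < ε := by
      have : s ≤ ε / 2 := min_le_left _ _
      linarith
    have hcont : ContinuousOn g (Set.Icc 0 s) := by
      intro u hu
      have hmem : u ∈ Set.Ioo (-r) r := ⟨by linarith [hu.1], by linarith [hu.2]⟩
      exact ((hder u hmem).continuousAt).continuousWithinAt
    obtain ⟨ξ, hξ, hξeq⟩ := exists_hasDerivAt_eq_slope g g' hs0 hcont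
      (fun u hu => hder u ⟨by linarith [hu.1], by linarith [hu.2]⟩)
    refine ⟨ξ, hsub ⟨hξ.1, by linarith [hξ.2]⟩, ?_⟩
    rw [hξeq]
    have := hmax s
    have hgs : g s - g 0 ≤ 0 := by linarith
    exact div_nonpos_of_nonpos_of_nonneg hgs (by linarith)
  -- slope of g' tends to c on 𝓝[>]0
  have htend : Filter.Tendsto (slope g' 0) (nhdsWithin 0 (Set.Ioi 0)) (nhds c) := by
    have h1 := hasDerivAt_iff_tendsto_slope.1 hder2
    exact h1.mono_left (nhdsWithin_mono 0 (fun u hu => ne_of_gt hu))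
  by_contra hc
  push_neg at hc
  have hev : ∀ᶠ u in nhdsWithin 0 (Set.Ioi 0), 0 < slope g' 0 u :=
    htend.eventually (eventually_gt_nhds hc)
  have hself : ∀ᶠ u in nhdsWithin 0 (Set.Ioi 0), u ∈ Set.Ioi (0:ℝ) :=
    eventually_mem_nhdsWithin
  obtain ⟨u, ⟨hu1, hu2⟩, hu3⟩ := ((hfreq.and_eventually hev).and_eventually hself).exists
  rw [slope_def_field, hg'0, sub_zero, sub_zero] at hu2
  have hupos : (0:ℝ) < u := hu3
  have := div_nonpos_of_nonpos_of_nonneg hu1 hupos.le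
  linarith

lemma second_deriv_nonneg_at_min {g g' : ℝ → ℝ} {r c : ℝ} (hr : 0 < r)
    (hder : ∀ s ∈ Set.Ioo (-r) r, HasDerivAt g (g' s) s)
    (hder2 : HasDerivAt g' c 0)
    (hmin : ∀ s, g 0 ≤ g s) : 0 ≤ c := by
  have := second_deriv_nonpos_at_max (g := fun s => -g s) (g' := fun s => -g' s) (c := -c) hr
    (fun s hs => (hder s hs).neg) hder2.neg (fun s => neg_le_neg (hmin s))
  linarith

section
variable {n : ℕ} {f : EuclideanSpace ℝ (Fin n) → ℝ} {x₀ : EuclideanSpace ℝ (Fin n)}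

lemma second_partial_le_of_max (hf : ContDiffAt ℝ (⊤:ℕ∞) f x₀) (hmax : ∀ y, f y ≤ f x₀)
    (i : Fin n) :
    fderiv ℝ (fun y => fderiv ℝ f y (EuclideanSpace.single i 1)) x₀
      (EuclideanSpace.single i 1) ≤ 0 := by
  set e : EuclideanSpace ℝ (Fin n) := EuclideanSpace.single i 1 with he
  obtain ⟨u, hu_nhds, hu⟩ := hf.contDiffOn (m := 2) (by exact WithTop.coe_le_coe.2 le_top) (by simp)
  set v := interior u with hv
  have hvopen : IsOpen v := isOpen_interior
  have hxv : x₀ ∈ v := mem_interior_iff_mem_nhds.2 hu_nhds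
  have hdiff : ∀ y ∈ v, DifferentiableAt ℝ f y := fun y hy =>
    ((hu.mono interior_subset).differentiableOn (by norm_num)).differentiableAt (hvopen.mem_nhds hy)
  obtain ⟨r, hr, hball⟩ := Metric.isOpen_iff.1 hvopen x₀ hxv
  have hnorme : ‖e‖ = 1 := by rw [he, EuclideanSpace.norm_single]; norm_num
  have hLmem : ∀ s ∈ Set.Ioo (-r) r, x₀ + s • e ∈ v := by
    intro s hs
    apply hball
    rw [Metric.mem_ball, dist_eq_norm]
    simp only [add_sub_cancel_left]
    rw [norm_smul, hnorme, mul_one, Real.norm_eq_abs, abs_lt]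
    exact ⟨hs.1, hs.2⟩
  have hL : ∀ s : ℝ, HasDerivAt (fun u : ℝ => x₀ + u • e) e s := by
    intro s
    have h1 : HasDerivAt (fun u : ℝ => u • e) ((1:ℝ) • e) s := (hasDerivAt_id s).smul_const e
    rw [one_smul] at h1
    exact h1.const_add x₀
  set g : ℝ → ℝ := fun s => f (x₀ + s • e) with hg
  set g' : ℝ → ℝ := fun s => fderiv ℝ f (x₀ + s • e) e with hg'
  have hder : ∀ s ∈ Set.Ioo (-r) r, HasDerivAt g (g' s) s := by
    intro s hs
    exact ((hdiff _ (hLmem s hs)).hasFDerivAt).comp_hasDerivAt s (hL s)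
  have hψd : DifferentiableAt ℝ (fun y => fderiv ℝ f y e) x₀ := by
    have hfd : ContDiffAt ℝ 1 (fderiv ℝ f) x₀ := hf.fderiv_right (by norm_num; exact WithTop.coe_le_coe.2 le_top)
    have h1 : DifferentiableAt ℝ (fderiv ℝ f) x₀ := hfd.differentiableAt one_ne_zero
    exact ((ContinuousLinearMap.apply ℝ ℝ e).differentiable.differentiableAt).comp x₀ h1
  have hder2 : HasDerivAt g' (fderiv ℝ (fun y => fderiv ℝ f y e) x₀ e) 0 := by
    have hL0 : x₀ + (0:ℝ) • e = x₀ := by simp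
    have hψ : HasFDerivAt (fun y => fderiv ℝ f y e)
        (fderiv ℝ (fun y => fderiv ℝ f y e) x₀) (x₀ + (0:ℝ) • e) := by
      rw [hL0]; exact hψd.hasFDerivAt
    have h2 := hψ.comp_hasDerivAt 0 (hL 0)
    exact h2
  have hmax' : ∀ s, g s ≤ g 0 := by
    intro s
    have : g 0 = f x₀ := by simp [hg]
    rw [this]
    exact hmax _
  exact second_deriv_nonpos_at_max hr hder hder2 hmax'

lemma gradient_eq_zero_of_max (hf : ContDiffAt ℝ (⊤:ℕ∞) f x₀) (hmax : ∀ y, f y ≤ f x₀) :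
    gradient f x₀ = 0 := by
  have hlm : IsLocalMax f x₀ := Filter.Eventually.of_forall hmax
  have h0 : fderiv ℝ f x₀ = 0 := hlm.fderiv_eq_zero
  rw [gradient, h0, map_zero]

lemma lap_nonpos_of_max (hf : ContDiffAt ℝ (⊤:ℕ∞) f x₀) (hmax : ∀ y, f y ≤ f x₀) :
    lap f x₀ ≤ 0 := by
  apply Finset.sum_nonpos
  intro i _
  exact second_partial_le_of_max hf hmax i

lemma second_partial_ge_of_min (hf : ContDiffAt ℝ (⊤:ℕ∞) f x₀) (hmin : ∀ y, f x₀ ≤ f y)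
    (i : Fin n) :
    0 ≤ fderiv ℝ (fun y => fderiv ℝ f y (EuclideanSpace.single i 1)) x₀
      (EuclideanSpace.single i 1) := by
  have h := second_partial_le_of_max (f := fun y => -f y) (x₀ := x₀) (hf.neg)
    (fun y => neg_le_neg (hmin y)) i
  have hkey : ∀ y, fderiv ℝ (fun z => -f z) y = -fderiv ℝ f y := fun y => fderiv_neg
  have h2 : (fun y => fderiv ℝ (fun z => -f z) y (EuclideanSpace.single i 1))
      = fun y => -(fderiv ℝ f y (EuclideanSpace.single i 1)) := by
    funext y
    rw [hkey y]
    simp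
  rw [h2] at h
  rw [fderiv_fun_neg] at h
  simp at h
  exact h

lemma gradient_eq_zero_of_min (hf : ContDiffAt ℝ (⊤:ℕ∞) f x₀) (hmin : ∀ y, f x₀ ≤ f y) :
    gradient f x₀ = 0 := by
  have hlm : IsLocalMin f x₀ := Filter.Eventually.of_forall hmin
  have h0 : fderiv ℝ f x₀ = 0 := hlm.fderiv_eq_zero
  rw [gradient, h0, map_zero]

lemma lap_nonneg_of_min (hf : ContDiffAt ℝ (⊤:ℕ∞) f x₀) (hmin : ∀ y, f x₀ ≤ f y) :
    0 ≤ lap f x₀ := by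
  apply Finset.sum_nonneg
  intro i _
  exact second_partial_ge_of_min hf hmin i

end

lemma anti_of_support {G : ℝ → ℝ} {b c : ℝ} (hbc : b ≤ c)
    (hG : ContinuousOn G (Set.Icc b c))
    (hyp : ∀ t ∈ Set.Ico b c, ∃ h : ℝ → ℝ, ∃ d : ℝ, d ≤ 0 ∧ HasDerivAt h d t ∧ h t = G t ∧
      ∀ s, t ≤ s → s ≤ c → G s ≤ h s) :
    G c ≤ G b := by
  have bound : ∀ t ∈ Set.Ico b c, ∀ r : ℝ, (fun _ : ℝ => (0:ℝ)) t < r →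
      ∃ᶠ z in nhdsWithin t (Set.Ioi t), slope G t z < r := by
    intro t ht r hr
    obtain ⟨h, d, hd, hder, hht, hle⟩ := hyp t ht
    have htc : t < c := ht.2
    have htend : Filter.Tendsto (slope h t) (nhdsWithin t (Set.Ioi t)) (nhds d) :=
      (hasDerivAt_iff_tendsto_slope.1 hder).mono_left
        (nhdsWithin_mono t (fun u hu => ne_of_gt hu))
    have hev1 : ∀ᶠ z in nhdsWithin t (Set.Ioi t), slope h t z < r :=
      htend.eventually (eventually_lt_nhds (lt_of_le_of_lt hd hr))
    have hev2 : ∀ᶠ z in nhdsWithin t (Set.Ioi t), z ∈ Set.Ioo t c :=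
      Ioo_mem_nhdsGT_of_mem ⟨le_refl t, htc⟩
    apply (hev1.and hev2).frequently.mono
    rintro z ⟨h1, h2⟩
    refine lt_of_le_of_lt ?_ h1
    rw [slope_def_field, slope_def_field, hht]
    have hzt : (0:ℝ) < z - t := by linarith [h2.1]
    have hnum : G z - G t ≤ h z - G t := by
      have := hle z h2.1.le h2.2.le
      linarith
    apply div_le_div_of_nonneg_right ?_ hzt.le
    case _ => exact hnum
  · exact image_le_of_liminf_slope_right_le_deriv_boundary (f := G) (B := fun _ => G b)
      (B' := fun _ => 0) hG le_rfl continuousOn_const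
      (fun x _ => (hasDerivWithinAt_const x _ (G b)))
      bound (Set.right_mem_Icc.2 hbc)

lemma extrema_continuousOn {n : ℕ} {L₀ : ℝ} (hL₀ : 0 < L₀) {a₁ a₀ b : ℝ}
    (hb : b ∈ Set.Ioc a₁ a₀) {ρ : ℝ → EuclideanSpace ℝ (Fin n) → ℝ}
    (hcont : ContinuousOn (fun p : ℝ × EuclideanSpace ℝ (Fin n) => ρ p.1 p.2)
      (Set.Ioc a₁ a₀ ×ˢ Set.univ))
    (hper : ∀ a ∈ Set.Ioc a₁ a₀, ∀ i : Fin n, ∀ x,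
      ρ a (x + L₀ • EuclideanSpace.single i (1 : ℝ)) = ρ a x) :
    ContinuousOn (rhoMax L₀ ρ) (Set.Icc b a₀) ∧ ContinuousOn (rhoMin L₀ ρ) (Set.Icc b a₀) := by
  have hsub : Set.Icc b a₀ ⊆ Set.Ioc a₁ a₀ := fun t ht => ⟨lt_of_lt_of_le hb.1 ht.1, ht.2⟩
  set S := Set.Icc b a₀ ×ˢ cell n L₀ with hS
  have hScomp : IsCompact S := (isCompact_Icc).prod (isCompact_cell n L₀)
  have hc2 : ContinuousOn (fun p : ℝ × EuclideanSpace ℝ (Fin n) => ρ p.1 p.2) S :=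
    hcont.mono (fun p hp => ⟨hsub hp.1, Set.mem_univ _⟩)
  have huc := hScomp.uniformContinuousOn_of_continuous hc2
  rw [Metric.uniformContinuousOn_iff] at huc
  -- uniform approximation of the extrema
  have keymax : ∀ ε > 0, ∃ δ > 0, ∀ u ∈ Set.Icc b a₀, ∀ w ∈ Set.Icc b a₀,
      dist u w < δ → rhoMax L₀ ρ u - rhoMax L₀ ρ w < ε ∧
        rhoMin L₀ ρ u - rhoMin L₀ ρ w < ε := by
    intro ε hε
    obtain ⟨δ, hδ, hδ2⟩ := huc ε hε
    refine ⟨δ, hδ, fun u hu w hw hd => ?_⟩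
    obtain ⟨xM, hxM, hMeq, hMge⟩ :=
      rhoMax_spec hL₀ (slice_continuous hcont (hsub hu)) (hper u (hsub hu))
    obtain ⟨yM, hyM, hMeq', hMge'⟩ :=
      rhoMax_spec hL₀ (slice_continuous hcont (hsub hw)) (hper w (hsub hw))
    obtain ⟨xm, hxm, hmeq, hmle⟩ :=
      rhoMin_spec hL₀ (slice_continuous hcont (hsub hu)) (hper u (hsub hu))
    obtain ⟨ym, hym, hmeq', hmle'⟩ :=
      rhoMin_spec hL₀ (slice_continuous hcont (hsub hw)) (hper w (hsub hw))
    constructor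
    · have h1 : dist (ρ u xM) (ρ w xM) < ε := by
        apply hδ2 (u, xM) ⟨hu, hxM⟩ (w, xM) ⟨hw, hxM⟩
        rw [Prod.dist_eq]
        simp only [dist_self]
        rw [max_eq_left dist_nonneg]
        exact hd
      have h2 : ρ u xM - ρ w xM < ε := by
        rw [Real.dist_eq] at h1
        have := abs_lt.1 h1
        linarith [this.1, this.2]
      have h3 : ρ w xM ≤ rhoMax L₀ ρ w := by
        rw [show rhoMax L₀ ρ w = ρ w yM from hMeq']
        exact hMge' xM
      have h4 : rhoMax L₀ ρ u = ρ u xM := hMeq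
      linarith
    · have h1 : dist (ρ u ym) (ρ w ym) < ε := by
        apply hδ2 (u, ym) ⟨hu, hym⟩ (w, ym) ⟨hw, hym⟩
        rw [Prod.dist_eq]
        simp only [dist_self]
        rw [max_eq_left dist_nonneg]
        exact hd
      have h2 : ρ u ym - ρ w ym < ε := by
        rw [Real.dist_eq] at h1
        have := abs_lt.1 h1
        linarith [this.1, this.2]
      have h3 : rhoMin L₀ ρ u ≤ ρ u ym := by
        rw [show rhoMin L₀ ρ u = ρ u xm from hmeq]
        exact hmle ym
      have h4 : rhoMin L₀ ρ w = ρ w ym := hmeq'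
      linarith
  constructor
  · rw [Metric.continuousOn_iff]
    intro t ht ε hε
    obtain ⟨δ, hδ, hkey⟩ := keymax ε hε
    refine ⟨δ, hδ, fun s hs hd => ?_⟩
    rw [Real.dist_eq, abs_lt]
    have hd' : dist t s < δ := by rwa [dist_comm]
    exact ⟨by linarith [(hkey t ht s hs hd').1], by linarith [(hkey s hs t ht hd).1]⟩
  · rw [Metric.continuousOn_iff]
    intro t ht ε hε
    obtain ⟨δ, hδ, hkey⟩ := keymax ε hε
    refine ⟨δ, hδ, fun s hs hd => ?_⟩
    rw [Real.dist_eq, abs_lt]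
    have hd' : dist t s < δ := by rwa [dist_comm]
    exact ⟨by linarith [(hkey t ht s hs hd').2], by linarith [(hkey s hs t ht hd).2]⟩

lemma ratio_mono (m : ℕ) (hm : 3 ≤ m) (n : ℕ)
    (L₀ : ℝ) (hL₀ : 0 < L₀)
    (a₁ a₀ : ℝ) (ha₁ : 0 ≤ a₁) (ha : a₁ < a₀)
    (γ : ℝ → ℝ) (hγ : ContinuousOn γ (Set.Ioc a₁ a₀))
    (ρ : ℝ → EuclideanSpace ℝ (Fin n) → ℝ)
    (hcont : ContinuousOn (fun p : ℝ × EuclideanSpace ℝ (Fin n) => ρ p.1 p.2)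
      (Set.Ioc a₁ a₀ ×ˢ Set.univ))
    (hpos : ∀ a ∈ Set.Ioc a₁ a₀, ∀ x, 0 < ρ a x)
    (hsmooth : ContDiffOn ℝ (⊤ : ℕ∞) (fun p : ℝ × EuclideanSpace ℝ (Fin n) => ρ p.1 p.2)
      (Set.Ioo a₁ a₀ ×ˢ Set.univ))
    (hper : ∀ a ∈ Set.Ioc a₁ a₀, ∀ i : Fin n, ∀ x,
      ρ a (x + L₀ • EuclideanSpace.single i (1 : ℝ)) = ρ a x)
    (hpde : ∀ a ∈ Set.Ioo a₁ a₀, ∀ x,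
      a * deriv (fun t => ρ t x) a =
        -((m : ℝ) - 1) * γ a * ρ a x +
          (((m : ℝ) - 2) / (2 * a ^ 2)) *
            ((3 / 2) * ‖gradient (ρ a) x‖ ^ 2 / (ρ a x) ^ 2 - lap (ρ a) x / ρ a x)) :
    ∀ a ∈ Set.Ioc a₁ a₀,
      rhoMin L₀ ρ a₀ / rhoMax L₀ ρ a₀ ≤ rhoMin L₀ ρ a / rhoMax L₀ ρ a := by
  rintro a ⟨ha1, ha2⟩
  rcases eq_or_lt_of_le ha2 with rfl | haa₀
  · exact le_refl _
  have haIoc : a ∈ Set.Ioc a₁ a₀ := ⟨ha1, ha2⟩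
  have ha₀Ioc : a₀ ∈ Set.Ioc a₁ a₀ := ⟨ha, le_refl a₀⟩
  have hsubIcc : Set.Icc a a₀ ⊆ Set.Ioc a₁ a₀ := fun t ht => ⟨lt_of_lt_of_le ha1 ht.1, ht.2⟩
  have ha0 : (0:ℝ) < a := lt_of_le_of_lt ha₁ ha1
  -- the clamped integrating factor
  set c : ℝ → ℝ := fun s => max a (min s a₀) with hc
  have hc_cont : Continuous c := continuous_const.max (continuous_id.min continuous_const)
  have hc_mem : ∀ s, c s ∈ Set.Icc a a₀ := by
    intro s
    constructor
    · exact le_max_left _ _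
    · rw [hc]
      simp only [max_le_iff]
      exact ⟨ha2, min_le_right _ _⟩
  have hc_eq : ∀ s ∈ Set.Icc a a₀, c s = s := by
    intro s hs
    rw [hc]
    simp only
    rw [min_eq_left hs.2, max_eq_right hs.1]
  have hc_pos : ∀ s, 0 < c s := fun s => lt_of_lt_of_le ha0 (hc_mem s).1
  set g0 : ℝ → ℝ := fun s => ((m:ℝ) - 1) * (γ (c s) / c s) with hg0def
  have hγc : Continuous (fun s => γ (c s)) :=
    hγ.comp_continuous hc_cont (fun s => hsubIcc (hc_mem s))
  have hg0 : Continuous g0 :=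
    continuous_const.mul (hγc.div hc_cont (fun s => (hc_pos s).ne'))
  set E : ℝ → ℝ := fun t => Real.exp (-∫ s in t..a₀, g0 s) with hEdef
  have hE : ∀ t, HasDerivAt E (g0 t * E t) t := by
    intro t
    have h1 : HasDerivAt (fun u => ∫ s in u..a₀, g0 s) (-g0 t) t :=
      intervalIntegral.integral_hasDerivAt_left (hg0.intervalIntegrable t a₀)
        (hg0.stronglyMeasurableAtFilter _ _) hg0.continuousAt
    have h2 := h1.neg
    rw [neg_neg] at h2
    have h3 := h2.exp
    convert h3 using 1
    · rfl
    · exact mul_comm _ _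
  have hEpos : ∀ t, 0 < E t := fun t => Real.exp_pos _
  have hEcont : Continuous E :=
    continuous_iff_continuousAt.2 (fun t => (hE t).differentiableAt.continuousAt)
  obtain ⟨hMcont, hmcont⟩ := extrema_continuousOn hL₀ haIoc hcont hper
  -- smoothness of slices
  have hslice_smooth : ∀ t ∈ Set.Ioo a₁ a₀, ∀ x, ContDiffAt ℝ (⊤:ℕ∞) (ρ t) x := by
    intro t ht x
    have hopen : IsOpen (Set.Ioo a₁ a₀ ×ˢ (Set.univ : Set (EuclideanSpace ℝ (Fin n)))) :=
      isOpen_Ioo.prod isOpen_univ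
    have h1 : ContDiffAt ℝ (⊤:ℕ∞) (fun p : ℝ × EuclideanSpace ℝ (Fin n) => ρ p.1 p.2) (t, x) :=
      hsmooth.contDiffAt (hopen.mem_nhds ⟨ht, Set.mem_univ x⟩)
    have h2 : ContDiffAt ℝ (⊤:ℕ∞) (fun y : EuclideanSpace ℝ (Fin n) => (t, y)) x :=
      (contDiffAt_const.prodMk contDiffAt_id)
    exact h1.comp x h2
  have hderiv_slice : ∀ t ∈ Set.Ioo a₁ a₀, ∀ x : EuclideanSpace ℝ (Fin n),
      HasDerivAt (fun u => ρ u x) (deriv (fun u => ρ u x) t) t := by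
    intro t ht x
    have hopen : IsOpen (Set.Ioo a₁ a₀ ×ˢ (Set.univ : Set (EuclideanSpace ℝ (Fin n)))) :=
      isOpen_Ioo.prod isOpen_univ
    have hD : DifferentiableAt ℝ (fun p : ℝ × EuclideanSpace ℝ (Fin n) => ρ p.1 p.2) (t, x) :=
      (hsmooth.differentiableOn (by norm_num)).differentiableAt
        (hopen.mem_nhds ⟨ht, Set.mem_univ x⟩)
    have hline : DifferentiableAt ℝ (fun u : ℝ => ((u, x) : ℝ × EuclideanSpace ℝ (Fin n))) t :=
      differentiableAt_id.prodMk (differentiableAt_const x)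
    have : DifferentiableAt ℝ (fun u : ℝ => ρ u x) t := DifferentiableAt.comp (g := fun p : ℝ × EuclideanSpace ℝ (Fin n) => ρ p.1 p.2) t hD hline
    exact this.hasDerivAt
  -- the support inequality at a max/min point
  have hpde_max : ∀ t ∈ Set.Ico a a₀, ∀ x : EuclideanSpace ℝ (Fin n),
      (∀ y, ρ t y ≤ ρ t x) →
      0 ≤ ((m:ℝ) - 1) * γ t * ρ t x + t * deriv (fun u => ρ u x) t := by
    intro t ht x hmax
    have htIoo : t ∈ Set.Ioo a₁ a₀ := ⟨lt_of_lt_of_le ha1 ht.1, ht.2⟩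
    have htIoc : t ∈ Set.Ioc a₁ a₀ := ⟨htIoo.1, htIoo.2.le⟩
    have hsm := hslice_smooth t htIoo x
    have hgrad := gradient_eq_zero_of_max hsm hmax
    have hlap := lap_nonpos_of_max hsm hmax
    have hp := hpde t htIoo x
    have hρpos := hpos t htIoc x
    have hC : 0 ≤ ((m:ℝ) - 2) / (2 * t ^ 2) := by
      have hm3 : (3:ℝ) ≤ (m:ℝ) := by exact_mod_cast hm
      apply div_nonneg (by linarith)
      positivity
    have hterm : 0 ≤ (3 / 2) * ‖gradient (ρ t) x‖ ^ 2 / (ρ t x) ^ 2 - lap (ρ t) x / ρ t x := by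
      rw [hgrad]
      simp only [norm_zero]
      have h1 : lap (ρ t) x / ρ t x ≤ 0 := div_nonpos_of_nonpos_of_nonneg hlap hρpos.le
      have h2 : (3:ℝ) / 2 * 0 ^ 2 / (ρ t x) ^ 2 = 0 := by ring
      rw [h2]
      linarith
    have := mul_nonneg hC hterm
    linarith [hp]
  have hpde_min : ∀ t ∈ Set.Ico a a₀, ∀ x : EuclideanSpace ℝ (Fin n),
      (∀ y, ρ t x ≤ ρ t y) →
      ((m:ℝ) - 1) * γ t * ρ t x + t * deriv (fun u => ρ u x) t ≤ 0 := by
    intro t ht x hmin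
    have htIoo : t ∈ Set.Ioo a₁ a₀ := ⟨lt_of_lt_of_le ha1 ht.1, ht.2⟩
    have htIoc : t ∈ Set.Ioc a₁ a₀ := ⟨htIoo.1, htIoo.2.le⟩
    have hsm := hslice_smooth t htIoo x
    have hgrad := gradient_eq_zero_of_min hsm hmin
    have hlap := lap_nonneg_of_min hsm hmin
    have hp := hpde t htIoo x
    have hρpos := hpos t htIoc x
    have hC : 0 ≤ ((m:ℝ) - 2) / (2 * t ^ 2) := by
      have hm3 : (3:ℝ) ≤ (m:ℝ) := by exact_mod_cast hm
      apply div_nonneg (by linarith)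
      positivity
    have hterm : (3 / 2) * ‖gradient (ρ t) x‖ ^ 2 / (ρ t x) ^ 2 - lap (ρ t) x / ρ t x ≤ 0 := by
      rw [hgrad]
      simp only [norm_zero]
      have h1 : 0 ≤ lap (ρ t) x / ρ t x := div_nonneg hlap hρpos.le
      have h2 : (3:ℝ) / 2 * 0 ^ 2 / (ρ t x) ^ 2 = 0 := by ring
      rw [h2]
      linarith
    have := mul_nonpos_of_nonneg_of_nonpos hC hterm
    linarith [hp]
  -- monotonicity of F = E * rhoMax
  have hFmono : E a * rhoMax L₀ ρ a ≤ E a₀ * rhoMax L₀ ρ a₀ := by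
    have := anti_of_support (G := fun t => -(E t * rhoMax L₀ ρ t)) (b := a) (c := a₀) haa₀.le
      ((hEcont.continuousOn.mul hMcont).neg) ?_
    · linarith [show -(E a₀ * rhoMax L₀ ρ a₀) ≤ -(E a * rhoMax L₀ ρ a) from this]
    intro t ht
    have htIoo : t ∈ Set.Ioo a₁ a₀ := ⟨lt_of_lt_of_le ha1 ht.1, ht.2⟩
    have htIoc : t ∈ Set.Ioc a₁ a₀ := ⟨htIoo.1, htIoo.2.le⟩
    have ht0 : (0:ℝ) < t := lt_of_lt_of_le ha0 ht.1
    obtain ⟨xM, hxM, hMeq, hMge⟩ :=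
      rhoMax_spec hL₀ (slice_continuous hcont htIoc) (hper t htIoc)
    refine ⟨fun s => -(E s * ρ s xM),
      -(g0 t * E t * ρ t xM + E t * deriv (fun u => ρ u xM) t), ?_, ?_, ?_, ?_⟩
    · -- derivative is ≤ 0, i.e. the inner derivative is ≥ 0
      rw [neg_nonpos]
      have hkey := hpde_max t ht xM hMge
      have hg0t : g0 t = ((m:ℝ) - 1) * (γ t / t) := by
        rw [hg0def]
        simp only
        rw [hc_eq t ⟨ht.1, ht.2.le⟩]
      have hfact : g0 t * E t * ρ t xM + E t * deriv (fun u => ρ u xM) t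
          = (E t / t) * (((m:ℝ) - 1) * γ t * ρ t xM + t * deriv (fun u => ρ u xM) t) := by
        rw [hg0t]
        field_simp
      rw [hfact]
      exact mul_nonneg (div_nonneg (hEpos t).le ht0.le) hkey
    · exact ((hE t).mul (hderiv_slice t htIoo xM)).neg
    · show -(E t * ρ t xM) = -(E t * rhoMax L₀ ρ t)
      rw [show rhoMax L₀ ρ t = ρ t xM from hMeq]
    · intro s hts hsa₀
      have hsIoc : s ∈ Set.Ioc a₁ a₀ := ⟨lt_of_lt_of_le htIoo.1 hts, hsa₀⟩
      obtain ⟨yM, hyM, hMeq', hMge'⟩ :=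
        rhoMax_spec hL₀ (slice_continuous hcont hsIoc) (hper s hsIoc)
      have : ρ s xM ≤ rhoMax L₀ ρ s := by
        rw [show rhoMax L₀ ρ s = ρ s yM from hMeq']
        exact hMge' xM
      have h9 := mul_le_mul_of_nonneg_left this (hEpos s).le
      show -(E s * rhoMax L₀ ρ s) ≤ -(E s * ρ s xM)
      linarith
  -- antitonicity of G = E * rhoMin
  have hGanti : E a₀ * rhoMin L₀ ρ a₀ ≤ E a * rhoMin L₀ ρ a := by
    apply anti_of_support (G := fun t => E t * rhoMin L₀ ρ t) (b := a) (c := a₀) haa₀.le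
      (hEcont.continuousOn.mul hmcont)
    intro t ht
    have htIoo : t ∈ Set.Ioo a₁ a₀ := ⟨lt_of_lt_of_le ha1 ht.1, ht.2⟩
    have htIoc : t ∈ Set.Ioc a₁ a₀ := ⟨htIoo.1, htIoo.2.le⟩
    have ht0 : (0:ℝ) < t := lt_of_lt_of_le ha0 ht.1
    obtain ⟨xm, hxm, hmeq, hmle⟩ :=
      rhoMin_spec hL₀ (slice_continuous hcont htIoc) (hper t htIoc)
    refine ⟨fun s => E s * ρ s xm,
      g0 t * E t * ρ t xm + E t * deriv (fun u => ρ u xm) t, ?_, ?_, ?_, ?_⟩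
    · have hkey := hpde_min t ht xm hmle
      have hg0t : g0 t = ((m:ℝ) - 1) * (γ t / t) := by
        rw [hg0def]
        simp only
        rw [hc_eq t ⟨ht.1, ht.2.le⟩]
      have hfact : g0 t * E t * ρ t xm + E t * deriv (fun u => ρ u xm) t
          = (E t / t) * (((m:ℝ) - 1) * γ t * ρ t xm + t * deriv (fun u => ρ u xm) t) := by
        rw [hg0t]
        field_simp
      rw [hfact]
      exact mul_nonpos_of_nonneg_of_nonpos (div_nonneg (hEpos t).le ht0.le) hkey
    · exact (hE t).mul (hderiv_slice t htIoo xm)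
    · show E t * ρ t xm = E t * rhoMin L₀ ρ t
      rw [show rhoMin L₀ ρ t = ρ t xm from hmeq]
    · intro s hts hsa₀
      have hsIoc : s ∈ Set.Ioc a₁ a₀ := ⟨lt_of_lt_of_le htIoo.1 hts, hsa₀⟩
      obtain ⟨ym, hym, hmeq', hmle'⟩ :=
        rhoMin_spec hL₀ (slice_continuous hcont hsIoc) (hper s hsIoc)
      have : rhoMin L₀ ρ s ≤ ρ s xm := by
        rw [show rhoMin L₀ ρ s = ρ s ym from hmeq']
        exact hmle' xm
      show E s * rhoMin L₀ ρ s ≤ E s * ρ s xm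
      exact mul_le_mul_of_nonneg_left this (hEpos s).le
  -- conclude
  have hMaxPos : ∀ b ∈ Set.Ioc a₁ a₀, 0 < rhoMax L₀ ρ b := by
    intro b hb
    obtain ⟨xM, hxM, hMeq, hMge⟩ :=
      rhoMax_spec hL₀ (slice_continuous hcont hb) (hper b hb)
    rw [show rhoMax L₀ ρ b = ρ b xM from hMeq]
    exact hpos b hb xM
  have hMinPos : ∀ b ∈ Set.Ioc a₁ a₀, 0 < rhoMin L₀ ρ b := by
    intro b hb
    obtain ⟨xm, hxm, hmeq, hmle⟩ :=
      rhoMin_spec hL₀ (slice_continuous hcont hb) (hper b hb)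
    rw [show rhoMin L₀ ρ b = ρ b xm from hmeq]
    exact hpos b hb xm
  have h1 : rhoMin L₀ ρ a₀ / rhoMax L₀ ρ a₀
      = (E a₀ * rhoMin L₀ ρ a₀) / (E a₀ * rhoMax L₀ ρ a₀) := by
    rw [mul_div_mul_left _ _ (hEpos a₀).ne']
  have h2 : rhoMin L₀ ρ a / rhoMax L₀ ρ a
      = (E a * rhoMin L₀ ρ a) / (E a * rhoMax L₀ ρ a) := by
    rw [mul_div_mul_left _ _ (hEpos a).ne']
  rw [h1, h2]
  have hFapos : 0 < E a * rhoMax L₀ ρ a :=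
    mul_pos (hEpos a) (hMaxPos a haIoc)
  have hFa₀pos : 0 < E a₀ * rhoMax L₀ ρ a₀ :=
    mul_pos (hEpos a₀) (hMaxPos a₀ ha₀Ioc)
  have hGa₀pos : 0 < E a₀ * rhoMin L₀ ρ a₀ :=
    mul_pos (hEpos a₀) (hMinPos a₀ ha₀Ioc)
  calc (E a₀ * rhoMin L₀ ρ a₀) / (E a₀ * rhoMax L₀ ρ a₀)
      ≤ (E a * rhoMin L₀ ρ a) / (E a₀ * rhoMax L₀ ρ a₀) :=
        div_le_div_of_nonneg_right hGanti hFa₀pos.le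
    _ ≤ (E a * rhoMin L₀ ρ a) / (E a * rhoMax L₀ ρ a) := by
        apply div_le_div_of_nonneg_left (by linarith [hGa₀pos] : (0:ℝ) ≤ E a * rhoMin L₀ ρ a)
          hFapos hFmono

end CoreLemmas

/-- Corollary 3.2, bounds on the density contrast:
`Δ(a) ≤ Δ₀ < 1` and `−Δ₀ ≤ −Δ(a) ≤ δ(a,x) ≤ Δ(a)/(1−Δ(a)) ≤ Δ₀/(1−Δ₀)`. -/
theorem density_contrast_bounds (m : ℕ) (hm : 3 ≤ m) (n : ℕ) (hn : n = m - 1)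
    (L₀ : ℝ) (hL₀ : 0 < L₀)
    (a₁ a₀ : ℝ) (ha₁ : 0 ≤ a₁) (ha : a₁ < a₀)
    (γ : ℝ → ℝ) (hγ : ContinuousOn γ (Set.Ioc a₁ a₀))
    (ρ : ℝ → EuclideanSpace ℝ (Fin n) → ℝ)
    (hcont : ContinuousOn (fun p : ℝ × EuclideanSpace ℝ (Fin n) => ρ p.1 p.2)
      (Set.Ioc a₁ a₀ ×ˢ Set.univ))
    (hpos : ∀ a ∈ Set.Ioc a₁ a₀, ∀ x, 0 < ρ a x)
    (hsmooth : ContDiffOn ℝ (⊤ : ℕ∞) (fun p : ℝ × EuclideanSpace ℝ (Fin n) => ρ p.1 p.2)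
      (Set.Ioo a₁ a₀ ×ˢ Set.univ))
    (hper : ∀ a ∈ Set.Ioc a₁ a₀, ∀ i : Fin n, ∀ x,
      ρ a (x + L₀ • EuclideanSpace.single i (1 : ℝ)) = ρ a x)
    (hpde : ∀ a ∈ Set.Ioo a₁ a₀, ∀ x,
      a * deriv (fun t => ρ t x) a =
        -((m : ℝ) - 1) * γ a * ρ a x +
          (((m : ℝ) - 2) / (2 * a ^ 2)) *
            ((3 / 2) * ‖gradient (ρ a) x‖ ^ 2 / (ρ a x) ^ 2 - lap (ρ a) x / ρ a x)) :
    ∀ a ∈ Set.Ioc a₁ a₀,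
      (inhomMod L₀ ρ a ≤ inhomMod L₀ ρ a₀) ∧ (inhomMod L₀ ρ a₀ < 1) ∧
      ∀ x : EuclideanSpace ℝ (Fin n),
        (-(inhomMod L₀ ρ a₀) ≤ -(inhomMod L₀ ρ a)) ∧
        (-(inhomMod L₀ ρ a) ≤ densityContrast L₀ ρ a x) ∧
        (densityContrast L₀ ρ a x ≤ inhomMod L₀ ρ a / (1 - inhomMod L₀ ρ a)) ∧
        (inhomMod L₀ ρ a / (1 - inhomMod L₀ ρ a)
          ≤ inhomMod L₀ ρ a₀ / (1 - inhomMod L₀ ρ a₀)) := by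
  -- basic facts at every time `b`
  have key : ∀ b ∈ Set.Ioc a₁ a₀,
      0 < rhoMin L₀ ρ b ∧ rhoMin L₀ ρ b ≤ rhoMean L₀ ρ b ∧ rhoMean L₀ ρ b ≤ rhoMax L₀ ρ b ∧
      ∀ x, rhoMin L₀ ρ b ≤ ρ b x ∧ ρ b x ≤ rhoMax L₀ ρ b := by
    intro b hb
    have hc : Continuous (ρ b) := slice_continuous hcont hb
    obtain ⟨xM, hxM, hMeq, hMge⟩ := rhoMax_spec hL₀ hc (hper b hb)
    obtain ⟨xm, hxm, hmeq, hmle⟩ := rhoMin_spec hL₀ hc (hper b hb)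
    have hMax : rhoMax L₀ ρ b = ρ b xM := hMeq
    have hMin : rhoMin L₀ ρ b = ρ b xm := hmeq
    have hminpos : 0 < rhoMin L₀ ρ b := by rw [hMin]; exact hpos b hb xm
    have hlo : ∀ y ∈ cell n L₀, rhoMin L₀ ρ b ≤ ρ b y := fun y _ => by
      rw [hMin]; exact hmle y
    have hhi : ∀ y ∈ cell n L₀, ρ b y ≤ rhoMax L₀ ρ b := fun y _ => by
      rw [hMax]; exact hMge y
    obtain ⟨hint1, hint2⟩ := integral_cell_bounds hL₀ hc hlo hhi
    have hLpos : (0:ℝ) < L₀ ^ n := by positivity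
    refine ⟨hminpos, ?_, ?_, fun x => ⟨by rw [hMin]; exact hmle x, by rw [hMax]; exact hMge x⟩⟩
    · rw [rhoMean]
      rw [show rhoMin L₀ ρ b = (L₀ ^ n)⁻¹ * (rhoMin L₀ ρ b * L₀ ^ n) by field_simp]
      exact mul_le_mul_of_nonneg_left hint1 (by positivity)
    · rw [rhoMean]
      rw [show rhoMax L₀ ρ b = (L₀ ^ n)⁻¹ * (rhoMax L₀ ρ b * L₀ ^ n) by field_simp]
      exact mul_le_mul_of_nonneg_left hint2 (by positivity)
  have hratio := ratio_mono m hm n L₀ hL₀ a₁ a₀ ha₁ ha γ hγ ρ hcont hpos hsmooth hper hpde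
  intro a haIoc
  have ha₀Ioc : a₀ ∈ Set.Ioc a₁ a₀ := ⟨ha, le_refl a₀⟩
  obtain ⟨hmina, hmeana1, hmeana2, hpta⟩ := key a haIoc
  obtain ⟨hmin0, _, _, _⟩ := key a₀ ha₀Ioc
  have hr := hratio a haIoc
  set Ma := rhoMax L₀ ρ a with hMa
  set ma := rhoMin L₀ ρ a with hma
  set M0 := rhoMax L₀ ρ a₀ with hM0
  set m0 := rhoMin L₀ ρ a₀ with hm0
  set μ := rhoMean L₀ ρ a with hμ
  have hMapos : 0 < Ma := lt_of_lt_of_le hmina (le_trans hmeana1 hmeana2)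
  have hM0pos : 0 < M0 := by
    obtain ⟨h1, h2, h3, _⟩ := key a₀ ha₀Ioc
    exact lt_of_lt_of_le h1 (le_trans h2 h3)
  have hμpos : 0 < μ := lt_of_lt_of_le hmina hmeana1
  have hΔa : inhomMod L₀ ρ a = 1 - ma / Ma := by
    rw [inhomMod, ← hMa, ← hma]
    field_simp
  have hΔ0 : inhomMod L₀ ρ a₀ = 1 - m0 / M0 := by
    rw [inhomMod, ← hM0, ← hm0]
    field_simp
  have hΔle : inhomMod L₀ ρ a ≤ inhomMod L₀ ρ a₀ := by
    rw [hΔa, hΔ0]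
    linarith
  have hΔ0lt : inhomMod L₀ ρ a₀ < 1 := by
    rw [hΔ0]
    have : 0 < m0 / M0 := div_pos hmin0 hM0pos
    linarith
  have h1Δa : 0 < 1 - inhomMod L₀ ρ a := by
    rw [hΔa]
    have : 0 < ma / Ma := div_pos hmina hMapos
    linarith
  have h1Δ0 : 0 < 1 - inhomMod L₀ ρ a₀ := by linarith
  refine ⟨hΔle, hΔ0lt, fun x => ⟨by linarith, ?_, ?_, ?_⟩⟩
  · -- -Δ(a) ≤ δ(a,x)
    have hx := hpta x
    rw [densityContrast, ← hμ, inhomMod, ← hMa, ← hma, ← neg_div, neg_sub]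
    rw [div_le_div_iff₀ hMapos hμpos]
    nlinarith [hx.1, hx.2, hmina.le, hμpos.le, hmeana2, mul_le_mul_of_nonneg_left hmeana2 hmina.le,
      mul_le_mul_of_nonneg_right hx.1 hμpos.le]
  · -- δ(a,x) ≤ Δ(a)/(1-Δ(a))
    have hx := hpta x
    have hform : inhomMod L₀ ρ a / (1 - inhomMod L₀ ρ a) = (Ma - ma) / ma := by
      rw [hΔa]
      rw [show (1:ℝ) - (1 - ma / Ma) = ma / Ma by ring]
      rw [div_eq_div_iff (by positivity : (ma / Ma : ℝ) ≠ 0) hmina.ne']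
      field_simp
    rw [hform, densityContrast, ← hμ, div_le_div_iff₀ hμpos hmina]
    nlinarith [hx.2, hmeana1, hmina.le, hμpos.le,
      mul_le_mul_of_nonneg_right hx.2 hmina.le, mul_le_mul_of_nonneg_left hmeana1 hMapos.le]
  · -- monotonicity of s ↦ s/(1-s)
    rw [div_le_div_iff₀ h1Δa h1Δ0]
    nlinarith [hΔle]
end
end

section
/- The implicit travelling-wave ansatz solves the parabolic equation (verification of equation (28) of the paper): Let n ≥ 1, k ∈ ℝⁿ with k ≠ 0, λ, c₁, v₀ ∈ ℝ with c₁ ≠ 0 and v₀ > 0. Let U ⊆ ℝ × ℝⁿ be open and v : U → ℝ be continuously differentiable in s and twice continuously differentiable in x, everywhere positive, such that for every (s,x) ∈ U and every u in the closed interval with endpoints v₀ and v(s,x) one has u > 0 and λu + c₁ ≠ 0, and such that |k|² ∫_{v₀}^{v(s,x)} du/(u²(λu + c₁)) = λ s + k·x for all (s,x) ∈ U. Then v satisfies ∂v/∂s = v⁻² Δv − 2 v⁻³ |∇v|² at every point of U. -/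
open scoped RealInnerProductSpace

noncomputable section

set_option maxHeartbeats 1000000 in
/-- The implicit travelling-wave ansatz
`|k|² ∫_{v₀}^{v(s,x)} du/(u²(λu + c₁)) = λ s + k·x`
solves the parabolic equation `∂v/∂s = v⁻² Δv − 2 v⁻³ |∇v|²`. -/
theorem travelling_wave_ansatz_solves (n : ℕ) (hn : 1 ≤ n)
    (k : EuclideanSpace ℝ (Fin n)) (hk : k ≠ 0)
    (l c₁ v₀ : ℝ) (hc₁ : c₁ ≠ 0) (hv₀ : 0 < v₀)
    (U : Set (ℝ × EuclideanSpace ℝ (Fin n))) (hU : IsOpen U)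
    (v : ℝ → EuclideanSpace ℝ (Fin n) → ℝ)
    (hreg_s : ∀ s x, (s, x) ∈ U → ContDiffAt ℝ 1 (fun t => v t x) s)
    (hreg_x : ∀ s x, (s, x) ∈ U → ContDiffAt ℝ 2 (v s) x)
    (hpos : ∀ s x, (s, x) ∈ U → 0 < v s x)
    (hdom : ∀ s x, (s, x) ∈ U → ∀ u ∈ Set.uIcc v₀ (v s x), 0 < u ∧ l * u + c₁ ≠ 0)
    (hansatz : ∀ s x, (s, x) ∈ U →
      ‖k‖ ^ 2 * ∫ u in v₀..(v s x), 1 / (u ^ 2 * (l * u + c₁)) = l * s + ⟪k, x⟫) :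
    ∀ s x, (s, x) ∈ U →
      deriv (fun t => v t x) s =
        lap (v s) x / (v s x) ^ 2 - 2 * ‖gradient (v s) x‖ ^ 2 / (v s x) ^ 3 := by
  have hk2 : ‖k‖ ≠ 0 := norm_ne_zero_iff.mpr hk
  set f : ℝ → ℝ := fun u => 1 / (u ^ 2 * (l * u + c₁)) with hf
  set F : ℝ → ℝ := fun w => ‖k‖ ^ 2 * ∫ u in v₀..w, f u with hF
  set g : ℝ → ℝ := fun w => w ^ 2 * (l * w + c₁) / ‖k‖ ^ 2 with hg
  set S : Set ℝ := {u | u ^ 2 * (l * u + c₁) ≠ 0} with hS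
  have hSopen : IsOpen S := by
    have : Continuous fun u : ℝ => u ^ 2 * (l * u + c₁) := by continuity
    exact isOpen_compl_singleton.preimage this
  have hfS : ContinuousOn f S := by
    apply ContinuousOn.div continuousOn_const
    · exact (Continuous.continuousOn (by continuity))
    · exact fun u hu => hu
  -- derivative of F
  have hFd : ∀ c : ℝ, (∀ u ∈ Set.uIcc v₀ c, 0 < u ∧ l * u + c₁ ≠ 0) →
      HasDerivAt F (‖k‖ ^ 2 * f c) c := by
    intro c hc
    have hsub : Set.uIcc v₀ c ⊆ S := by
      intro u hu
      exact mul_ne_zero (pow_ne_zero 2 (hc u hu).1.ne') (hc u hu).2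
    have hcS : c ∈ S := hsub (Set.right_mem_uIcc)
    have hint : IntervalIntegrable f MeasureTheory.volume v₀ c :=
      (hfS.mono hsub).intervalIntegrable
    have hmeas : StronglyMeasurableAtFilter f (nhds c) MeasureTheory.volume :=
      hfS.stronglyMeasurableAtFilter hSopen c hcS
    have hcont : ContinuousAt f c := hfS.continuousAt (hSopen.mem_nhds hcS)
    exact (intervalIntegral.integral_hasDerivAt_right hint hmeas hcont).const_mul (‖k‖ ^ 2)
  -- spatial derivative formula, at every point of U
  have keyB : ∀ s x, (s, x) ∈ U →
      HasFDerivAt (v s) (g (v s x) • (innerSL ℝ k :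
        EuclideanSpace ℝ (Fin n) →L[ℝ] ℝ)) x := by
    intro s x hsx
    have hc := hdom s x hsx (v s x) Set.right_mem_uIcc
    have hden : (v s x) ^ 2 * (l * v s x + c₁) ≠ 0 :=
      mul_ne_zero (pow_ne_zero 2 hc.1.ne') hc.2
    have hfc : f (v s x) ≠ 0 := one_div_ne_zero hden
    have hFc : HasDerivAt F (‖k‖ ^ 2 * f (v s x)) (v s x) := hFd _ (hdom s x hsx)
    have hvdiff : DifferentiableAt ℝ (v s) x :=
      (hreg_x s x hsx).differentiableAt two_ne_zero
    have hcomp : HasFDerivAt (fun y => F (v s y))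
        ((‖k‖ ^ 2 * f (v s x)) • fderiv ℝ (v s) x) x :=
      hFc.comp_hasFDerivAt x hvdiff.hasFDerivAt
    have hnbhd : (fun y => F (v s y)) =ᶠ[nhds x]
        (fun y => l * s + ⟪k, y⟫) := by
      have hmem : {y | (s, y) ∈ U} ∈ nhds x :=
        (hU.preimage (Continuous.prodMk_right s)).mem_nhds hsx
      filter_upwards [hmem] with y hy
      exact hansatz s y hy
    have hlin : HasFDerivAt (fun y : EuclideanSpace ℝ (Fin n) => l * s + ⟪k, y⟫)
        (innerSL ℝ k) x := ((innerSL ℝ k).hasFDerivAt).const_add (l * s)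
    have heq : (‖k‖ ^ 2 * f (v s x)) • fderiv ℝ (v s) x = innerSL ℝ k :=
      (hcomp.congr_of_eventuallyEq hnbhd.symm).unique hlin
    have ha : (‖k‖ ^ 2 * f (v s x)) ≠ 0 := mul_ne_zero (pow_ne_zero 2 hk2) hfc
    have hD : fderiv ℝ (v s) x = (‖k‖ ^ 2 * f (v s x))⁻¹ • (innerSL ℝ k :
        EuclideanSpace ℝ (Fin n) →L[ℝ] ℝ) := by
      rw [← heq, smul_smul, inv_mul_cancel₀ ha, one_smul]
    have hginv : (‖k‖ ^ 2 * f (v s x))⁻¹ = g (v s x) := by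
      rw [hf, hg]
      field_simp
    have := hvdiff.hasFDerivAt
    rw [hD, hginv] at this
    exact this
  intro s x hsx
  set c := v s x with hcdef
  have hc := hdom s x hsx c Set.right_mem_uIcc
  have hden : c ^ 2 * (l * c + c₁) ≠ 0 := mul_ne_zero (pow_ne_zero 2 hc.1.ne') hc.2
  have hfc : f c ≠ 0 := one_div_ne_zero hden
  have ha : (‖k‖ ^ 2 * f c) ≠ 0 := mul_ne_zero (pow_ne_zero 2 hk2) hfc
  have hvdiff : DifferentiableAt ℝ (v s) x := (hreg_x s x hsx).differentiableAt two_ne_zero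
  -- time derivative
  have htime : deriv (fun t => v t x) s = l * g c := by
    have hvs : DifferentiableAt ℝ (fun t => v t x) s :=
      (hreg_s s x hsx).differentiableAt one_ne_zero
    have hψ : HasDerivAt (fun t => F (v t x))
        ((‖k‖ ^ 2 * f c) * deriv (fun t => v t x) s) s :=
      (hFd c (hdom s x hsx)).comp (h₂ := F) (h := fun t => v t x) s hvs.hasDerivAt
    have hnbhd : (fun t => F (v t x)) =ᶠ[nhds s] (fun t => l * t + ⟪k, x⟫) := by
      have hmem : {t : ℝ | (t, x) ∈ U} ∈ nhds s := by
        exact (hU.preimage (continuous_id.prodMk continuous_const)).mem_nhds hsx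
      filter_upwards [hmem] with t ht
      exact hansatz t x ht
    have hlin : HasDerivAt (fun t : ℝ => l * t + ⟪k, x⟫) l s := by
      simpa using ((hasDerivAt_id s).const_mul l).add_const (⟪k, x⟫ : ℝ)
    have heq : (‖k‖ ^ 2 * f c) * deriv (fun t => v t x) s = l :=
      (hψ.congr_of_eventuallyEq hnbhd.symm).unique hlin
    have : deriv (fun t => v t x) s = l * (‖k‖ ^ 2 * f c)⁻¹ := by
      field_simp at heq ⊢
      linarith [heq]
    rw [this]
    congr 1
    rw [hf, hg]; field_simp
  -- derivative of g at c
  set gd : ℝ := (3 * l * c ^ 2 + 2 * c₁ * c) / ‖k‖ ^ 2 with hgd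
  have hgdiff : HasDerivAt g gd c := by
    have h1 : HasDerivAt (fun w : ℝ => w ^ 2 * (l * w + c₁))
        ((2 * c ^ 1) * (l * c + c₁) + c ^ 2 * l) c := by
      have hp : HasDerivAt (fun w : ℝ => w ^ 2) (2 * c ^ 1) c := by
        simpa using hasDerivAt_pow 2 c
      have hq : HasDerivAt (fun w : ℝ => l * w + c₁) l c := by
        simpa using ((hasDerivAt_id c).const_mul l).add_const c₁
      exact hp.mul hq
    have := h1.div_const (‖k‖ ^ 2)
    refine this.congr_deriv ?_
    rw [hgd]; ring
  -- gradient
  have hgrad : gradient (v s) x = g c • k := by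
    have : HasGradientAt (v s) (g c • k) x := by
      rw [hasGradientAt_iff_hasFDerivAt]
      have htd : (InnerProductSpace.toDual ℝ (EuclideanSpace ℝ (Fin n))) (g c • k) =
          g c • (innerSL ℝ k : EuclideanSpace ℝ (Fin n) →L[ℝ] ℝ) := by
        ext y
        simp [InnerProductSpace.toDual_apply_apply, real_inner_smul_left]
      rw [htd]
      exact keyB s x hsx
    exact this.gradient
  have hnormgrad : ‖gradient (v s) x‖ ^ 2 = g c ^ 2 * ‖k‖ ^ 2 := by
    rw [hgrad, norm_smul]
    simp [mul_pow, Real.norm_eq_abs, sq_abs]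
  -- laplacian
  have hsum : ∑ i : Fin n, (k i) ^ 2 = ‖k‖ ^ 2 := by
    have h := EuclideanSpace.norm_eq k
    rw [h, Real.sq_sqrt (by positivity)]
    simp [Real.norm_eq_abs, sq_abs]
  have hlap : lap (v s) x = gd * g c * ‖k‖ ^ 2 := by
    have hterm : ∀ i : Fin n,
        fderiv ℝ (fun y => fderiv ℝ (v s) y (EuclideanSpace.single i 1)) x
          (EuclideanSpace.single i 1) = gd * g c * (k i) ^ 2 := by
      intro i
      have hEeq : (fun y => fderiv ℝ (v s) y (EuclideanSpace.single i 1)) =ᶠ[nhds x]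
          (fun y => g (v s y) * k i) := by
        have hmem : {y | (s, y) ∈ U} ∈ nhds x :=
          (hU.preimage (Continuous.prodMk_right s)).mem_nhds hsx
        filter_upwards [hmem] with y hy
        rw [(keyB s y hy).fderiv]
        simp [EuclideanSpace.inner_single_right, mul_comm]
      have hrhs : HasFDerivAt (fun y => g (v s y) * k i)
          ((k i) • (gd • fderiv ℝ (v s) x)) x :=
        (hgdiff.comp_hasFDerivAt x hvdiff.hasFDerivAt).mul_const (k i)
      rw [hEeq.fderiv_eq, hrhs.fderiv]
      have hDe : fderiv ℝ (v s) x (EuclideanSpace.single i 1) = g c * k i := by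
        rw [(keyB s x hsx).fderiv]
        simp [EuclideanSpace.inner_single_right, mul_comm, hcdef]
      simp only [ContinuousLinearMap.smul_apply, smul_eq_mul, hDe]
      ring
    rw [lap]
    simp only [hterm]
    rw [← Finset.mul_sum, hsum]
  rw [htime, hlap, hnormgrad, hg, hgd]
  have hcne : c ≠ 0 := hc.1.ne'
  field_simp
  ring
end
end
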